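/- arXiv:1107.0393 — 7 statements merged into one kernel-verified Lean document; each statement's English description precedes it below -/
import Mathlib

section
/- Let Ω ⊆ ℂ be open and F ⊆ Ω relatively closed. Then F is Arakelian in Ω if and only if for every open set U with F ⊆ U ⊆ Ω there exists an open set V ⊆ Ω such that F ⊆ V ⊆ U and (Ω ∪ {α}) \ V is connected. -/
open Topology Filter Set

noncomputable section

/-- The complement of (the image of) `V ⊆ ℂ` in the Riemann sphere `ℂ ∪ {∞}`. -/
def sphereCompl (V : Set ℂ) : Set (OnePoint ℂ) := (OnePoint.some '' V)ᶜ

/-- The complement `(Ω ∪ {α}) \ F` in the one point compactification of `Ω`. -/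
def ocCompl (Ω F : Set ℂ) : Set (OnePoint Ω) :=
  (OnePoint.some '' {x : Ω | (x : ℂ) ∈ F})ᶜ

/-- `S` is locally connected at the point `a`. -/
def LocConnAt {X : Type*} [TopologicalSpace X] (S : Set X) (a : X) : Prop :=
  ∀ U ∈ 𝓝 a, ∃ W ∈ 𝓝 a, W ⊆ U ∧ IsConnected (W ∩ S)

/-- `F` is a relatively closed subset of `Ω`. -/
def RelClosed (Ω F : Set ℂ) : Prop :=
  F ⊆ Ω ∧ IsClosed ((fun x : Ω => (x : ℂ)) ⁻¹' F)

/-- `B` is a hole of `E` in `Ω`: a connected component of `Ω \ E` contained in a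
compact subset of `Ω`. -/
def IsHole (Ω E B : Set ℂ) : Prop :=
  (∃ x ∈ Ω \ E, B = connectedComponentIn (Ω \ E) x) ∧
  ∃ K : Set ℂ, IsCompact K ∧ K ⊆ Ω ∧ B ⊆ K

/-- The union of all holes of `E` in `Ω`. -/
def holesUnion (Ω E : Set ℂ) : Set ℂ := ⋃₀ {B | IsHole Ω E B}

/-- `F` is an Arakelian set in `Ω`: relatively closed, with `(Ω ∪ {α}) \ F`
connected and locally connected at `α`. -/
def ArakelianIn (Ω F : Set ℂ) : Prop :=
  RelClosed Ω F ∧ IsConnected (ocCompl Ω F) ∧ LocConnAt (ocCompl Ω F) OnePoint.infty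

namespace ArakAux

/-- image of a complex set in the one-point compactification of `Ω` -/
def pt (Ω A : Set ℂ) : Set (OnePoint ↥Ω) := OnePoint.some '' {x : ↥Ω | (x:ℂ) ∈ A}

/-- `A` escapes every compact subset of `Ω`. -/
def Esc (Ω A : Set ℂ) : Prop := ∀ K : Set ℂ, IsCompact K → K ⊆ Ω → ¬ A ⊆ K

variable {Ω F A B E K V U : Set ℂ}

lemma ocCompl_eq : ocCompl Ω A = (pt Ω A)ᶜ := rfl

lemma mem_pt {z : ℂ} (hz : z ∈ Ω) :
    (OnePoint.some ⟨z, hz⟩ ∈ pt Ω A) ↔ z ∈ A := by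
  constructor
  · rintro ⟨x, hx, hxe⟩
    have : x = ⟨z, hz⟩ := OnePoint.coe_injective hxe
    subst this; exact hx
  · intro h; exact ⟨⟨z, hz⟩, h, rfl⟩

lemma infty_not_mem_pt : OnePoint.infty ∉ pt Ω A := OnePoint.infty_notMem_image_coe

lemma infty_mem_ocCompl : OnePoint.infty ∈ ocCompl Ω A := infty_not_mem_pt

lemma mem_ocCompl_some {z : ℂ} (hz : z ∈ Ω) :
    (OnePoint.some ⟨z, hz⟩ ∈ ocCompl Ω A) ↔ z ∉ A := by
  rw [ocCompl_eq, mem_compl_iff, mem_pt hz]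

lemma pt_mono (h : A ⊆ B) : pt Ω A ⊆ pt Ω B := by
  rintro p ⟨x, hx, rfl⟩; exact ⟨x, h hx, rfl⟩

lemma pt_compl' : (pt Ω A)ᶜ = pt Ω (Ω \ A) ∪ {OnePoint.infty} := by
  have h : (pt Ω A)ᶜ = OnePoint.some '' {x : ↥Ω | (x:ℂ) ∈ A}ᶜ ∪ {OnePoint.infty} :=
    OnePoint.compl_image_coe _
  rw [h]
  congr 1
  apply congrArg
  ext x
  simp only [mem_compl_iff, mem_setOf_eq, mem_diff]
  exact ⟨fun h => ⟨x.2, h⟩, fun h => h.2⟩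

lemma isOpen_pt (hA : IsOpen A) : IsOpen (pt Ω A) := by
  rw [pt, OnePoint.isOpen_image_coe]
  exact hA.preimage continuous_subtype_val

lemma isOpen_pt_of_subtype (h : IsOpen {x : ↥Ω | (x:ℂ) ∈ A}) : IsOpen (pt Ω A) := by
  rw [pt, OnePoint.isOpen_image_coe]; exact h

lemma isCompact_sub (hA : IsCompact A) (hAΩ : A ⊆ Ω) :
    IsCompact {x : ↥Ω | (x:ℂ) ∈ A} := by
  rw [Subtype.isCompact_iff]
  convert hA
  ext z
  constructor
  · rintro ⟨x, hx, rfl⟩; exact hx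
  · intro hz; exact ⟨⟨z, hAΩ hz⟩, hz, rfl⟩

lemma isClosed_pt_of_compact (hA : IsCompact A) (hAΩ : A ⊆ Ω) : IsClosed (pt Ω A) := by
  rw [pt, OnePoint.isClosed_image_coe]
  exact ⟨(isCompact_sub hA hAΩ).isClosed, isCompact_sub hA hAΩ⟩

lemma isPreconnected_pt (hA : IsPreconnected A) (hAΩ : A ⊆ Ω) :
    IsPreconnected (pt Ω A) := by
  apply IsPreconnected.image _ _ OnePoint.continuous_coe.continuousOn
  have h : Subtype.val '' {x : ↥Ω | (x:ℂ) ∈ A} = A := by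
    ext z
    constructor
    · rintro ⟨x, hx, rfl⟩; exact hx
    · intro hz; exact ⟨⟨z, hAΩ hz⟩, hz, rfl⟩
  have hemb : IsEmbedding (Subtype.val : ↥Ω → ℂ) := IsEmbedding.subtypeVal
  rw [← hemb.isPreconnected_image, h]
  exact hA

/-- for a relatively closed `A`, `pt A ∪ {∞}` is closed. -/
lemma isClosed_pt_union_infty (h : IsOpen {x : ↥Ω | (x:ℂ) ∈ Ω \ A}) :
    IsClosed (pt Ω A ∪ {OnePoint.infty}) := by
  rw [← isOpen_compl_iff]
  have he : (pt Ω A ∪ {OnePoint.infty})ᶜ = pt Ω (Ω \ A) := by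
    rw [compl_union, pt_compl']
    ext p
    simp only [mem_inter_iff, mem_union, mem_compl_iff, mem_singleton_iff]
    constructor
    · rintro ⟨hp1 | hp1, hp2⟩
      · exact hp1
      · exact absurd hp1 hp2
    · intro hp
      refine ⟨Or.inl hp, ?_⟩
      rintro rfl
      exact OnePoint.infty_notMem_image_coe hp
  rw [he]
  exact isOpen_pt_of_subtype h

lemma exists_compact_of_mem_nhds {W : Set (OnePoint ↥Ω)}
    (hW : W ∈ 𝓝 (OnePoint.infty : OnePoint ↥Ω)) :
    ∃ K : Set ℂ, IsCompact K ∧ K ⊆ Ω ∧ ∀ z : ↥Ω, (z:ℂ) ∉ K → OnePoint.some z ∈ W := by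
  obtain ⟨s, ⟨hs1, hs2⟩, hsub⟩ := (OnePoint.hasBasis_nhds_infty (X := ↥Ω)).mem_iff.1 hW
  refine ⟨Subtype.val '' s, hs2.image continuous_subtype_val, ?_, ?_⟩
  · rintro z ⟨x, _, rfl⟩; exact x.2
  · intro z hz
    apply hsub
    left
    exact ⟨z, fun hzs => hz ⟨z, hzs, rfl⟩, rfl⟩

lemma compl_pt_mem_nhds (hK : IsCompact K) (hKΩ : K ⊆ Ω) :
    (pt Ω K)ᶜ ∈ 𝓝 (OnePoint.infty : OnePoint ↥Ω) := by
  have h := (isClosed_pt_of_compact hK hKΩ).isOpen_compl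
  exact h.mem_nhds (fun hm => OnePoint.infty_notMem_image_coe hm)

lemma infty_mem_closure_pt (hAΩ : A ⊆ Ω) (h : Esc Ω A) :
    OnePoint.infty ∈ closure (pt Ω A) := by
  rw [mem_closure_iff_nhds]
  intro W hW
  obtain ⟨K, hK, hKΩ, hmem⟩ := exists_compact_of_mem_nhds hW
  obtain ⟨a, ha, haK⟩ := not_subset.1 (h K hK hKΩ)
  exact ⟨OnePoint.some ⟨a, hAΩ ha⟩, hmem _ haK, ⟨⟨a, hAΩ ha⟩, ha, rfl⟩⟩

lemma isPreconnected_pt_union_infty (hA : IsPreconnected A) (hAΩ : A ⊆ Ω)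
    (h : Esc Ω A) : IsPreconnected (pt Ω A ∪ {OnePoint.infty}) := by
  apply IsPreconnected.subset_closure (isPreconnected_pt hA hAΩ) subset_union_left
  rintro p (hp | hp)
  · exact subset_closure hp
  · rw [mem_singleton_iff] at hp; subst hp; exact infty_mem_closure_pt hAΩ h

lemma closure_pt_subset (hC : IsCompact (closure A)) (hCΩ : closure A ⊆ Ω) :
    closure (pt Ω A) ⊆ pt Ω (closure A) :=
  closure_minimal (pt_mono subset_closure) (isClosed_pt_of_compact hC hCΩ)

lemma image_val_sub : Subtype.val '' {x : ↥Ω | (x:ℂ) ∈ A} = Ω ∩ A := by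
  ext z
  constructor
  · rintro ⟨x, hx, rfl⟩; exact ⟨x.2, hx⟩
  · rintro ⟨h1, h2⟩; exact ⟨⟨z, h1⟩, h2, rfl⟩

lemma isOpen_diff_relClosed (hΩ : IsOpen Ω)
    (hFc : IsClosed ((fun x : Ω => (x : ℂ)) ⁻¹' F)) : IsOpen (Ω \ F) := by
  have h1 : IsOpen (((fun x : Ω => (x : ℂ)) ⁻¹' F)ᶜ) := hFc.isOpen_compl
  have h2 := hΩ.isOpenMap_subtype_val _ h1
  have h3 : Subtype.val '' ((fun x : Ω => (x : ℂ)) ⁻¹' F)ᶜ = Ω \ F := by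
    have he : ((fun x : Ω => (x : ℂ)) ⁻¹' F)ᶜ = {x : ↥Ω | (x:ℂ) ∈ Fᶜ} := rfl
    rw [he, image_val_sub]
    rfl
  rwa [h3] at h2

lemma closure_compIn_inter {W : Set ℂ} {x : ℂ} :
    closure (connectedComponentIn W x) ∩ W ⊆ connectedComponentIn W x := by
  rintro y ⟨hy1, hy2⟩
  by_cases hx : x ∈ W
  · have hCW := connectedComponentIn_subset W x
    have hxC : x ∈ connectedComponentIn W x := mem_connectedComponentIn hx
    have hpre : IsPreconnected (insert y (connectedComponentIn W x)) := by
      apply IsPreconnected.subset_closure isPreconnected_connectedComponentIn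
        (subset_insert _ _)
      exact insert_subset hy1 subset_closure
    have hsub : insert y (connectedComponentIn W x) ⊆ W := insert_subset hy2 hCW
    exact hpre.subset_connectedComponentIn (mem_insert_iff.2 (Or.inr hxC)) hsub
      (mem_insert _ _)
  · rw [connectedComponentIn_eq_empty hx, closure_empty] at hy1
    exact absurd hy1 (notMem_empty y)

/-- points of `Ω` in the closure of a component of `Ω \ E` are in the component or in `E`. -/
lemma closure_compIn_subset {x y : ℂ} (hy : y ∈ Ω)
    (hyc : y ∈ closure (connectedComponentIn (Ω \ E) x)) :
    y ∈ connectedComponentIn (Ω \ E) x ∨ y ∈ E := by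
  by_cases hyE : y ∈ E
  · exact Or.inr hyE
  · exact Or.inl (closure_compIn_inter ⟨hyc, ⟨hy, hyE⟩⟩)

lemma hole_or_esc {x : ℂ} (hx : x ∈ Ω \ E) :
    IsHole Ω E (connectedComponentIn (Ω \ E) x) ∨
      Esc Ω (connectedComponentIn (Ω \ E) x) := by
  by_cases h : Esc Ω (connectedComponentIn (Ω \ E) x)
  · exact Or.inr h
  · left
    simp only [Esc, not_forall] at h
    obtain ⟨K, hK, hKΩ, hsub⟩ := h
    exact ⟨⟨x, hx, rfl⟩, K, hK, hKΩ, not_not.1 hsub⟩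

lemma mem_holesUnion {x : ℂ} (hx : x ∈ Ω \ E)
    (h : IsHole Ω E (connectedComponentIn (Ω \ E) x)) : x ∈ holesUnion Ω E :=
  ⟨connectedComponentIn (Ω \ E) x, h, mem_connectedComponentIn hx⟩

/-- An exhaustion of the open set `Ω` by compact subsets. -/
lemma exists_exhaustion (hΩ : IsOpen Ω) :
    ∃ E : ℕ → Set ℂ, (∀ n, IsCompact (E n)) ∧ (∀ n, E n ⊆ Ω) ∧
      (∀ n, E n ⊆ interior (E (n+1))) ∧
      (∀ M : Set ℂ, IsCompact M → M ⊆ Ω → ∃ n, M ⊆ E n) ∧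
      (∀ z ∈ Ω, ∃ n, z ∈ E n) := by
  haveI : LocallyCompactSpace ↥Ω := hΩ.locallyCompactSpace
  haveI : SigmaCompactSpace ↥Ω := by infer_instance
  obtain ⟨C⟩ : Nonempty (CompactExhaustion ↥Ω) := inferInstance
  refine ⟨fun n => Subtype.val '' C n, fun n => (C.isCompact n).image continuous_subtype_val,
    fun n => ?_, fun n => ?_, fun M hM hMΩ => ?_, fun z hz => ?_⟩
  · rintro z ⟨x, _, rfl⟩; exact x.2
  · intro z hz
    obtain ⟨x, hx, rfl⟩ := hz
    have h1 : IsOpen (Subtype.val '' (interior (C (n+1)) : Set ↥Ω)) :=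
      hΩ.isOpenMap_subtype_val _ isOpen_interior
    apply interior_maximal (image_mono interior_subset) h1
    exact ⟨x, C.subset_interior_succ n hx, rfl⟩
  · have hM' : IsCompact {x : ↥Ω | (x:ℂ) ∈ M} := isCompact_sub hM hMΩ
    obtain ⟨n, hn⟩ := C.exists_superset_of_isCompact hM'
    refine ⟨n, fun z hzM => ⟨⟨z, hMΩ hzM⟩, hn hzM, rfl⟩⟩
  · obtain ⟨n, hn⟩ := C.exists_mem ⟨z, hz⟩
    exact ⟨n, ⟨z, hz⟩, hn, rfl⟩

/-- A compact exhaustion absorbing holes. -/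
lemma exists_kappa (hΩ : IsOpen Ω)
    (hB : ∀ K : Set ℂ, IsCompact K → K ⊆ Ω →
      ∃ K' : Set ℂ, IsCompact K' ∧ K' ⊆ Ω ∧ holesUnion Ω (F ∪ K) ⊆ K') :
    ∃ κ : ℕ → Set ℂ, κ 0 = ∅ ∧ (∀ n, IsCompact (κ n)) ∧ (∀ n, κ n ⊆ Ω) ∧
      (∀ n, κ n ⊆ interior (κ (n+1))) ∧
      (∀ n, holesUnion Ω (F ∪ κ n) ⊆ interior (κ (n+1))) ∧
      (∀ M : Set ℂ, IsCompact M → M ⊆ Ω → ∃ n, M ⊆ κ n) := by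
  obtain ⟨E, hEc, hEΩ, hEi, hEsup, _⟩ := exists_exhaustion hΩ
  have aux : ∀ K : Set ℂ, IsCompact K → K ⊆ Ω → ∀ n : ℕ,
      ∃ C : Set ℂ, (IsCompact C ∧ C ⊆ Ω) ∧ K ⊆ interior C ∧
        holesUnion Ω (F ∪ K) ⊆ interior C ∧ E n ⊆ C := by
    intro K hK hKΩ n
    obtain ⟨K', hK', hK'Ω, hKh⟩ := hB K hK hKΩ
    obtain ⟨m, hm⟩ := hEsup (K ∪ K' ∪ E n)
      ((hK.union hK').union (hEc n)) (union_subset (union_subset hKΩ hK'Ω) (hEΩ n))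
    refine ⟨E (m+1), ⟨hEc (m+1), hEΩ (m+1)⟩, ?_, ?_, ?_⟩
    · exact (subset_union_left.trans subset_union_left).trans (hm.trans (hEi m))
    · exact hKh.trans ((subset_union_right.trans subset_union_left).trans
        (hm.trans (hEi m)))
    · exact subset_union_right.trans (hm.trans ((hEi m).trans interior_subset))
  let step : {K : Set ℂ // IsCompact K ∧ K ⊆ Ω} → ℕ → {K : Set ℂ // IsCompact K ∧ K ⊆ Ω} :=
    fun K n => ⟨Classical.choose (aux K.1 K.2.1 K.2.2 n),
      (Classical.choose_spec (aux K.1 K.2.1 K.2.2 n)).1⟩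
  let κa : ℕ → {K : Set ℂ // IsCompact K ∧ K ⊆ Ω} :=
    fun n => Nat.rec ⟨(∅ : Set ℂ), isCompact_empty, empty_subset Ω⟩
      (fun m Km => step Km m) n
  refine ⟨fun n => (κa n).1, rfl, fun n => (κa n).2.1, fun n => (κa n).2.2, ?_, ?_, ?_⟩
  · intro n
    exact (Classical.choose_spec (aux (κa n).1 (κa n).2.1 (κa n).2.2 n)).2.1
  · intro n
    exact (Classical.choose_spec (aux (κa n).1 (κa n).2.1 (κa n).2.2 n)).2.2.1
  · intro M hM hMΩ
    obtain ⟨n, hn⟩ := hEsup M hM hMΩ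
    refine ⟨n+1, hn.trans ?_⟩
    exact (Classical.choose_spec (aux (κa n).1 (κa n).2.1 (κa n).2.2 n)).2.2.2

/-- From connectedness of `ocCompl Ω F`: every component of `Ω \ F` escapes. -/
lemma escape_of_connected (hΩ : IsOpen Ω) (hF : RelClosed Ω F)
    (hconn : IsConnected (ocCompl Ω F)) :
    ∀ x ∈ Ω \ F, Esc Ω (connectedComponentIn (Ω \ F) x) := by
  intro x hx
  by_contra h
  simp only [Esc, not_forall] at h
  obtain ⟨M, hM, hMΩ, hsub⟩ := h
  have hsub : connectedComponentIn (Ω \ F) x ⊆ M := not_not.1 hsub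
  set C := connectedComponentIn (Ω \ F) x with hC
  have hWopen : IsOpen (Ω \ F) := isOpen_diff_relClosed hΩ hF.2
  have hCopen : IsOpen C := hWopen.connectedComponentIn
  have hclC : IsCompact (closure C) := hM.of_isClosed_subset isClosed_closure
    (closure_minimal hsub hM.isClosed)
  have hclΩ : closure C ⊆ Ω := (closure_minimal hsub hM.isClosed).trans hMΩ
  have hclpt : closure (pt Ω C) ⊆ pt Ω (closure C) := closure_pt_subset hclC hclΩ
  have hCΩ : C ⊆ Ω := (connectedComponentIn_subset _ _).trans diff_subset
  -- the two open sets
  have hu : IsOpen (pt Ω C) := isOpen_pt_of_subtype (hCopen.preimage continuous_subtype_val)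
  have hv : IsOpen (closure (pt Ω C))ᶜ := isClosed_closure.isOpen_compl
  have hdisj : pt Ω C ∩ (closure (pt Ω C))ᶜ = ∅ := by
    rw [eq_empty_iff_forall_notMem]
    rintro p ⟨h1, h2⟩
    exact h2 (subset_closure h1)
  have hcov : ocCompl Ω F ⊆ pt Ω C ∪ (closure (pt Ω C))ᶜ := by
    intro p hp
    induction p using OnePoint.rec with
    | infty =>
      right
      intro hmem
      exact infty_not_mem_pt (hclpt hmem)
    | coe y =>
      by_cases hyC : (y:ℂ) ∈ C
      · left; exact ⟨y, hyC, rfl⟩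
      · right
        intro hmem
        obtain ⟨w, hw, hwe⟩ := hclpt hmem
        have : w = y := OnePoint.coe_injective hwe
        subst this
        rcases closure_compIn_subset (E := F) w.2 hw with h1 | h1
        · exact hyC h1
        · rw [ocCompl_eq, mem_compl_iff, ] at hp
          exact hp ⟨w, h1, rfl⟩
  have hne1 : (ocCompl Ω F ∩ pt Ω C).Nonempty := by
    refine ⟨OnePoint.some ⟨x, hx.1⟩, ?_, (mem_pt hx.1).2 (mem_connectedComponentIn hx)⟩
    exact (mem_ocCompl_some hx.1).2 hx.2
  have hne2 : (ocCompl Ω F ∩ (closure (pt Ω C))ᶜ).Nonempty := by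
    refine ⟨OnePoint.infty, infty_mem_ocCompl, ?_⟩
    intro hmem
    exact infty_not_mem_pt (hclpt hmem)
  obtain ⟨p, hp⟩ := hconn.2 _ _ hu hv hcov hne1 hne2
  rw [hdisj, inter_empty] at hp
  exact hp

/-- From local connectedness at `∞`: holes of `F ∪ K` are uniformly bounded. -/
lemma holes_bounded_of_locConn (hΩ : IsOpen Ω) (hF : RelClosed Ω F)
    (hlc : LocConnAt (ocCompl Ω F) OnePoint.infty) :
    ∀ K : Set ℂ, IsCompact K → K ⊆ Ω →
      ∃ K' : Set ℂ, IsCompact K' ∧ K' ⊆ Ω ∧ holesUnion Ω (F ∪ K) ⊆ K' := by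
  intro K hK hKΩ
  obtain ⟨W, hWn, hWsub, hWconn⟩ := hlc (pt Ω K)ᶜ (compl_pt_mem_nhds hK hKΩ)
  obtain ⟨κ, hκc, hκΩ, hκmem⟩ := exists_compact_of_mem_nhds hWn
  refine ⟨κ, hκc, hκΩ, ?_⟩
  rintro z ⟨Bs, hBs, hzB⟩
  obtain ⟨⟨x, hxΩ, rfl⟩, Mb, hMb, hMbΩ, hBM⟩ := hBs
  by_contra hzκ
  -- z is in the connected set W ∩ S, which we disconnect using the hole
  set C := connectedComponentIn (Ω \ (F ∪ K)) x with hCdef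
  have hzΩ : z ∈ Ω := ((connectedComponentIn_subset _ _) hzB).1
  have hznF : z ∉ F := fun h => ((connectedComponentIn_subset _ _) hzB).2 (Or.inl h)
  have hWFK : IsOpen (Ω \ (F ∪ K)) := by
    have h1 : Ω \ (F ∪ K) = (Ω \ F) ∩ Kᶜ := by
      ext w; simp only [mem_diff, mem_inter_iff, mem_union, mem_compl_iff]; tauto
    rw [h1]
    exact (isOpen_diff_relClosed hΩ hF.2).inter hK.isClosed.isOpen_compl
  have hCopen : IsOpen C := hWFK.connectedComponentIn
  have hclC : IsCompact (closure C) := hMb.of_isClosed_subset isClosed_closure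
    (closure_minimal hBM hMb.isClosed)
  have hclΩ : closure C ⊆ Ω := (closure_minimal hBM hMb.isClosed).trans hMbΩ
  have hclpt : closure (pt Ω C) ⊆ pt Ω (closure C) := closure_pt_subset hclC hclΩ
  have hmemMz : OnePoint.some ⟨z, hzΩ⟩ ∈ W ∩ ocCompl Ω F := by
    constructor
    · exact hκmem ⟨z, hzΩ⟩ hzκ
    · exact (mem_ocCompl_some hzΩ).2 hznF
  have hmemMi : OnePoint.infty ∈ W ∩ ocCompl Ω F :=
    ⟨mem_of_mem_nhds hWn, infty_mem_ocCompl⟩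
  have hu : IsOpen (pt Ω C) := isOpen_pt_of_subtype (hCopen.preimage continuous_subtype_val)
  have hv : IsOpen (closure (pt Ω C))ᶜ := isClosed_closure.isOpen_compl
  have hdisj : pt Ω C ∩ (closure (pt Ω C))ᶜ = ∅ := by
    rw [eq_empty_iff_forall_notMem]
    rintro p ⟨h1, h2⟩
    exact h2 (subset_closure h1)
  have hcov : W ∩ ocCompl Ω F ⊆ pt Ω C ∪ (closure (pt Ω C))ᶜ := by
    rintro p ⟨hpW, hpS⟩
    induction p using OnePoint.rec with
    | infty =>
      right
      intro hmem
      exact infty_not_mem_pt (hclpt hmem)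
    | coe y =>
      by_cases hyC : (y:ℂ) ∈ C
      · left; exact ⟨y, hyC, rfl⟩
      · right
        intro hmem
        obtain ⟨w, hw, hwe⟩ := hclpt hmem
        have hwy : w = y := OnePoint.coe_injective hwe
        subst hwy
        rcases closure_compIn_subset (E := F ∪ K) w.2 hw with h1 | h1
        · exact hyC h1
        · rcases h1 with h1 | h1
          · rw [ocCompl_eq, mem_compl_iff] at hpS
            exact hpS ⟨w, h1, rfl⟩
          · exact (hWsub hpW) ⟨w, h1, rfl⟩
  have hne1 : ((W ∩ ocCompl Ω F) ∩ pt Ω C).Nonempty :=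
    ⟨OnePoint.some ⟨z, hzΩ⟩, hmemMz, (mem_pt hzΩ).2 hzB⟩
  have hne2 : ((W ∩ ocCompl Ω F) ∩ (closure (pt Ω C))ᶜ).Nonempty := by
    refine ⟨OnePoint.infty, hmemMi, ?_⟩
    intro hmem
    exact infty_not_mem_pt (hclpt hmem)
  obtain ⟨p, hp⟩ := hWconn.2 _ _ hu hv hcov hne1 hne2
  rw [hdisj, inter_empty] at hp
  exact hp

/-- From uniformly bounded holes: local connectedness of `ocCompl Ω F` at `∞`. -/
lemma locConn_of_holes_bounded (hΩ : IsOpen Ω) (hF : RelClosed Ω F)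
    (hB : ∀ K : Set ℂ, IsCompact K → K ⊆ Ω →
      ∃ K' : Set ℂ, IsCompact K' ∧ K' ⊆ Ω ∧ holesUnion Ω (F ∪ K) ⊆ K') :
    LocConnAt (ocCompl Ω F) OnePoint.infty := by
  intro Nb hNb
  obtain ⟨K, hK, hKΩ, hKmem⟩ := exists_compact_of_mem_nhds hNb
  obtain ⟨K', hK', hK'Ω, hKh⟩ := hB K hK hKΩ
  set Z := {z : ℂ | z ∈ Ω \ (F ∪ K) ∧ Esc Ω (connectedComponentIn (Ω \ (F ∪ K)) z)}
    with hZdef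
  have hZΩ : Z ⊆ Ω := fun z hz => hz.1.1
  have hZF : ∀ z ∈ Z, z ∉ F := fun z hz h => hz.1.2 (Or.inl h)
  have hZK : ∀ z ∈ Z, z ∉ K := fun z hz h => hz.1.2 (Or.inr h)
  refine ⟨pt Ω (Z ∪ (F \ K)) ∪ {OnePoint.infty}, ?_, ?_, ?_⟩
  · -- neighbourhood of ∞
    apply mem_of_superset (compl_pt_mem_nhds (hK.union hK') (union_subset hKΩ hK'Ω))
    intro p hp
    induction p using OnePoint.rec with
    | infty => exact Or.inr rfl
    | coe y =>
      left
      rw [mem_compl_iff, mem_pt y.2] at hp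
      by_cases hyF : (y:ℂ) ∈ F
      · exact (mem_pt y.2).2 (Or.inr ⟨hyF, fun hk => hp (Or.inl hk)⟩)
      · have hy1 : (y:ℂ) ∈ Ω \ (F ∪ K) := by
          refine ⟨y.2, ?_⟩
          rintro (h | h)
          · exact hyF h
          · exact hp (Or.inl h)
        rcases hole_or_esc hy1 with hh | hh
        · exact absurd (hKh (mem_holesUnion hy1 hh)) (fun h => hp (Or.inr h))
        · exact (mem_pt y.2).2 (Or.inl ⟨hy1, hh⟩)
  · -- contained in the given neighbourhood
    intro p hp
    rcases hp with ⟨x, hx, rfl⟩ | hp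
    · apply hKmem
      rcases hx with hx | hx
      · exact hZK _ hx
      · exact hx.2
    · rw [mem_singleton_iff] at hp; subst hp
      exact mem_of_mem_nhds hNb
  · -- connectedness of the trace
    have htr : (pt Ω (Z ∪ (F \ K)) ∪ {OnePoint.infty}) ∩ ocCompl Ω F
        = pt Ω Z ∪ {OnePoint.infty} := by
      ext p
      constructor
      · rintro ⟨hp1 | hp1, hp2⟩
        · obtain ⟨x, hx, rfl⟩ := hp1
          rcases hx with hx | hx
          · exact Or.inl ⟨x, hx, rfl⟩
          · rw [ocCompl_eq, mem_compl_iff] at hp2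
            exact absurd ⟨x, hx.1, rfl⟩ hp2
        · exact Or.inr hp1
      · rintro (hp | hp)
        · obtain ⟨x, hx, rfl⟩ := hp
          refine ⟨Or.inl ⟨x, Or.inl hx, rfl⟩, ?_⟩
          rw [ocCompl_eq, mem_compl_iff, mem_pt x.2]
          exact hZF _ hx
        · rw [mem_singleton_iff] at hp; subst hp
          exact ⟨Or.inr rfl, infty_mem_ocCompl⟩
    rw [htr]
    refine ⟨⟨OnePoint.infty, Or.inr rfl⟩, ?_⟩
    have hmain : pt Ω Z ∪ {OnePoint.infty} =
        ⋃₀ (insert {OnePoint.infty}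
          ((fun z => pt Ω (connectedComponentIn (Ω \ (F ∪ K)) z) ∪ {OnePoint.infty}) ''
            Z)) := by
      ext p
      simp only [sUnion_insert, mem_union, mem_sUnion, mem_image, mem_singleton_iff]
      constructor
      · rintro (⟨x, hx, rfl⟩ | hp)
        · right
          refine ⟨_, ⟨(x:ℂ), hx, rfl⟩, ?_⟩
          exact Or.inl ⟨x, mem_connectedComponentIn hx.1, rfl⟩
        · exact Or.inl hp
      · rintro (hp | ⟨t, ⟨z, hz, rfl⟩, hpt⟩)
        · exact Or.inr hp
        · rcases hpt with ⟨x, hx, rfl⟩ | hpt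
          · left
            refine ⟨x, ?_, rfl⟩
            have hxm : (x:ℂ) ∈ Ω \ (F ∪ K) := connectedComponentIn_subset _ _ hx
            have hcc : connectedComponentIn (Ω \ (F ∪ K)) z
                = connectedComponentIn (Ω \ (F ∪ K)) (x:ℂ) :=
              (connectedComponentIn_eq (hx : (x:ℂ) ∈ _))
            exact ⟨hxm, by rw [← hcc]; exact hz.2⟩
          · exact Or.inr hpt
    rw [hmain]
    apply isPreconnected_sUnion OnePoint.infty
    · rintro s (rfl | ⟨z, hz, rfl⟩)
      · exact rfl
      · exact Or.inr rfl
    · rintro s (rfl | ⟨z, hz, rfl⟩)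
      · exact isPreconnected_singleton
      · apply isPreconnected_pt_union_infty isPreconnected_connectedComponentIn
        · exact (connectedComponentIn_subset _ _).trans diff_subset
        · exact hz.2

/-- From the right-hand side of the main theorem: holes of `F ∪ K` are uniformly bounded. -/
lemma holes_bounded_of_rhs (hΩ : IsOpen Ω) (hF : RelClosed Ω F)
    (hR : ∀ U : Set ℂ, IsOpen U → F ⊆ U → U ⊆ Ω →
      ∃ V : Set ℂ, IsOpen V ∧ V ⊆ Ω ∧ F ⊆ V ∧ V ⊆ U ∧ IsConnected (ocCompl Ω V)) :
    ∀ K : Set ℂ, IsCompact K → K ⊆ Ω →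
      ∃ K' : Set ℂ, IsCompact K' ∧ K' ⊆ Ω ∧ holesUnion Ω (F ∪ K) ⊆ K' := by
  intro K hK hKΩ
  by_contra hcon
  push_neg at hcon
  obtain ⟨E, hEc, hEΩ, hEi, hEsup, _⟩ := exists_exhaustion hΩ
  have hEmono : ∀ n, E n ⊆ E (n+1) := fun n => (hEi n).trans interior_subset
  have hEmono' : ∀ m n, m ≤ n → E m ⊆ E n := by
    intro m n h
    induction h with
    | refl => exact subset_rfl
    | step h ih => exact ih.trans (hEmono _)
  -- a compact set L with K in its interior
  obtain ⟨n₀, hn₀⟩ := hEsup K hK hKΩ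
  set L := E (n₀ + 1) with hLdef
  have hKL : K ⊆ interior L := hn₀.trans (hEi n₀)
  have hLc : IsCompact L := hEc _
  have hLΩ : L ⊆ Ω := hEΩ _
  set shell := L \ interior L with hshelldef
  have hshellc : IsCompact shell := hLc.diff isOpen_interior
  have hshellK : ∀ z ∈ shell, z ∉ K := fun z hz h => hz.2 (hKL h)
  -- recursive choice of escaping holes
  have main : ∀ C : Set ℂ, IsCompact C → C ⊆ Ω →
      ∃ x M : Set ℂ → Set ℂ → Prop, True := fun _ _ _ => ⟨fun _ _ => True, fun _ _ => True, trivial⟩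
  have choice : ∀ C : Set ℂ, IsCompact C → C ⊆ Ω →
      ∃ p : ℂ × Set ℂ, p.1 ∈ Ω \ (F ∪ K) ∧ p.1 ∉ C ∧ IsCompact p.2 ∧ p.2 ⊆ Ω ∧
        connectedComponentIn (Ω \ (F ∪ K)) p.1 ⊆ p.2 := by
    intro C hC hCΩ
    obtain ⟨x, hxh, hxC⟩ := not_subset.1 (hcon C hC hCΩ)
    obtain ⟨B, hB, hxB⟩ := hxh
    obtain ⟨⟨x₀, hx₀, rfl⟩, M, hM, hMΩ, hBM⟩ := hB
    have hxm : x ∈ Ω \ (F ∪ K) := connectedComponentIn_subset _ _ hxB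
    have hcc : connectedComponentIn (Ω \ (F ∪ K)) x₀
        = connectedComponentIn (Ω \ (F ∪ K)) x := connectedComponentIn_eq hxB
    exact ⟨(x, M), hxm, hxC, hM, hMΩ, by rw [← hcc]; exact hBM⟩
  clear main
  let step : {C : Set ℂ // IsCompact C ∧ C ⊆ Ω} → ℕ → {C : Set ℂ // IsCompact C ∧ C ⊆ Ω} :=
    fun C n =>
      ⟨C.1 ∪ (Classical.choose (choice C.1 C.2.1 C.2.2)).2 ∪ E n,
        (C.2.1.union (Classical.choose_spec (choice C.1 C.2.1 C.2.2)).2.2.1).union (hEc n),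
        union_subset (union_subset C.2.2
          (Classical.choose_spec (choice C.1 C.2.1 C.2.2)).2.2.2.1) (hEΩ n)⟩
  let acc : ℕ → {C : Set ℂ // IsCompact C ∧ C ⊆ Ω} :=
    fun n => Nat.rec ⟨L, hLc, hLΩ⟩ (fun m Cm => step Cm m) n
  let xx : ℕ → ℂ := fun j => (Classical.choose (choice (acc j).1 (acc j).2.1 (acc j).2.2)).1
  let MM : ℕ → Set ℂ := fun j => (Classical.choose (choice (acc j).1 (acc j).2.1 (acc j).2.2)).2
  let HH : ℕ → Set ℂ := fun j => connectedComponentIn (Ω \ (F ∪ K)) (xx j)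
  have hspec : ∀ j, xx j ∈ Ω \ (F ∪ K) ∧ xx j ∉ (acc j).1 ∧ IsCompact (MM j) ∧
      MM j ⊆ Ω ∧ HH j ⊆ MM j :=
    fun j => Classical.choose_spec (choice (acc j).1 (acc j).2.1 (acc j).2.2)
  have haccmono : ∀ j, (acc j).1 ⊆ (acc (j+1)).1 := by
    intro j
    exact subset_union_left.trans subset_union_left
  have haccmono' : ∀ i j, i ≤ j → (acc i).1 ⊆ (acc j).1 := by
    intro i j h
    induction h with
    | refl => exact subset_rfl
    | step h ih => exact ih.trans (haccmono _)
  have hL_acc : ∀ j, L ⊆ (acc j).1 := fun j => haccmono' 0 j (Nat.zero_le j)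
  have hM_acc : ∀ i j, i < j → MM i ⊆ (acc j).1 := by
    intro i j h
    refine subset_trans ?_ (haccmono' (i+1) j h)
    exact subset_union_right.trans  subset_union_left |>.trans subset_rfl
  have hE_acc : ∀ i j, i < j → E i ⊆ (acc j).1 := by
    intro i j h
    refine subset_trans ?_ (haccmono' (i+1) j h)
    exact subset_union_right
  -- the discrete escaping set
  set Q := range xx with hQdef
  have hQE : ∀ n j, xx j ∈ E n → j ≤ n := by
    intro n j hj
    by_contra h
    push_neg at h
    exact (hspec j).2.1 (hE_acc n j h hj)
  have hUopen : IsOpen (Ω \ Q) := by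
    rw [isOpen_iff_mem_nhds]
    intro u hu
    obtain ⟨n, hn⟩ := hEsup {u} isCompact_singleton (singleton_subset_iff.2 hu.1)
    have hint : u ∈ interior (E (n+1)) := (hn.trans (hEi n)) rfl
    have hfin : Q ∩ interior (E (n+1)) ⊆ (fun j => xx j) '' {j | j ≤ n + 1} := by
      rintro z ⟨⟨j, rfl⟩, hz2⟩
      exact ⟨j, hQE (n+1) j (interior_subset hz2), rfl⟩
    have hficl : IsClosed ((fun j => xx j) '' {j | j ≤ n + 1}) := by
      have : ((fun j => xx j) '' {j | j ≤ n + 1}) = (fun j => xx j) '' ↑(Finset.range (n+2)) := by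
        congr 1
        ext j
        simp [Nat.lt_succ_iff]
      rw [this]
      exact (Set.Finite.image _ (Finset.finite_toSet _)).isClosed
    have hop : IsOpen (interior (E (n+1)) \ ((fun j => xx j) '' {j | j ≤ n + 1})) :=
      isOpen_interior.sdiff hficl
    apply mem_of_superset (hop.mem_nhds ⟨hint, ?_⟩)
    · rintro z ⟨hz1, hz2⟩
      refine ⟨(hEΩ (n+1)) (interior_subset hz1), fun hzQ => hz2 (hfin ⟨hzQ, hz1⟩)⟩
    · rintro ⟨j, hj, hje⟩
      exact hu.2 ⟨j, hje⟩
  have hFU : F ⊆ Ω \ Q := by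
    intro z hz
    refine ⟨hF.1 hz, ?_⟩
    rintro ⟨j, rfl⟩
    exact (hspec j).1.2 (Or.inl hz)
  obtain ⟨V, hVopen, hVΩ, hFV, hVU, hVconn⟩ := hR (Ω \ Q) hUopen hFU diff_subset
  set D := ocCompl Ω V with hDdef
  have hDclosed : IsClosed D := (isOpen_pt hVopen).isClosed_compl
  have hxD : ∀ j, OnePoint.some ⟨xx j, (hspec j).1.1⟩ ∈ D := by
    intro j
    rw [hDdef, mem_ocCompl_some]
    intro hxV
    exact ((hVU hxV).2) ⟨j, rfl⟩
  -- for every j there is a point of D in (HH j) ∩ shell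
  have hwex : ∀ j, ∃ w ∈ HH j ∩ shell, w ∈ Ω ∧ w ∉ V := by
    intro j
    by_contra hno
    push_neg at hno
    have hWj : IsOpen (HH j) := by
      show IsOpen (connectedComponentIn (Ω \ (F ∪ K)) (xx j))
      have h1 : Ω \ (F ∪ K) = (Ω \ F) ∩ Kᶜ := by
        ext v; simp only [mem_diff, mem_inter_iff, mem_union, mem_compl_iff]; tauto
      rw [h1]
      exact ((isOpen_diff_relClosed hΩ hF.2).inter hK.isClosed.isOpen_compl).connectedComponentIn
    have hclHL : IsCompact (closure (HH j \ L)) :=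
      (hspec j).2.2.1.of_isClosed_subset isClosed_closure
        (closure_minimal (diff_subset.trans (hspec j).2.2.2.2) (hspec j).2.2.1.isClosed)
    have hclHLΩ : closure (HH j \ L) ⊆ Ω :=
      (closure_minimal (diff_subset.trans (hspec j).2.2.2.2) (hspec j).2.2.1.isClosed).trans
        (hspec j).2.2.2.1
    have hclpt : closure (pt Ω (HH j \ L)) ⊆ pt Ω (closure (HH j \ L)) :=
      closure_pt_subset hclHL hclHLΩ
    have hu : IsOpen (pt Ω (HH j \ L)) :=
      isOpen_pt (hWj.sdiff hLc.isClosed)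
    have hv : IsOpen (closure (pt Ω (HH j \ L)))ᶜ := isClosed_closure.isOpen_compl
    have hdisj : pt Ω (HH j \ L) ∩ (closure (pt Ω (HH j \ L)))ᶜ = ∅ := by
      rw [eq_empty_iff_forall_notMem]
      rintro p ⟨h1, h2⟩
      exact h2 (subset_closure h1)
    have hcov : D ⊆ pt Ω (HH j \ L) ∪ (closure (pt Ω (HH j \ L)))ᶜ := by
      intro p hp
      induction p using OnePoint.rec with
      | infty =>
        right
        intro hmem
        exact infty_not_mem_pt (hclpt hmem)
      | coe y =>
        by_cases hyH : (y:ℂ) ∈ HH j \ L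
        · left; exact ⟨y, hyH, rfl⟩
        · right
          intro hmem
          obtain ⟨w, hw, hwe⟩ := hclpt hmem
          have hwy : w = y := OnePoint.coe_injective hwe
          subst hwy
          have hwint : (w:ℂ) ∉ interior L := by
            intro hint
            have := mem_closure_iff.1 hw (interior L) isOpen_interior hint
            obtain ⟨q, hq1, hq2⟩ := this
            exact hq2.2 (interior_subset hq1)
          rcases closure_compIn_subset (E := F ∪ K) w.2 (closure_mono diff_subset hw)
            with h1 | h1
          · -- w ∈ HH j, but w ∉ HH j \ L and w ∉ interior L, so w ∈ shell
            have hwL : (w:ℂ) ∈ L := by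
              by_contra hwL
              exact hyH ⟨h1, hwL⟩
            have hwshell : (w:ℂ) ∈ shell := ⟨hwL, hwint⟩
            have hwnV : (w:ℂ) ∉ V := by
              intro hwV
              rw [hDdef, ocCompl_eq, mem_compl_iff] at hp
              exact hp ⟨w, hwV, rfl⟩
            exact hwnV (hno (w:ℂ) ⟨h1, hwshell⟩ w.2)
          · rcases h1 with h1 | h1
            · rw [hDdef, ocCompl_eq, mem_compl_iff] at hp
              exact hp ⟨w, hFV h1, rfl⟩
            · exact hwint (hKL h1)
    have hne1 : (D ∩ pt Ω (HH j \ L)).Nonempty := by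
      refine ⟨OnePoint.some ⟨xx j, (hspec j).1.1⟩, hxD j, ?_⟩
      refine (mem_pt _).2 ⟨mem_connectedComponentIn (hspec j).1, ?_⟩
      intro hxL
      exact (hspec j).2.1 (hL_acc j hxL)
    have hne2 : (D ∩ (closure (pt Ω (HH j \ L)))ᶜ).Nonempty := by
      refine ⟨OnePoint.infty, infty_mem_ocCompl, ?_⟩
      intro hmem
      exact infty_not_mem_pt (hclpt hmem)
    obtain ⟨p, hp⟩ := hVconn.2 _ _ hu hv hcov hne1 hne2
    rw [hdisj, inter_empty] at hp
    exact hp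
  -- choose such points and pass to a convergent subsequence
  choose w hw hwΩ hwV using hwex
  obtain ⟨w', hw'shell, φ, hφ, hconv⟩ := hshellc.tendsto_subseq (fun j => (hw j).2)
  have hw'Ω : w' ∈ Ω := hLΩ hw'shell.1
  have hw'F : w' ∉ F := by
    intro hw'F
    -- the images converge to some w' in D, but w' ∈ F ⊆ V
    have htend : Tendsto (fun j => (OnePoint.some ⟨w (φ j), hwΩ (φ j)⟩ : OnePoint ↥Ω))
        atTop (𝓝 (OnePoint.some ⟨w', hw'Ω⟩)) := by
      apply (OnePoint.continuous_coe.tendsto _).comp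
      rw [IsEmbedding.subtypeVal.tendsto_nhds_iff]
      exact hconv
    have hmemD : ∀ j, (OnePoint.some ⟨w (φ j), hwΩ (φ j)⟩ : OnePoint ↥Ω) ∈ D := by
      intro j
      rw [hDdef, mem_ocCompl_some]
      exact hwV (φ j)
    have : (OnePoint.some ⟨w', hw'Ω⟩ : OnePoint ↥Ω) ∈ D :=
      hDclosed.mem_of_tendsto htend (Eventually.of_forall hmemD)
    rw [hDdef, mem_ocCompl_some] at this
    exact this (hFV hw'F)
  have hw'K : w' ∉ K := hshellK w' hw'shell
  -- w' lies in one component, which therefore equals two distinct holes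
  have hw'm : w' ∈ Ω \ (F ∪ K) := ⟨hw'Ω, by rintro (h | h); exacts [hw'F h, hw'K h]⟩
  set O := connectedComponentIn (Ω \ (F ∪ K)) w' with hOdef
  have hOopen : IsOpen O := by
    have h1 : Ω \ (F ∪ K) = (Ω \ F) ∩ Kᶜ := by
      ext v; simp only [mem_diff, mem_inter_iff, mem_union, mem_compl_iff]; tauto
    rw [hOdef, h1]
    exact ((isOpen_diff_relClosed hΩ hF.2).inter hK.isClosed.isOpen_compl).connectedComponentIn
  have hOmem : w' ∈ O := mem_connectedComponentIn hw'm
  have hev : ∀ᶠ j in atTop, w (φ j) ∈ O := hconv (hOopen.mem_nhds hOmem)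
  obtain ⟨j₁, hj₁⟩ := hev.exists_forall_of_atTop
  have h1 : w (φ j₁) ∈ O := hj₁ j₁ le_rfl
  have h2 : w (φ (j₁+1)) ∈ O := hj₁ (j₁+1) (Nat.le_succ j₁)
  have hcc1 : HH (φ j₁) = O := by
    have h4 := connectedComponentIn_eq (show w (φ j₁) ∈ O from h1)
    have h3 := connectedComponentIn_eq
      (show w (φ j₁) ∈ connectedComponentIn (Ω \ (F ∪ K)) (xx (φ j₁)) from (hw (φ j₁)).1)
    exact h3.trans h4.symm
  have hcc2 : HH (φ (j₁+1)) = O := by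
    have h4 := connectedComponentIn_eq (show w (φ (j₁+1)) ∈ O from h2)
    have h3 := connectedComponentIn_eq
      (show w (φ (j₁+1)) ∈ connectedComponentIn (Ω \ (F ∪ K)) (xx (φ (j₁+1)))
        from (hw (φ (j₁+1))).1)
    exact h3.trans h4.symm
  have hlt : φ j₁ < φ (j₁ + 1) := hφ (Nat.lt_succ_self j₁)
  have : xx (φ (j₁+1)) ∈ MM (φ j₁) := by
    have hxH : xx (φ (j₁+1)) ∈ HH (φ (j₁+1)) := mem_connectedComponentIn (hspec (φ (j₁+1))).1
    rw [hcc2, ← hcc1] at hxH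
    exact (hspec (φ j₁)).2.2.2.2 hxH
  exact (hspec (φ (j₁+1))).2.1 (hM_acc (φ j₁) (φ (j₁+1)) hlt this)

/-- From the right-hand side of the main theorem: `ocCompl Ω F` is connected. -/
lemma connected_of_rhs (hΩ : IsOpen Ω) (hF : RelClosed Ω F)
    (hR : ∀ U : Set ℂ, IsOpen U → F ⊆ U → U ⊆ Ω →
      ∃ V : Set ℂ, IsOpen V ∧ V ⊆ Ω ∧ F ⊆ V ∧ V ⊆ U ∧ IsConnected (ocCompl Ω V)) :
    IsConnected (ocCompl Ω F) := by
  refine ⟨⟨OnePoint.infty, infty_mem_ocCompl⟩, ?_⟩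
  by_contra hnc
  unfold IsPreconnected at hnc
  push_neg at hnc
  obtain ⟨u, v, hu, hv, hcov, hne1, hne2, hemp⟩ := hnc
  have key : ∀ u v : Set (OnePoint ↥Ω), IsOpen u → IsOpen v →
      ocCompl Ω F ⊆ u ∪ v → (ocCompl Ω F ∩ (u ∩ v)) = ∅ →
      OnePoint.infty ∈ u → (ocCompl Ω F ∩ v).Nonempty → False := by
    intro u v hu hv hcov hemp hiu hne
    obtain ⟨p, hpS, hpv⟩ := hne
    induction p using OnePoint.rec with
    | infty =>
      have h0 : OnePoint.infty ∈ ocCompl Ω F ∩ (u ∩ v) := ⟨hpS, hiu, hpv⟩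
      rw [hemp] at h0
      exact h0
    | coe x =>
      have hxF : (x:ℂ) ∉ F := by
        have h1 := (mem_ocCompl_some (A := F) x.2).1
        exact h1 hpS
      obtain ⟨V, hVo, hVΩ, hFV, hVU, hVconn⟩ :=
        hR (Ω \ {(x:ℂ)}) (hΩ.sdiff isClosed_singleton)
          (fun z hz => ⟨hF.1 hz, fun he => hxF (by rw [mem_singleton_iff] at he; rwa [he] at hz)⟩)
          diff_subset
      have hDS : ocCompl Ω V ⊆ ocCompl Ω F := by
        rw [ocCompl_eq, ocCompl_eq]
        exact compl_subset_compl.2 (pt_mono hFV)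
      have hxD : OnePoint.some x ∈ ocCompl Ω V := by
        have h2 := (mem_ocCompl_some (A := V) x.2).2
        apply h2
        intro hxV
        exact (hVU hxV).2 rfl
      obtain ⟨q, hq⟩ := hVconn.2 u v hu hv (fun p hp => hcov (hDS hp))
        ⟨OnePoint.infty, infty_mem_ocCompl, hiu⟩ ⟨OnePoint.some x, hxD, hpv⟩
      have : q ∈ ocCompl Ω F ∩ (u ∩ v) := ⟨hDS hq.1, hq.2⟩
      rw [hemp] at this
      exact this
  rcases hcov infty_mem_ocCompl with hiu | hiv
  · exact key u v hu hv hcov hemp hiu hne2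
  · refine key v u hv hu ?_ ?_ hiv hne1
    · rwa [union_comm]
    · rwa [inter_comm v u]

lemma esc_mono {A B : Set ℂ} (h : A ⊆ B) (hA : Esc Ω A) : Esc Ω B := by
  intro K hK hKΩ hsub
  exact hA K hK hKΩ (h.trans hsub)

lemma esc_of_outside {κ B' : Set ℂ} {x : ℂ} (hx : x ∈ Ω \ (F ∪ κ))
    (hsub : holesUnion Ω (F ∪ κ) ⊆ B') (hxB : x ∉ B') :
    Esc Ω (connectedComponentIn (Ω \ (F ∪ κ)) x) := by
  rcases hole_or_esc hx with h | h
  · exact absurd (hsub ⟨_, h, mem_connectedComponentIn hx⟩) hxB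
  · exact h

section Ray

variable (hΩ : IsOpen Ω) (hFo : IsOpen (Ω \ F))
  (κ : ℕ → Set ℂ) (hκc : ∀ n, IsCompact (κ n)) (hκΩ : ∀ n, κ n ⊆ Ω)
  (hκi : ∀ n, κ n ⊆ interior (κ (n+1)))
  (hκh : ∀ n, holesUnion Ω (F ∪ κ n) ⊆ interior (κ (n+1)))
  (hκsup : ∀ M : Set ℂ, IsCompact M → M ⊆ Ω → ∃ n, M ⊆ κ n)

include hκi in
lemma kappa_mono : ∀ i j, i ≤ j → κ i ⊆ κ j := by
  intro i j h
  induction h with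
  | refl => exact subset_rfl
  | step h ih => exact ih.trans ((hκi _).trans interior_subset)

include hFo in
lemma isOpen_base (m : ℕ) (hκc : ∀ n, IsCompact (κ n)) : IsOpen (Ω \ (F ∪ κ m)) := by
  have h1 : Ω \ (F ∪ κ m) = (Ω \ F) ∩ (κ m)ᶜ := by
    ext v; simp only [mem_diff, mem_inter_iff, mem_union, mem_compl_iff]; tauto
  rw [h1]
  exact hFo.inter (hκc m).isClosed.isOpen_compl

include hΩ hFo hκc hκΩ hκi hκh hκsup in
/-- an escaping closed connected ray through `x` inside its component. -/
lemma exists_ray {n : ℕ} {x : ℂ} (hx : x ∈ Ω \ (F ∪ κ n))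
    (hesc : Esc Ω (connectedComponentIn (Ω \ (F ∪ κ n)) x)) :
    ∃ Z : Set ℂ, x ∈ Z ∧ Z ⊆ connectedComponentIn (Ω \ (F ∪ κ n)) x ∧
      IsPreconnected Z ∧ (∀ y ∈ Ω, y ∈ closure Z → y ∈ Z) ∧ Esc Ω Z := by
  have hκm : ∀ i j, i ≤ j → κ i ⊆ κ j := kappa_mono κ hκi
  have hopen : ∀ m, IsOpen (Ω \ (F ∪ κ m)) := fun m => isOpen_base hFo κ m hκc
  -- one step of the construction
  have stepex : ∀ j : ℕ, ∀ z : ℂ, z ∈ Ω \ (F ∪ κ (n+j)) →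
      Esc Ω (connectedComponentIn (Ω \ (F ∪ κ (n+j))) z) →
      ∃ z' : ℂ, z' ∈ connectedComponentIn (Ω \ (F ∪ κ (n+j))) z ∧
        (z' ∈ Ω \ (F ∪ κ (n+j+1))) ∧ z' ∉ κ (n+j+2) ∧
        Esc Ω (connectedComponentIn (Ω \ (F ∪ κ (n+j+1))) z') := by
    intro j z hz hescz
    obtain ⟨z', hz'1, hz'2⟩ := not_subset.1 (hescz (κ (n+j+2)) (hκc _) (hκΩ _))
    have hz'm : z' ∈ Ω \ (F ∪ κ (n+j)) := connectedComponentIn_subset _ _ hz'1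
    have hz'k1 : z' ∉ κ (n+j+1) := fun h => hz'2 (hκm _ _ (Nat.le_succ _) h)
    have hz'mem : z' ∈ Ω \ (F ∪ κ (n+j+1)) := by
      refine ⟨hz'm.1, ?_⟩
      rintro (h | h)
      · exact hz'm.2 (Or.inl h)
      · exact hz'k1 h
    refine ⟨z', hz'1, hz'mem, hz'2, ?_⟩
    apply esc_of_outside hz'mem (hκh (n+j+1))
    intro h
    exact hz'2 (interior_subset h)
  -- the recursively chosen points
  let T : ℕ → Type := fun j => {z : ℂ // z ∈ Ω \ (F ∪ κ (n+j)) ∧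
      Esc Ω (connectedComponentIn (Ω \ (F ∪ κ (n+j))) z)}
  let stp : ∀ j, T j → T (j+1) := fun j zj =>
    ⟨Classical.choose (stepex j zj.1 zj.2.1 zj.2.2),
      (Classical.choose_spec (stepex j zj.1 zj.2.1 zj.2.2)).2.1,
      (Classical.choose_spec (stepex j zj.1 zj.2.1 zj.2.2)).2.2.2⟩
  let st : ∀ j, T j := fun j => Nat.rec (⟨x, hx, hesc⟩ : T 0) stp j
  have hst_succ : ∀ j, st (j+1) = stp j (st j) := fun j => rfl
  have hlink : ∀ j, (st (j+1)).1 ∈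
      connectedComponentIn (Ω \ (F ∪ κ (n+j))) (st j).1 := by
    intro j
    rw [hst_succ j]
    exact (Classical.choose_spec (stepex j (st j).1 (st j).2.1 (st j).2.2)).1
  have hout : ∀ j, (st (j+1)).1 ∉ κ (n+j+2) := by
    intro j
    rw [hst_succ j]
    exact (Classical.choose_spec (stepex j (st j).1 (st j).2.1 (st j).2.2)).2.2.1
  -- components are nested
  have hcompsub : ∀ j, connectedComponentIn (Ω \ (F ∪ κ (n+j+1))) ((st (j+1)).1) ⊆
      connectedComponentIn (Ω \ (F ∪ κ (n+j))) ((st j).1) := by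
    intro j
    have h1 : Ω \ (F ∪ κ (n+j+1)) ⊆ Ω \ (F ∪ κ (n+j)) := by
      intro v hv
      refine ⟨hv.1, ?_⟩
      rintro (h | h)
      · exact hv.2 (Or.inl h)
      · exact hv.2 (Or.inr (hκm _ _ (Nat.le_succ _) h))
    refine (connectedComponentIn_mono _ h1).trans ?_
    rw [← connectedComponentIn_eq (hlink j)]
  have hcomp0 : ∀ j, connectedComponentIn (Ω \ (F ∪ κ (n+j))) ((st j).1) ⊆
      connectedComponentIn (Ω \ (F ∪ κ n)) x := by
    intro j
    induction j with
    | zero => exact subset_rfl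
    | succ m ih => exact (hcompsub m).trans ih
  -- paths between consecutive points
  have hjoined : ∀ j, JoinedIn (connectedComponentIn (Ω \ (F ∪ κ (n+j))) ((st j).1))
      ((st j).1) ((st (j+1)).1) := by
    intro j
    have hco : IsConnected (connectedComponentIn (Ω \ (F ∪ κ (n+j))) ((st j).1)) := by
      rw [isConnected_connectedComponentIn_iff]
      exact (st j).2.1
    have hop : IsOpen (connectedComponentIn (Ω \ (F ∪ κ (n+j))) ((st j).1)) :=
      (hopen (n+j)).connectedComponentIn
    have hpc : IsPathConnected (connectedComponentIn (Ω \ (F ∪ κ (n+j))) ((st j).1)) :=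
      (hop.isConnected_iff_isPathConnected).1 hco
    exact hpc.joinedIn _ (mem_connectedComponentIn (st j).2.1) _ (hlink j)
  let γ : ∀ j, Path ((st j).1) ((st (j+1)).1) := fun j => (hjoined j).somePath
  have hγmem : ∀ j, ∀ t : unitInterval, (γ j) t ∈
      connectedComponentIn (Ω \ (F ∪ κ (n+j))) ((st j).1) :=
    fun j => (hjoined j).somePath_mem
  set Z := ⋃ j, range (γ j) with hZdef
  have hain : ∀ j, range (γ j) ⊆ connectedComponentIn (Ω \ (F ∪ κ n)) x := by
    intro j
    rintro p ⟨t, rfl⟩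
    exact hcomp0 j (hγmem j t)
  have hZsub : Z ⊆ connectedComponentIn (Ω \ (F ∪ κ n)) x := by
    rw [hZdef]
    exact iUnion_subset hain
  have hxZ : x ∈ Z := by
    refine mem_iUnion.2 ⟨0, ⟨0, ?_⟩⟩
    have h0 : (st 0).1 = x := rfl
    rw [(γ 0).source, h0]
  have hstZ : ∀ j, (st j).1 ∈ Z := by
    intro j
    refine mem_iUnion.2 ⟨j, ⟨0, (γ j).source⟩⟩
  -- preconnectedness
  have hpre_range : ∀ j, IsPreconnected (range ⇑(γ j)) := by
    intro j
    have h := (isPreconnected_univ (α := unitInterval)).image (γ j)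
      ((γ j).continuous.continuousOn)
    rwa [image_univ] at h
  have hRpre : ∀ j, IsPreconnected (⋃ i ∈ Finset.range (j+1), range (γ i)) := by
    intro j
    induction j with
    | zero =>
      have he : (⋃ i ∈ Finset.range (0+1), range (γ i)) = range (γ 0) := by
        simp
      rw [he]
      exact hpre_range 0
    | succ m ih =>
      have hsplit : (⋃ i ∈ Finset.range (m+2), range (γ i)) =
          (⋃ i ∈ Finset.range (m+1), range (γ i)) ∪ range (γ (m+1)) := by
        ext p
        simp only [mem_iUnion, mem_union, Finset.mem_range]
        constructor
        · rintro ⟨i, hi, hp⟩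
          rcases Nat.lt_succ_iff_lt_or_eq.1 hi with h | rfl
          · exact Or.inl ⟨i, h, hp⟩
          · exact Or.inr hp
        · rintro (⟨i, hi, hp⟩ | hp)
          · exact ⟨i, Nat.lt_succ_of_lt hi, hp⟩
          · exact ⟨m+1, Nat.lt_succ_self _, hp⟩
      rw [hsplit]
      apply IsPreconnected.union ((st (m+1)).1) _ _ ih (hpre_range (m+1))
      · refine mem_iUnion.2 ⟨m, mem_iUnion.2 ⟨Finset.mem_range.2 (Nat.lt_succ_self _), ?_⟩⟩
        exact ⟨1, (γ m).target⟩
      · exact ⟨0, (γ (m+1)).source⟩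
  have hZpre : IsPreconnected Z := by
    have hZeq : Z = ⋃₀ (range (fun j => ⋃ i ∈ Finset.range (j+1), range (γ i))) := by
      ext p
      simp only [hZdef, mem_iUnion, mem_sUnion, mem_range]
      constructor
      · rintro ⟨j, hp⟩
        exact ⟨_, ⟨j, rfl⟩, mem_iUnion.2 ⟨j, mem_iUnion.2 ⟨Finset.mem_range.2 (Nat.lt_succ_self _), hp⟩⟩⟩
      · rintro ⟨s, ⟨j, rfl⟩, hp⟩
        simp only [mem_iUnion, Finset.mem_range] at hp
        obtain ⟨i, _, hp⟩ := hp
        exact ⟨i, hp⟩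
    rw [hZeq]
    apply isPreconnected_sUnion x
    · rintro s ⟨j, rfl⟩
      refine mem_iUnion.2 ⟨0, mem_iUnion.2 ⟨Finset.mem_range.2 (Nat.succ_pos _), ?_⟩⟩
      have h0 : (st 0).1 = x := rfl
      exact ⟨0, by rw [(γ 0).source, h0]⟩
    · rintro s ⟨j, rfl⟩
      exact hRpre j
  -- pieces avoid the corresponding compacts
  have hγκ : ∀ j, range (γ j) ∩ κ (n+j) = ∅ := by
    intro j
    rw [eq_empty_iff_forall_notMem]
    rintro p ⟨⟨t, rfl⟩, hpκ⟩
    have h1 := hγmem j t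
    have h2 := connectedComponentIn_subset (Ω \ (F ∪ κ (n+j))) ((st j).1) h1
    exact h2.2 (Or.inr hpκ)
  -- closedness in Ω
  have hZclosed : ∀ y ∈ Ω, y ∈ closure Z → y ∈ Z := by
    intro y hyΩ hycl
    obtain ⟨m₀, hm₀⟩ := hκsup {y} isCompact_singleton (singleton_subset_iff.2 hyΩ)
    have hyint : y ∈ interior (κ (m₀+1)) := (hκi m₀) (hm₀ rfl)
    set m := m₀ + 1
    have hsub2 : Z ∩ interior (κ m) ⊆ ⋃ i ∈ Finset.range m, range (γ i) := by
      rintro p ⟨hp1, hp2⟩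
      obtain ⟨j, hp⟩ := mem_iUnion.1 hp1
      refine mem_iUnion.2 ⟨j, mem_iUnion.2 ⟨Finset.mem_range.2 ?_, hp⟩⟩
      by_contra hj
      push_neg at hj
      have h1 : κ m ⊆ κ (n + j) := hκm _ _ (le_trans hj (Nat.le_add_left j n))
      have h2 : p ∈ range (γ j) ∩ κ (n+j) := ⟨hp, h1 (interior_subset hp2)⟩
      rw [hγκ j] at h2
      exact h2
    have hCclosed : IsClosed (⋃ i ∈ Finset.range m, range (γ i)) := by
      apply Set.Finite.isClosed_biUnion (Finset.finite_toSet _)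
      intro i _
      exact (isCompact_range (γ i).continuous).isClosed
    have hyc2 : y ∈ closure (Z ∩ interior (κ m)) := by
      rw [mem_closure_iff]
      intro O hO hyO
      have h3 := mem_closure_iff.1 hycl (O ∩ interior (κ m)) (hO.inter isOpen_interior)
        ⟨hyO, hyint⟩
      obtain ⟨p, hp1, hp2⟩ := h3
      exact ⟨p, hp1.1, hp2, hp1.2⟩
    have := (closure_minimal hsub2 hCclosed) hyc2
    obtain ⟨i, hi⟩ := mem_iUnion.1 this
    simp only [mem_iUnion] at hi
    exact mem_iUnion.2 ⟨i, hi.2⟩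
  -- escaping
  have hZesc : Esc Ω Z := by
    intro M hM hMΩ hsub
    obtain ⟨m, hm⟩ := hκsup M hM hMΩ
    have h1 : (st (m+1)).1 ∈ Z := hstZ (m+1)
    have h2 : (st (m+1)).1 ∉ κ (n+m+2) := hout m
    have h3 : κ m ⊆ κ (n+m+2) := hκm _ _ (by omega)
    exact h2 (h3 (hm (hsub h1)))
  exact ⟨Z, hxZ, hZsub, hZpre, hZclosed, hZesc⟩

end Ray


section Piece

variable (hΩ : IsOpen Ω) (hFo : IsOpen (Ω \ F))
  (κ : ℕ → Set ℂ) (hκc : ∀ n, IsCompact (κ n)) (hκΩ : ∀ n, κ n ⊆ Ω)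
  (hκi : ∀ n, κ n ⊆ interior (κ (n+1)))
  (hκh : ∀ n, holesUnion Ω (F ∪ κ n) ⊆ interior (κ (n+1)))
  (hκsup : ∀ M : Set ℂ, IsCompact M → M ⊆ Ω → ∃ n, M ⊆ κ n)

include hΩ hFo hκc hκΩ hκi hκh hκsup in
/-- an escaping closed connected set through `x` containing a given compact subset
of the component of `x`. -/
lemma exists_piece {n : ℕ} {x : ℂ} (hx : x ∈ Ω \ (F ∪ κ n))
    (hesc : Esc Ω (connectedComponentIn (Ω \ (F ∪ κ n)) x))
    {M : Set ℂ} (hM : IsCompact M)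
    (hMsub : M ⊆ connectedComponentIn (Ω \ (F ∪ κ n)) x) :
    ∃ Z : Set ℂ, x ∈ Z ∧ M ⊆ Z ∧ Z ⊆ connectedComponentIn (Ω \ (F ∪ κ n)) x ∧
      IsPreconnected Z ∧ (∀ y ∈ Ω, y ∈ closure Z → y ∈ Z) ∧ Esc Ω Z := by
  obtain ⟨Z₀, hxZ₀, hZ₀sub, hZ₀pre, hZ₀cl, hZ₀esc⟩ :=
    exists_ray hΩ hFo κ hκc hκΩ hκi hκh hκsup hx hesc
  set O := connectedComponentIn (Ω \ (F ∪ κ n)) x with hO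
  have hOop : IsOpen O := (isOpen_base hFo κ n hκc).connectedComponentIn
  have hOx : x ∈ O := mem_connectedComponentIn hx
  have hOpc : IsPathConnected O := by
    apply (hOop.isConnected_iff_isPathConnected).1
    rw [hO, isConnected_connectedComponentIn_iff]
    exact hx
  -- radii for the covering
  have hrad : ∀ z : ℂ, z ∈ M → ∃ r : ℝ, 0 < r ∧ Metric.closedBall z r ⊆ O := by
    intro z hz
    obtain ⟨ε, hε, hball⟩ := Metric.isOpen_iff.1 hOop z (hMsub hz)
    exact ⟨ε/2, by linarith, fun w hw =>
      hball (lt_of_le_of_lt (Metric.mem_closedBall.1 hw) (by linarith))⟩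
  choose r hr hrO using hrad
  -- finite subcover by open balls
  have hcov : M ⊆ ⋃ z : ↥M, Metric.ball (z:ℂ) (r z z.2) := by
    intro z hz
    exact mem_iUnion.2 ⟨⟨z, hz⟩, Metric.mem_ball_self (hr z hz)⟩
  obtain ⟨t, ht⟩ := hM.elim_finite_subcover (fun z : ↥M => Metric.ball (z:ℂ) (r z z.2))
    (fun z => Metric.isOpen_ball) hcov
  -- pieces: closed balls with connecting paths
  have hjoin : ∀ z : ↥M, JoinedIn O x (z : ℂ) :=
    fun z => hOpc.joinedIn x hOx z (hMsub z.2)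
  set piece : ↥M → Set ℂ := fun z =>
    Metric.closedBall (z:ℂ) (r z z.2) ∪ range ((hjoin z).somePath) with hpiece
  have hpieceO : ∀ z : ↥M, piece z ⊆ O := by
    intro z
    apply union_subset (hrO z z.2)
    rintro p ⟨s, rfl⟩
    exact (hjoin z).somePath_mem s
  have hpiecex : ∀ z : ↥M, x ∈ piece z := by
    intro z
    exact Or.inr ⟨0, ((hjoin z).somePath).source⟩
  have hpiecepre : ∀ z : ↥M, IsPreconnected (piece z) := by
    intro z
    apply IsPreconnected.union (z : ℂ)
    · exact Metric.mem_closedBall_self (le_of_lt (hr z z.2))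
    · exact ⟨1, ((hjoin z).somePath).target⟩
    · exact (convex_closedBall _ _).isPreconnected
    · have h := (isPreconnected_univ (α := unitInterval)).image ((hjoin z).somePath)
        (((hjoin z).somePath).continuous.continuousOn)
      rwa [image_univ] at h
  have hpiececompact : ∀ z : ↥M, IsCompact (piece z) := by
    intro z
    exact (isCompact_closedBall _ _).union (isCompact_range ((hjoin z).somePath).continuous)
  set Z := Z₀ ∪ ⋃ z ∈ t, piece z with hZdef
  refine ⟨Z, Or.inl hxZ₀, ?_, ?_, ?_, ?_, ?_⟩
  · -- M ⊆ Z
    intro z hz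
    obtain ⟨w, hw⟩ := mem_iUnion.1 (ht hz)
    simp only [mem_iUnion] at hw
    obtain ⟨hwt, hwb⟩ := hw
    refine Or.inr (mem_iUnion.2 ⟨w, mem_iUnion.2 ⟨hwt, Or.inl ?_⟩⟩)
    exact Metric.ball_subset_closedBall hwb
  · -- Z ⊆ O
    apply union_subset hZ₀sub
    apply iUnion_subset
    intro z
    apply iUnion_subset
    intro _
    exact hpieceO z
  · -- preconnected
    have hZeq : Z = ⋃₀ (insert Z₀ ((fun z => piece z) '' (↑t : Set ↥M))) := by
      ext p
      simp only [hZdef, mem_union, mem_sUnion, mem_insert_iff, mem_image, mem_iUnion,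
        Finset.mem_coe]
      constructor
      · rintro (hp | hp)
        · exact ⟨Z₀, Or.inl rfl, hp⟩
        · obtain ⟨z, hz, hp⟩ := hp
          exact ⟨piece z, Or.inr ⟨z, hz, rfl⟩, hp⟩
      · rintro ⟨s, (rfl | ⟨z, hz, rfl⟩), hp⟩
        · exact Or.inl hp
        · exact Or.inr ⟨z, hz, hp⟩
    rw [hZeq]
    apply isPreconnected_sUnion x
    · rintro s (rfl | ⟨z, _, rfl⟩)
      · exact hxZ₀
      · exact hpiecex z
    · rintro s (rfl | ⟨z, _, rfl⟩)
      · exact hZ₀pre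
      · exact hpiecepre z
  · -- closed in Ω
    intro y hyΩ hycl
    have hclU : closure Z ⊆ closure Z₀ ∪ closure (⋃ z ∈ t, piece z) := by
      rw [hZdef, closure_union]
    rcases hclU hycl with h | h
    · exact Or.inl (hZ₀cl y hyΩ h)
    · right
      have hcl : IsClosed (⋃ z ∈ t, piece z) := by
        apply Set.Finite.isClosed_biUnion (Finset.finite_toSet _)
        intro z _
        exact (hpiececompact z).isClosed
      rwa [hcl.closure_eq] at h
  · -- escaping
    exact esc_mono subset_union_left hZ₀esc

end Piece

/-- The hard direction: construction of `V`. -/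
lemma exists_good_V (hΩ : IsOpen Ω) (hF : RelClosed Ω F)
    (hA : ∀ x ∈ Ω \ F, Esc Ω (connectedComponentIn (Ω \ F) x))
    (hB : ∀ K : Set ℂ, IsCompact K → K ⊆ Ω →
      ∃ K' : Set ℂ, IsCompact K' ∧ K' ⊆ Ω ∧ holesUnion Ω (F ∪ K) ⊆ K')
    (U : Set ℂ) (hU : IsOpen U) (hFU : F ⊆ U) (hUΩ : U ⊆ Ω) :
    ∃ V : Set ℂ, IsOpen V ∧ V ⊆ Ω ∧ F ⊆ V ∧ V ⊆ U ∧ IsConnected (ocCompl Ω V) := by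
  classical
  have hFo : IsOpen (Ω \ F) := isOpen_diff_relClosed hΩ hF.2
  obtain ⟨κ, hκ0, hκc, hκΩ, hκi, hκh, hκsup⟩ := exists_kappa hΩ hB
  have hκm : ∀ i j, i ≤ j → κ i ⊆ κ j := kappa_mono κ hκi
  have hbase : ∀ m, IsOpen (Ω \ (F ∪ κ m)) := fun m => isOpen_base hFo κ m hκc
  -- level "-1" has no holes thanks to hA
  have hhole0 : holesUnion Ω (F ∪ κ 0) = ∅ := by
    rw [hκ0, union_empty, eq_empty_iff_forall_notMem]
    rintro z ⟨B, hB', hzB⟩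
    obtain ⟨⟨x₀, hx₀, rfl⟩, M, hM, hMΩ, hBM⟩ := hB'
    exact hA x₀ hx₀ M hM hMΩ hBM
  -- points of the n-th annulus avoiding U lie in escaping components at level n-1
  have hesc_level : ∀ n : ℕ, ∀ z ∈ (Ω \ U) ∩ (κ (n+1) \ interior (κ n)),
      z ∈ Ω \ (F ∪ κ (n-1)) ∧
        Esc Ω (connectedComponentIn (Ω \ (F ∪ κ (n-1))) z) := by
    intro n z hz
    obtain ⟨hz1, hz2⟩ := hz
    have hzF : z ∉ F := fun h => hz1.2 (hFU h)
    have hzκ : z ∉ κ (n-1) := by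
      cases n with
      | zero => rw [hκ0]; exact notMem_empty z
      | succ m =>
        intro h
        exact hz2.2 ((hκi m) h)
    have hzmem : z ∈ Ω \ (F ∪ κ (n-1)) := by
      refine ⟨hz1.1, ?_⟩
      rintro (h | h)
      · exact hzF h
      · exact hzκ h
    refine ⟨hzmem, ?_⟩
    apply esc_of_outside hzmem (B' := interior (κ n))
    · cases n with
      | zero => rw [hhole0]; exact empty_subset _
      | succ m => exact hκh m
    · exact hz2.2
  -- construction of the finite family of pieces at each level
  have level : ∀ n : ℕ, ∃ 𝒞 : Set (Set ℂ), 𝒞.Finite ∧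
      (∀ c ∈ 𝒞, c ⊆ Ω \ (F ∪ κ (n-1)) ∧ IsPreconnected c ∧
        (∀ y ∈ Ω, y ∈ closure c → y ∈ c) ∧ Esc Ω c) ∧
      (Ω \ U) ∩ (κ (n+1) \ interior (κ n)) ⊆ ⋃₀ 𝒞 := by
    intro n
    set Sn := (Ω \ U) ∩ (κ (n+1) \ interior (κ n)) with hSn
    have hSc : IsCompact Sn := by
      have h1 : Sn = (Uᶜ ∩ κ (n+1)) \ interior (κ n) := by
        ext z
        constructor
        · rintro ⟨⟨_, h2⟩, h3, h4⟩; exact ⟨⟨h2, h3⟩, h4⟩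
        · rintro ⟨⟨h2, h3⟩, h4⟩; exact ⟨⟨hκΩ _ h3, h2⟩, h3, h4⟩
      rw [h1]
      apply IsCompact.of_isClosed_subset (hκc (n+1))
      · exact (hU.isClosed_compl.inter (hκc (n+1)).isClosed).sdiff isOpen_interior
      · exact (diff_subset).trans inter_subset_right
    have hmem : ∀ z : ↥Sn, (z:ℂ) ∈ Ω \ (F ∪ κ (n-1)) ∧
        Esc Ω (connectedComponentIn (Ω \ (F ∪ κ (n-1))) (z:ℂ)) :=
      fun z => hesc_level n z z.2
    have hcov : Sn ⊆ ⋃ z : ↥Sn, connectedComponentIn (Ω \ (F ∪ κ (n-1))) (z:ℂ) :=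
      fun z hz => mem_iUnion.2 ⟨⟨z, hz⟩, mem_connectedComponentIn (hmem ⟨z, hz⟩).1⟩
    obtain ⟨t, ht⟩ := hSc.elim_finite_subcover
      (fun z : ↥Sn => connectedComponentIn (Ω \ (F ∪ κ (n-1))) (z:ℂ))
      (fun z => (hbase (n-1)).connectedComponentIn) hcov
    -- for each chosen point a piece through its component
    have hpieceex : ∀ z : ↥Sn,
        ∃ Z : Set ℂ, (Sn ∩ connectedComponentIn (Ω \ (F ∪ κ (n-1))) (z:ℂ)) ⊆ Z ∧
          Z ⊆ connectedComponentIn (Ω \ (F ∪ κ (n-1))) (z:ℂ) ∧ IsPreconnected Z ∧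
          (∀ y ∈ Ω, y ∈ closure Z → y ∈ Z) ∧ Esc Ω Z := by
      intro z
      set P := ⋃ w : ↥Sn, ⋃ (_ : connectedComponentIn (Ω \ (F ∪ κ (n-1))) (w:ℂ) ≠
          connectedComponentIn (Ω \ (F ∪ κ (n-1))) (z:ℂ)),
          connectedComponentIn (Ω \ (F ∪ κ (n-1))) (w:ℂ) with hP
      have hPopen : IsOpen P := by
        apply isOpen_iUnion
        intro w
        apply isOpen_iUnion
        intro _
        exact (hbase (n-1)).connectedComponentIn
      have hMeq : Sn ∩ connectedComponentIn (Ω \ (F ∪ κ (n-1))) (z:ℂ) = Sn \ P := by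
        ext y
        constructor
        · rintro ⟨hy1, hy2⟩
          refine ⟨hy1, ?_⟩
          intro hyP
          obtain ⟨w, hw⟩ := mem_iUnion.1 hyP
          obtain ⟨hne, hyw⟩ := mem_iUnion.1 hw
          apply hne
          rw [connectedComponentIn_eq hyw, connectedComponentIn_eq hy2]
        · rintro ⟨hy1, hy2⟩
          refine ⟨hy1, ?_⟩
          by_contra hyz
          apply hy2
          refine mem_iUnion.2 ⟨⟨y, hy1⟩, mem_iUnion.2 ⟨?_, ?_⟩⟩
          · intro heq
            apply hyz
            rw [← heq]
            exact mem_connectedComponentIn (hmem ⟨y, hy1⟩).1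
          · exact mem_connectedComponentIn (hmem ⟨y, hy1⟩).1
      have hMc : IsCompact (Sn ∩ connectedComponentIn (Ω \ (F ∪ κ (n-1))) (z:ℂ)) := by
        rw [hMeq]
        exact hSc.diff hPopen
      obtain ⟨Z, _, hZ2, hZ3, hZ4, hZ5, hZ6⟩ := exists_piece hΩ hFo κ hκc hκΩ hκi hκh hκsup
        (hmem z).1 (hmem z).2 hMc inter_subset_right
      exact ⟨Z, hZ2, hZ3, hZ4, hZ5, hZ6⟩
    choose ZZ hZ2 hZ3 hZ4 hZ5 hZ6 using hpieceex
    refine ⟨ZZ '' ↑t, (t.finite_toSet.image _), ?_, ?_⟩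
    · rintro c ⟨z, _, rfl⟩
      exact ⟨(hZ3 z).trans (connectedComponentIn_subset _ _), hZ4 z, hZ5 z, hZ6 z⟩
    · intro z hz
      obtain ⟨w, hw⟩ := mem_iUnion.1 (ht hz)
      simp only [mem_iUnion] at hw
      obtain ⟨hwt, hwc⟩ := hw
      exact ⟨ZZ w, ⟨w, hwt, rfl⟩, hZ2 w ⟨hz, hwc⟩⟩
  choose 𝒞 h𝒞fin h𝒞props h𝒞cov using level
  set W := ⋃ n, ⋃₀ (𝒞 n) with hW
  have hWlev : ∀ n, ⋃₀ 𝒞 n ⊆ Ω \ (F ∪ κ (n-1)) :=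
    fun n => sUnion_subset fun c hc => (h𝒞props n c hc).1
  have hWΩF : W ⊆ Ω \ F := by
    rw [hW]
    apply iUnion_subset
    intro n
    intro z hz
    have h := hWlev n hz
    exact ⟨h.1, fun hf => h.2 (Or.inl hf)⟩
  have hWΩ : W ⊆ Ω := hWΩF.trans diff_subset
  -- Ω \ U is covered by the pieces
  have hSW : Ω \ U ⊆ W := by
    intro z hz
    obtain ⟨m, hm⟩ := hκsup {z} isCompact_singleton (singleton_subset_iff.2 hz.1)
    have hmm : z ∈ interior (κ (m+1)) := (hκi m) (hm rfl)
    have hex : ∃ j, z ∈ interior (κ (j+1)) := ⟨m, hmm⟩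
    have hn1 : z ∈ interior (κ (Nat.find hex + 1)) := Nat.find_spec hex
    have hn2 : z ∉ interior (κ (Nat.find hex)) := by
      rcases Nat.eq_zero_or_pos (Nat.find hex) with h0 | hpos
      · rw [h0, hκ0]
        simp
      · obtain ⟨k, hk⟩ := Nat.exists_eq_succ_of_ne_zero (Nat.pos_iff_ne_zero.1 hpos)
        rw [hk]
        exact Nat.find_min hex (by omega)
    have hzS : z ∈ (Ω \ U) ∩ (κ (Nat.find hex + 1) \ interior (κ (Nat.find hex))) :=
      ⟨hz, interior_subset hn1, hn2⟩
    exact mem_iUnion.2 ⟨Nat.find hex, h𝒞cov _ hzS⟩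
  -- the closed-in-Ω property of finite unions of pieces
  have hfin_closed : ∀ m : ℕ, ∀ y ∈ Ω,
      y ∈ closure (⋃ n ∈ Finset.range m, ⋃₀ 𝒞 n) → y ∈ ⋃ n ∈ Finset.range m, ⋃₀ 𝒞 n := by
    intro m y hyΩ hycl
    have heq : (⋃ n ∈ Finset.range m, ⋃₀ 𝒞 n) =
        ⋃₀ (⋃ n ∈ Finset.range m, 𝒞 n) := by
      ext p
      simp only [mem_iUnion, mem_sUnion]
      constructor
      · rintro ⟨n, hn, c, hc, hp⟩
        exact ⟨c, ⟨n, hn, hc⟩, hp⟩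
      · rintro ⟨c, ⟨n, hn, hc⟩, hp⟩
        exact ⟨n, hn, c, hc, hp⟩
    have hfin : (⋃ n ∈ Finset.range m, 𝒞 n).Finite := by
      apply Set.Finite.biUnion (Finset.finite_toSet _)
      intro n _
      exact h𝒞fin n
    rw [heq] at hycl ⊢
    rw [hfin.closure_sUnion] at hycl
    simp only [mem_iUnion] at hycl
    obtain ⟨cc, ⟨n, hn, hccn⟩, hs2⟩ := hycl
    refine mem_sUnion.2 ⟨cc, ?_, (h𝒞props n cc hccn).2.2.1 y hyΩ hs2⟩
    simp only [mem_iUnion]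
    exact ⟨n, hn, hccn⟩
  -- W is relatively closed in Ω
  have hWro : IsOpen (Ω \ W) := by
    rw [isOpen_iff_mem_nhds]
    intro z hz
    obtain ⟨m, hm⟩ := hκsup {z} isCompact_singleton (singleton_subset_iff.2 hz.1)
    have hmm : z ∈ interior (κ (m+1)) := (hκi m) (hm rfl)
    set Cm := ⋃ n ∈ Finset.range (m+3), ⋃₀ 𝒞 n with hCm
    have hzCm : z ∉ closure Cm := by
      intro hcl
      apply hz.2
      have h9 := hfin_closed (m+3) z hz.1 hcl
      obtain ⟨n, hn⟩ := mem_iUnion.1 h9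
      simp only [mem_iUnion] at hn
      exact mem_iUnion.2 ⟨n, hn.2⟩
    have hop : IsOpen (interior (κ (m+1)) ∩ (closure Cm)ᶜ) :=
      isOpen_interior.inter isClosed_closure.isOpen_compl
    apply mem_of_superset (hop.mem_nhds ⟨hmm, hzCm⟩)
    rintro y ⟨hy1, hy2⟩
    refine ⟨(hκΩ (m+1)) (interior_subset hy1), ?_⟩
    intro hyW
    obtain ⟨n, hn⟩ := mem_iUnion.1 hyW
    by_cases hnm : n < m + 3
    · apply hy2
      apply subset_closure
      rw [hCm]
      exact mem_iUnion.2 ⟨n, mem_iUnion.2 ⟨Finset.mem_range.2 hnm, hn⟩⟩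
    · push_neg at hnm
      have h1 := (hWlev n hn).2
      apply h1
      right
      apply hκm (m+1) (n-1) (by omega)
      exact interior_subset hy1
  refine ⟨U \ W, ?_, (diff_subset).trans hUΩ, ?_, diff_subset, ?_⟩
  · have hUW : U \ W = U ∩ (Ω \ W) := by
      ext y
      constructor
      · rintro ⟨h1, h2⟩; exact ⟨h1, hUΩ h1, h2⟩
      · rintro ⟨h1, _, h3⟩; exact ⟨h1, h3⟩
    rw [hUW]
    exact hU.inter hWro
  · intro z hz
    exact ⟨hFU hz, fun hw => (hWΩF hw).2 hz⟩
  · -- connectedness of the complement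
    have hWeq : Ω \ (U \ W) = W := by
      ext y
      constructor
      · rintro ⟨h1, h2⟩
        by_cases hyU : y ∈ U
        · by_contra hyW
          exact h2 ⟨hyU, hyW⟩
        · exact hSW ⟨h1, hyU⟩
      · intro hyW
        refine ⟨hWΩ hyW, ?_⟩
        rintro ⟨_, h2⟩
        exact h2 hyW
    rw [ocCompl_eq, pt_compl', hWeq]
    refine ⟨⟨OnePoint.infty, Or.inr rfl⟩, ?_⟩
    have hshape : pt Ω W ∪ {OnePoint.infty} =
        ⋃₀ (insert {OnePoint.infty}
          ((fun c => pt Ω c ∪ {OnePoint.infty}) '' {c : Set ℂ | ∃ n, c ∈ 𝒞 n})) := by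
      ext p
      simp only [mem_union, mem_sUnion, mem_insert_iff, mem_image, mem_setOf_eq,
        mem_singleton_iff]
      constructor
      · rintro (⟨x, hx, rfl⟩ | hp)
        · rw [hW] at hx
          obtain ⟨n, hn⟩ := mem_iUnion.1 (hx : (x:ℂ) ∈ ⋃ n, ⋃₀ 𝒞 n)
          obtain ⟨c, hc, hxc⟩ := hn
          exact ⟨pt Ω c ∪ {OnePoint.infty}, Or.inr ⟨c, ⟨n, hc⟩, rfl⟩,
            Or.inl ⟨x, hxc, rfl⟩⟩
        · exact ⟨{OnePoint.infty}, Or.inl rfl, hp⟩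
      · rintro ⟨s, (rfl | ⟨c, ⟨n, hc⟩, rfl⟩), hp⟩
        · exact Or.inr hp
        · rcases hp with ⟨x, hx, rfl⟩ | hp
          · refine Or.inl ⟨x, ?_, rfl⟩
            rw [hW]
            exact mem_iUnion.2 ⟨n, ⟨c, hc, hx⟩⟩
          · exact Or.inr hp
    rw [hshape]
    apply isPreconnected_sUnion OnePoint.infty
    · rintro s (rfl | ⟨c, hc, rfl⟩)
      · exact rfl
      · exact Or.inr rfl
    · rintro s (rfl | ⟨c, ⟨n, hc⟩, rfl⟩)
      · exact isPreconnected_singleton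
      · have hp := h𝒞props n c hc
        apply isPreconnected_pt_union_infty hp.2.1
        · exact hp.1.trans ((diff_subset))
        · exact hp.2.2.2

end ArakAux

theorem stmt6 (Ω F : Set ℂ) (hΩ : IsOpen Ω) (hF : RelClosed Ω F) :
    ArakelianIn Ω F ↔
      ∀ U : Set ℂ, IsOpen U → F ⊆ U → U ⊆ Ω →
        ∃ V : Set ℂ, IsOpen V ∧ V ⊆ Ω ∧ F ⊆ V ∧ V ⊆ U ∧
          IsConnected (ocCompl Ω V) := by
  constructor
  · intro hAra U hU hFU hUΩ
    exact ArakAux.exists_good_V hΩ hF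
      (ArakAux.escape_of_connected hΩ hF hAra.2.1)
      (ArakAux.holes_bounded_of_locConn hΩ hF hAra.2.2) U hU hFU hUΩ
  · intro hR
    exact ⟨hF, ArakAux.connected_of_rhs hΩ hF hR,
      ArakAux.locConn_of_holes_bounded hΩ hF (ArakAux.holes_bounded_of_rhs hΩ hF hR)⟩
end
end

section
/- Let Ω ⊆ ℂ be a simply connected open set and G ⊆ Ω. Then (Ω ∪ {α}) \ G is connected if and only if (ℂ ∪ {∞}) \ G is connected. -/
open Topology Filter Set

noncomputable section

/-- A continuous closed map with connected fibers pulls back preconnected sets to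
preconnected sets. -/
theorem isPreconnected_preimage_of_closedMap {X Y : Type*} [TopologicalSpace X]
    [TopologicalSpace Y] {f : X → Y} (hc : Continuous f) (hcl : IsClosedMap f)
    (hfib : ∀ y : Y, IsConnected (f ⁻¹' {y})) {s : Set Y} (hs : IsPreconnected s) :
    IsPreconnected (f ⁻¹' s) := by
  rcases s.eq_empty_or_nonempty with rfl | ⟨y₀, hy₀⟩
  · simp [isPreconnected_empty]
  have hsurj : Function.Surjective f := fun y => (hfib y).1
  set g : f ⁻¹' s → s := s.restrictPreimage f with hg
  have hgsurj : Function.Surjective g := s.restrictPreimage_surjective hsurj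
  have hgcont : Continuous g := hc.restrictPreimage
  have hgcl : IsClosedMap g := hcl.restrictPreimage s
  have : PreconnectedSpace s := Subtype.preconnectedSpace hs
  have hgfib : ∀ t : s, IsConnected (g ⁻¹' {t}) := by
    intro t
    have himg : (Subtype.val : f ⁻¹' s → X) '' (g ⁻¹' {t}) = f ⁻¹' {(t : Y)} := by
      ext x
      constructor
      · rintro ⟨⟨x, hx⟩, hxt, rfl⟩
        have := congrArg Subtype.val hxt
        simpa [g, Set.restrictPreimage] using this
      · intro hx
        have hxs : x ∈ f ⁻¹' s := by
          simp only [Set.mem_preimage] at hx ⊢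
          rw [hx]; exact t.2
        refine ⟨⟨x, hxs⟩, ?_, rfl⟩
        simp only [Set.mem_preimage, Set.mem_singleton_iff]
        apply Subtype.ext
        exact hx
    constructor
    · obtain ⟨x, hx⟩ := (hfib (t : Y)).1
      have : x ∈ (Subtype.val : f ⁻¹' s → X) '' (g ⁻¹' {t}) := himg ▸ hx
      obtain ⟨z, hz, -⟩ := this
      exact ⟨z, hz⟩
    · rw [← IsInducing.subtypeVal.isPreconnected_image, himg]
      exact (hfib (t : Y)).2
  have hclT : ∀ T : Set s, IsClosed T ↔ IsClosed (g ⁻¹' T) := by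
    intro T
    constructor
    · exact fun h => h.preimage hgcont
    · intro h
      have : g '' (g ⁻¹' T) = T := Set.image_preimage_eq T hgsurj
      rw [← this]
      exact hgcl _ h
  obtain ⟨t₀⟩ : Nonempty s := ⟨⟨y₀, hy₀⟩⟩
  have key := preimage_connectedComponent_connected hgfib (isCoinducing_iff_isClosed.mpr fun T => (hclT T).symm) t₀
  rw [PreconnectedSpace.connectedComponent_eq_univ, Set.preimage_univ] at key
  have : PreconnectedSpace (f ⁻¹' s) := ⟨by simpa using key.2⟩
  exact isPreconnected_iff_preconnectedSpace.mpr this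

variable {Ω : Set ℂ}

open Classical in
/-- The collapsing map from the Riemann sphere to the one point compactification of `Ω`,
sending everything outside `Ω` (including `∞`) to `∞`. -/
def qmap (Ω : Set ℂ) : OnePoint ℂ → OnePoint Ω :=
  fun x => Option.elim x OnePoint.infty
    (fun z => if h : z ∈ Ω then OnePoint.some (⟨z, h⟩ : Ω) else OnePoint.infty)

@[simp] lemma qmap_infty : qmap Ω OnePoint.infty = OnePoint.infty := rfl

lemma qmap_coe_mem {z : ℂ} (h : z ∈ Ω) :
    qmap Ω (OnePoint.some z) = OnePoint.some (⟨z, h⟩ : Ω) := by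
  simp [qmap, Option.elim, h]

lemma qmap_coe_not_mem {z : ℂ} (h : z ∉ Ω) :
    qmap Ω (OnePoint.some z) = OnePoint.infty := by
  simp [qmap, Option.elim, h]

lemma continuous_qmap (hΩ : IsOpen Ω) : Continuous (qmap Ω) := by
  rw [continuous_def]
  intro U hU
  by_cases hinf : OnePoint.infty ∈ U
  · rw [OnePoint.isOpen_iff_of_mem' hinf] at hU
    obtain ⟨hK, hV⟩ := hU
    have hinfP : OnePoint.infty ∈ qmap Ω ⁻¹' U := hinf
    rw [OnePoint.isOpen_iff_of_mem' hinfP]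
    have hpre : (OnePoint.some ⁻¹' (qmap Ω ⁻¹' U) : Set ℂ) =
        ((Subtype.val : Ω → ℂ) '' ((OnePoint.some ⁻¹' U : Set Ω))ᶜ)ᶜ := by
      ext z
      by_cases hz : z ∈ Ω
      · simp only [Set.mem_preimage, Set.mem_compl_iff, Set.mem_image]
        rw [qmap_coe_mem hz]
        constructor
        · rintro h ⟨w, hw, rfl⟩
          exact hw h
        · intro h
          by_contra hc
          exact h ⟨⟨z, hz⟩, hc, rfl⟩
      · simp only [Set.mem_preimage, Set.mem_compl_iff, Set.mem_image]
        rw [qmap_coe_not_mem hz]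
        refine ⟨fun _ h => ?_, fun _ => hinf⟩
        obtain ⟨w, -, hwz⟩ := h
        exact hz (hwz ▸ w.2)
    constructor
    · rw [hpre, compl_compl]
      exact hK.image continuous_subtype_val
    · rw [hpre]
      have : IsCompact ((Subtype.val : Ω → ℂ) '' ((OnePoint.some ⁻¹' U : Set Ω))ᶜ) :=
        hK.image continuous_subtype_val
      exact this.isClosed.isOpen_compl
  · have hinfP : OnePoint.infty ∉ qmap Ω ⁻¹' U := by simpa using hinf
    rw [OnePoint.isOpen_iff_of_notMem hinf] at hU
    rw [OnePoint.isOpen_iff_of_notMem hinfP]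
    have hpre : (OnePoint.some ⁻¹' (qmap Ω ⁻¹' U) : Set ℂ) =
        (Subtype.val : Ω → ℂ) '' (OnePoint.some ⁻¹' U : Set Ω) := by
      ext z
      by_cases hz : z ∈ Ω
      · simp only [Set.mem_preimage, Set.mem_image]
        rw [qmap_coe_mem hz]
        constructor
        · intro h; exact ⟨⟨z, hz⟩, h, rfl⟩
        · rintro ⟨w, hw, rfl⟩; exact hw
      · simp only [Set.mem_preimage, Set.mem_image]
        rw [qmap_coe_not_mem hz]
        constructor
        · intro h; exact absurd h hinf
        · rintro ⟨w, _, rfl⟩; exact absurd w.2 hz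
    rw [hpre]
    exact hΩ.isOpenMap_subtype_val _ hU

lemma qmap_fiber_infty : qmap Ω ⁻¹' {OnePoint.infty} = sphereCompl Ω := by
  ext x
  cases x using OnePoint.rec with
  | infty =>
    simp only [Set.mem_preimage, Set.mem_singleton_iff, sphereCompl, Set.mem_compl_iff]
    refine ⟨fun _ => ?_, fun _ => rfl⟩
    rintro ⟨z, -, h⟩
    exact OnePoint.coe_ne_infty _ h
  | coe z =>
    simp only [Set.mem_preimage, Set.mem_singleton_iff, sphereCompl, Set.mem_compl_iff]
    by_cases hz : z ∈ Ω
    · rw [qmap_coe_mem hz]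
      constructor
      · intro h; exact (OnePoint.coe_ne_infty _ h).elim
      · intro h; exact absurd ⟨z, hz, rfl⟩ h
    · rw [qmap_coe_not_mem hz]
      refine ⟨fun _ => ?_, fun _ => rfl⟩
      rintro ⟨w, hw, hwz⟩
      have : w = z := Option.some_injective _ hwz
      exact hz (this ▸ hw)

lemma qmap_fiber_coe (w : Ω) : qmap Ω ⁻¹' {OnePoint.some w} = {OnePoint.some (w : ℂ)} := by
  ext x
  cases x using OnePoint.rec with
  | infty =>
    simp only [Set.mem_preimage, Set.mem_singleton_iff, qmap_infty]
    constructor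
    · intro h; exact (OnePoint.infty_ne_coe _ h).elim
    · intro h; exact (OnePoint.infty_ne_coe _ h).elim
  | coe z =>
    simp only [Set.mem_preimage, Set.mem_singleton_iff]
    by_cases hz : z ∈ Ω
    · rw [qmap_coe_mem hz]
      constructor
      · intro h
        have : (⟨z, hz⟩ : Ω) = w := Option.some_injective _ h
        exact congrArg OnePoint.some (congrArg Subtype.val this)
      · intro h
        have hzw : z = (w : ℂ) := Option.some_injective _ h
        subst hzw
        exact congrArg OnePoint.some (Subtype.ext rfl)
    · rw [qmap_coe_not_mem hz]
      constructor
      · intro h; exact (OnePoint.infty_ne_coe _ h).elim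
      · intro h
        have hzw : z = (w : ℂ) := Option.some_injective _ h
        exact absurd (hzw ▸ w.2) hz

lemma qmap_preimage_ocCompl {G : Set ℂ} (hG : G ⊆ Ω) :
    qmap Ω ⁻¹' (ocCompl Ω G) = sphereCompl G := by
  ext x
  cases x using OnePoint.rec with
  | infty =>
    simp only [Set.mem_preimage, qmap_infty, ocCompl, sphereCompl, Set.mem_compl_iff]
    constructor
    · rintro - ⟨z, -, h⟩
      exact OnePoint.coe_ne_infty _ h
    · rintro - ⟨w, -, h⟩
      exact OnePoint.coe_ne_infty _ h
  | coe z =>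
    simp only [Set.mem_preimage, ocCompl, sphereCompl, Set.mem_compl_iff]
    by_cases hz : z ∈ Ω
    · rw [qmap_coe_mem hz]
      constructor
      · rintro h ⟨w, hw, hwz⟩
        have : w = z := Option.some_injective _ hwz
        subst this
        exact h ⟨⟨w, hz⟩, hw, rfl⟩
      · rintro h ⟨w, hw, hwz⟩
        have hw' : (w : Ω) = ⟨z, hz⟩ := Option.some_injective _ hwz
        refine h ⟨z, ?_, rfl⟩
        have : ((w : Ω) : ℂ) ∈ G := hw
        rwa [hw'] at this
    · rw [qmap_coe_not_mem hz]
      constructor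
      · rintro - ⟨w, hw, hwz⟩
        have : w = z := Option.some_injective _ hwz
        exact hz (hG (this ▸ hw))
      · rintro - ⟨w, -, h⟩
        exact OnePoint.coe_ne_infty _ h

lemma qmap_surjective : Function.Surjective (qmap Ω) := by
  intro y
  cases y using OnePoint.rec with
  | infty => exact ⟨OnePoint.infty, rfl⟩
  | coe w => exact ⟨OnePoint.some (w : ℂ), qmap_coe_mem w.2⟩

theorem stmt7 (Ω G : Set ℂ) (hΩ : IsOpen Ω) (hΩc : IsConnected (sphereCompl Ω))
    (hG : G ⊆ Ω) :
    IsConnected (ocCompl Ω G) ↔ IsConnected (sphereCompl G) := by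
  have hcont : Continuous (qmap Ω) := continuous_qmap hΩ
  have hpre : qmap Ω ⁻¹' (ocCompl Ω G) = sphereCompl G := qmap_preimage_ocCompl hG
  have hLC : LocallyCompactSpace Ω := hΩ.locallyCompactSpace
  have hcl : IsClosedMap (qmap Ω) := hcont.isClosedMap
  constructor
  · intro h
    have hfib : ∀ y : OnePoint Ω, IsConnected (qmap Ω ⁻¹' {y}) := by
      intro y
      cases y using OnePoint.rec with
      | infty => rw [qmap_fiber_infty]; exact hΩc
      | coe w => rw [qmap_fiber_coe w]; exact isConnected_singleton
    refine ⟨?_, ?_⟩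
    · refine ⟨OnePoint.infty, ?_⟩
      rintro ⟨z, -, hz⟩
      exact OnePoint.coe_ne_infty _ hz
    · rw [← hpre]
      exact isPreconnected_preimage_of_closedMap hcont hcl hfib h.2
  · intro h
    have himg : qmap Ω '' (sphereCompl G) = ocCompl Ω G := by
      rw [← hpre]
      exact Set.image_preimage_eq _ qmap_surjective
    rw [← himg]
    exact h.image _ hcont.continuousOn
end
end

section
/- If Ω ⊆ ℂ is a simply connected open set and G ⊆ Ω has connected complement (Ω ∪ {α}) \ G in the one point compactification of Ω, then (ℂ ∪ {∞}) \ G is connected. -/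
open Topology Filter Set

noncomputable section

lemma mem_sphereCompl_coe {V : Set ℂ} {z : ℂ} :
    OnePoint.some z ∈ sphereCompl V ↔ z ∉ V := by
  constructor
  · exact fun h hz => h ⟨z, hz, rfl⟩
  · rintro h ⟨w, hw, he⟩
    exact h (OnePoint.coe_injective he ▸ hw)

lemma infty_mem_sphereCompl (V : Set ℂ) : OnePoint.infty ∈ sphereCompl V := by
  rintro ⟨z, _, hz⟩
  exact OnePoint.infty_ne_coe z hz.symm

lemma mem_ocCompl_coe {Ω F : Set ℂ} {x : Ω} :
    OnePoint.some x ∈ ocCompl Ω F ↔ (x : ℂ) ∉ F := by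
  constructor
  · exact fun h hx => h ⟨x, hx, rfl⟩
  · rintro h ⟨w, hw, he⟩
    exact h (OnePoint.coe_injective he ▸ hw)

lemma infty_mem_ocCompl (Ω F : Set ℂ) : OnePoint.infty ∈ ocCompl Ω F := by
  rintro ⟨z, _, hz⟩
  exact OnePoint.infty_ne_coe z hz.symm

lemma aux8 (Ω G : Set ℂ) (hΩ : IsOpen Ω) (hΩc : IsConnected (sphereCompl Ω))
    (hG : G ⊆ Ω) (h : IsConnected (ocCompl Ω G)) (u v : Set (OnePoint ℂ))
    (hu : IsOpen u) (hv : IsOpen v) (hsub : sphereCompl G ⊆ u ∪ v)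
    (hvne : (sphereCompl G ∩ v).Nonempty)
    (hdisj : sphereCompl G ∩ (u ∩ v) = ∅)
    (hinf : OnePoint.infty ∈ u) : False := by
  haveI := hΩ.locallyCompactSpace
  set k : Ω → OnePoint ℂ := fun x => OnePoint.some (x : ℂ) with hk
  have hkc : Continuous k := OnePoint.continuous_coe.comp continuous_subtype_val
  have hΩG : sphereCompl Ω ⊆ sphereCompl G :=
    compl_subset_compl.mpr (image_mono hG)
  -- Step 1: the sphere-complement of Ω avoids v
  have hsΩv : sphereCompl Ω ∩ v = ∅ := by
    by_contra hne
    obtain ⟨p, hp⟩ := hΩc.isPreconnected u v hu hv (hΩG.trans hsub)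
      ⟨_, infty_mem_sphereCompl Ω, hinf⟩ (nonempty_iff_ne_empty.2 hne)
    exact eq_empty_iff_forall_notMem.mp hdisj p ⟨hΩG hp.1, hp.2⟩
  -- Step 2: every point of B := sphereCompl G ∩ v is some x with x ∈ Ω \ G
  have hBsub : ∀ p ∈ sphereCompl G ∩ v, ∃ x : Ω, (x : ℂ) ∉ G ∧ k x = p := by
    rintro p ⟨hps, hpv⟩
    have hpΩ : p ∉ sphereCompl Ω := fun hh =>
      eq_empty_iff_forall_notMem.mp hsΩv p ⟨hh, hpv⟩
    obtain ⟨z, hzΩ, rfl⟩ := not_not.mp hpΩ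
    exact ⟨⟨z, hzΩ⟩, mem_sphereCompl_coe.mp hps, rfl⟩
  -- B is relatively closed in sphereCompl G
  have hBu : sphereCompl G ∩ v ⊆ uᶜ := fun p hp hpu =>
    eq_empty_iff_forall_notMem.mp hdisj p ⟨hp.1, hpu, hp.2⟩
  have hclB : closure (sphereCompl G ∩ v) ∩ sphereCompl G ⊆ sphereCompl G ∩ v := by
    rintro p ⟨hpc, hps⟩
    have hpu : p ∉ u := closure_minimal hBu hu.isClosed_compl hpc
    exact ⟨hps, (hsub hps).resolve_left hpu⟩
  set S' : Set Ω := k ⁻¹' (sphereCompl G ∩ v) with hS'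
  set B' : Set (OnePoint Ω) := OnePoint.some '' S' with hB'
  -- Step 4: ∞ is not in the closure of B'
  have hinfB' : (OnePoint.infty : OnePoint Ω) ∉ closure B' := by
    set T := closure (sphereCompl G ∩ v) with hT
    have hTsub : T ⊆ OnePoint.some '' Ω := by
      intro p hp
      by_contra hpn
      have hpΩ : p ∈ sphereCompl Ω := hpn
      have hpB : p ∈ sphereCompl G ∩ v := hclB ⟨hp, hΩG hpΩ⟩
      exact eq_empty_iff_forall_notMem.mp hsΩv p ⟨hpΩ, hpB.2⟩
    have hTcomp : IsCompact T := isClosed_closure.isCompact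
    set K : Set ℂ := OnePoint.some ⁻¹' T with hKdef
    have himK : OnePoint.some '' K = T :=
      image_preimage_eq_of_subset (hTsub.trans (image_subset_range _ _))
    have hKcomp : IsCompact K := by
      rw [OnePoint.isOpenEmbedding_coe.isEmbedding.isCompact_iff, himK]
      exact hTcomp
    have hKΩ : K ⊆ Ω := by
      intro z hz
      obtain ⟨w, hwΩ, hw⟩ := hTsub hz
      exact OnePoint.coe_injective hw ▸ hwΩ
    set K' : Set Ω := Subtype.val ⁻¹' K with hK'def
    have himK' : Subtype.val '' K' = K :=
      image_preimage_eq_of_subset (by rw [Subtype.range_coe]; exact hKΩ)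
    have hK'comp : IsCompact K' := by
      rw [Topology.IsEmbedding.subtypeVal.isCompact_iff, himK']
      exact hKcomp
    have hB'K : B' ⊆ OnePoint.some '' K' := by
      apply image_mono
      intro x hx
      exact (subset_closure hx : k x ∈ T)
    have hcl : IsClosed (OnePoint.some '' K' : Set (OnePoint Ω)) :=
      (hK'comp.image OnePoint.continuous_coe).isClosed
    intro hmem'
    obtain ⟨x, _, hx⟩ := closure_minimal hB'K hcl hmem'
    exact OnePoint.infty_ne_coe x hx.symm
  -- Build the disconnection of ocCompl Ω G
  set u' : Set (OnePoint Ω) := OnePoint.some '' (k ⁻¹' v) with hu'def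
  have hu' : IsOpen u' := OnePoint.isOpenMap_coe _ (hv.preimage hkc)
  have hv'' : IsOpen (closure B')ᶜ := isClosed_closure.isOpen_compl
  have hcover : ocCompl Ω G ⊆ u' ∪ (closure B')ᶜ := by
    intro q hq
    by_cases hqB : q ∈ closure B'
    · left
      cases q with
      | infty => exact absurd hqB hinfB'
      | coe x =>
        have hxcl : x ∈ closure S' := by
          have := OnePoint.isOpenEmbedding_coe.isEmbedding.closure_eq_preimage_closure_image
            (f := (OnePoint.some : Ω → OnePoint Ω)) S'
          rw [this]
          exact hqB
        have hkT : k x ∈ closure (sphereCompl G ∩ v) :=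
          hkc.closure_preimage_subset _ hxcl
        have hks : k x ∈ sphereCompl G :=
          mem_sphereCompl_coe.mpr (mem_ocCompl_coe.mp hq)
        have hkB : k x ∈ sphereCompl G ∩ v := hclB ⟨hkT, hks⟩
        exact ⟨x, hkB.2, rfl⟩
    · right
      exact hqB
  have hne1 : (ocCompl Ω G ∩ u').Nonempty := by
    obtain ⟨p, hp⟩ := hvne
    obtain ⟨x, hxG, hkx⟩ := hBsub p hp
    exact ⟨OnePoint.some x, mem_ocCompl_coe.mpr hxG, ⟨x, show k x ∈ v from hkx.symm ▸ hp.2, rfl⟩⟩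
  have hne2 : (ocCompl Ω G ∩ (closure B')ᶜ).Nonempty :=
    ⟨OnePoint.infty, infty_mem_ocCompl Ω G, hinfB'⟩
  obtain ⟨q, hq, hqu', hqv''⟩ := h.isPreconnected u' (closure B')ᶜ hu' hv'' hcover hne1 hne2
  obtain ⟨x, hxv, rfl⟩ := hqu'
  have hks : k x ∈ sphereCompl G := mem_sphereCompl_coe.mpr (mem_ocCompl_coe.mp hq)
  exact hqv'' (subset_closure ⟨x, ⟨hks, hxv⟩, rfl⟩)

theorem stmt8 (Ω G : Set ℂ) (hΩ : IsOpen Ω) (hΩc : IsConnected (sphereCompl Ω))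
    (hG : G ⊆ Ω) (h : IsConnected (ocCompl Ω G)) :
    IsConnected (sphereCompl G) := by
  refine ⟨⟨OnePoint.infty, infty_mem_sphereCompl G⟩, ?_⟩
  intro u v hu hv hsub hune hvne
  by_contra hne
  have hdisj : sphereCompl G ∩ (u ∩ v) = ∅ := not_nonempty_iff_eq_empty.mp hne
  rcases hsub (infty_mem_sphereCompl G) with hinf | hinf
  · exact aux8 Ω G hΩ hΩc hG h u v hu hv hsub hvne hdisj hinf
  · have hdisj' : sphereCompl G ∩ (v ∩ u) = ∅ := by rwa [inter_comm v u]
    exact aux8 Ω G hΩ hΩc hG h v u hv hu (by rwa [union_comm]) hune hdisj' hinf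

end
end

section
/- If Ω ⊆ ℂ is open and G ⊆ Ω has connected complement (ℂ ∪ {∞}) \ G in the Riemann sphere, then (Ω ∪ {α}) \ G is connected in the one point compactification of Ω. -/
open Topology Filter Set

noncomputable section

open Classical in
/-- The quotient map from the Riemann sphere to the one-point compactification of `Ω`. -/
def quotMap (Ω : Set ℂ) : OnePoint ℂ → OnePoint Ω :=
  OnePoint.rec OnePoint.infty
    (fun x => if h : x ∈ Ω then OnePoint.some ⟨x, h⟩ else OnePoint.infty)

@[simp] lemma quotMap_infty (Ω : Set ℂ) : quotMap Ω OnePoint.infty = OnePoint.infty := rfl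

lemma quotMap_coe_mem {Ω : Set ℂ} {x : ℂ} (h : x ∈ Ω) :
    quotMap Ω (OnePoint.some x) = OnePoint.some ⟨x, h⟩ := by
  simp [quotMap, OnePoint.rec, h]

lemma quotMap_coe_notMem {Ω : Set ℂ} {x : ℂ} (h : x ∉ Ω) :
    quotMap Ω (OnePoint.some x) = OnePoint.infty := by
  simp [quotMap, OnePoint.rec, h]

lemma quotMap_continuous (Ω : Set ℂ) (hΩ : IsOpen Ω) : Continuous (quotMap Ω) := by
  rw [continuous_def]
  intro s hs
  by_cases hinf : OnePoint.infty ∈ s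
  · -- preimage is the complement of the image in `OnePoint ℂ` of a compact set
    set K : Set ℂ := Subtype.val '' (OnePoint.some ⁻¹' sᶜ : Set Ω) with hK
    have hscc : IsCompact (sᶜ : Set (OnePoint Ω)) := hs.isClosed_compl.isCompact
    have hsub : (sᶜ : Set (OnePoint Ω)) ⊆ Set.range (OnePoint.some : Ω → OnePoint Ω) := by
      intro y hy
      induction y using OnePoint.rec with
      | infty => exact absurd hinf hy
      | coe y => exact ⟨y, rfl⟩
    have hKpre : IsCompact (OnePoint.some ⁻¹' sᶜ : Set Ω) := by
      rw [OnePoint.isOpenEmbedding_coe.isEmbedding.isCompact_iff]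
      rwa [Set.image_preimage_eq_of_subset hsub]
    have hKcomp : IsCompact K := hKpre.image continuous_subtype_val
    have heq : quotMap Ω ⁻¹' s = (OnePoint.some '' K)ᶜ := by
      ext z
      induction z using OnePoint.rec with
      | infty =>
        simp only [Set.mem_preimage, quotMap_infty, hinf, true_iff, Set.mem_compl_iff]
        exact OnePoint.infty_notMem_image_coe
      | coe z =>
        by_cases hz : z ∈ Ω
        · rw [Set.mem_preimage, quotMap_coe_mem hz]
          simp only [Set.mem_compl_iff, Set.mem_image]
          constructor
          · rintro h ⟨x, ⟨a, ha, haz⟩, hxz⟩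
            have hax : (a : ℂ) = z := haz.trans (OnePoint.coe_eq_coe.mp hxz)
            have : a = (⟨z, hz⟩ : Ω) := Subtype.ext hax
            exact ha (this ▸ h)
          · intro h
            by_contra hns
            exact h ⟨z, ⟨⟨z, hz⟩, hns, rfl⟩, rfl⟩
        · rw [Set.mem_preimage, quotMap_coe_notMem hz]
          simp only [Set.mem_compl_iff, Set.mem_image, hinf, true_iff]
          rintro ⟨x, ⟨a, _, haz⟩, hxz⟩
          exact hz ((haz.trans (OnePoint.coe_eq_coe.mp hxz)) ▸ a.2)
    rw [heq]
    exact OnePoint.isOpen_compl_image_coe.2 ⟨hKcomp.isClosed, hKcomp⟩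
  · -- s ⊆ image of coe; preimage is an open set of points of Ω
    have hsopen : IsOpen (OnePoint.some ⁻¹' s : Set Ω) :=
      (OnePoint.isOpen_iff_of_notMem hinf).mp hs
    have heq : quotMap Ω ⁻¹' s =
        OnePoint.some '' (Subtype.val '' (OnePoint.some ⁻¹' s : Set Ω)) := by
      ext z
      induction z using OnePoint.rec with
      | infty =>
        simp only [Set.mem_preimage, quotMap_infty, hinf, false_iff]
        exact OnePoint.infty_notMem_image_coe
      | coe z =>
        by_cases hz : z ∈ Ω
        · rw [Set.mem_preimage, quotMap_coe_mem hz]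
          simp only [Set.mem_image]
          constructor
          · intro h
            exact ⟨z, ⟨⟨z, hz⟩, h, rfl⟩, rfl⟩
          · rintro ⟨x, ⟨a, ha, haz⟩, hxz⟩
            have hax : (a : ℂ) = z := haz.trans (OnePoint.coe_eq_coe.mp hxz)
            have : a = (⟨z, hz⟩ : Ω) := Subtype.ext hax
            exact this ▸ ha
        · rw [Set.mem_preimage, quotMap_coe_notMem hz]
          simp only [Set.mem_image, hinf, false_iff]
          rintro ⟨x, ⟨a, _, haz⟩, hxz⟩
          exact hz ((haz.trans (OnePoint.coe_eq_coe.mp hxz)) ▸ a.2)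
    rw [heq]
    exact OnePoint.isOpen_image_coe.2 (hΩ.isOpenMap_subtype_val _ hsopen)

theorem stmt9 (Ω G : Set ℂ) (hΩ : IsOpen Ω) (hG : G ⊆ Ω)
    (h : IsConnected (sphereCompl G)) :
    IsConnected (ocCompl Ω G) := by
  have himg : quotMap Ω '' sphereCompl G = ocCompl Ω G := by
    ext y
    constructor
    · rintro ⟨z, hz, rfl⟩
      induction z using OnePoint.rec with
      | infty =>
        rw [quotMap_infty]
        rintro ⟨a, _, ha⟩
        exact OnePoint.coe_ne_infty a ha
      | coe z =>
        by_cases hzo : z ∈ Ω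
        · rw [quotMap_coe_mem hzo]
          rintro ⟨a, haG, ha⟩
          have hz2 : (a : ℂ) = z := congrArg Subtype.val (OnePoint.coe_eq_coe.mp ha)
          exact hz ⟨z, hz2 ▸ haG, rfl⟩
        · rw [quotMap_coe_notMem hzo]
          rintro ⟨a, _, ha⟩
          exact OnePoint.coe_ne_infty a ha
    · intro hy
      induction y using OnePoint.rec with
      | infty =>
        refine ⟨OnePoint.infty, ?_, rfl⟩
        rintro ⟨a, _, ha⟩
        exact OnePoint.coe_ne_infty a ha
      | coe y =>
        refine ⟨OnePoint.some (y : ℂ), ?_, ?_⟩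
        · rintro ⟨a, haG, ha⟩
          have : a = (y : ℂ) := OnePoint.coe_eq_coe.mp ha
          exact hy ⟨y, show (y : ℂ) ∈ G from this ▸ haG, rfl⟩
        · rw [quotMap_coe_mem y.2]
  rw [← himg]
  exact h.image _ (quotMap_continuous Ω hΩ).continuousOn
end
end

section
/- There exists a sequence (Fₙ)_{n≥0} of pairwise disjoint Arakelian sets in ℂ whose union F = ⋃ₙ Fₙ is closed, has connected complement in ℂ ∪ {∞}, but is not Arakelian in ℂ. Specifically, take F₀ = {2} × ℝ and Fₙ = ({sₙ − 2^{-n}, sₙ} × [0,n]) ∪ ([sₙ − 2^{-n}, sₙ] × {n}) where sₙ = ∑_{i=0}^{n-1} 2^{-i}, for n ≥ 1; then for every r ≥ 2 the union of all bounded components of ℂ \ (closed disk D̄(0,r) ∪ F) is unbounded, so F is not Arakelian in ℂ. -/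
open Topology Filter Set

noncomputable section

/-- `F` is an Arakelian set in `ℂ`. -/
def ArakelianC (F : Set ℂ) : Prop :=
  IsClosed F ∧ IsConnected (sphereCompl F) ∧ LocConnAt (sphereCompl F) OnePoint.infty

/-- `sₙ = ∑_{i=0}^{n-1} 2^{-i}` -/
def sN (n : ℕ) : ℝ := ∑ i ∈ Finset.range n, ((2:ℝ))⁻¹ ^ i

/-- The sets `F₀, F₁, F₂, …` of the example. -/
def FF : ℕ → Set ℂ
  | 0 => {z : ℂ | z.re = 2}
  | (n+1) =>
      {z : ℂ | (z.re = sN (n+1) - (2:ℝ)⁻¹ ^ (n+1) ∨ z.re = sN (n+1)) ∧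
        z.im ∈ Set.Icc (0:ℝ) ((n:ℝ)+1)} ∪
      {z : ℂ | z.re ∈ Set.Icc (sN (n+1) - (2:ℝ)⁻¹ ^ (n+1)) (sN (n+1)) ∧
        z.im = (n:ℝ)+1}

/-- The union of all bounded connected components of `ℂ \ E`. -/
def boundedCompUnion (E : Set ℂ) : Set ℂ :=
  ⋃₀ {B | (∃ x ∈ Eᶜ, B = connectedComponentIn Eᶜ x) ∧ Bornology.IsBounded B}


namespace Ara

open Bornology

local notation "∞" => OnePoint.infty

/-- Unboundedness from points of arbitrarily large norm. -/
lemma not_isBounded {S : Set ℂ} (h : ∀ R : ℝ, ∃ z ∈ S, R < ‖z‖) :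
    ¬ IsBounded S := by
  intro hb
  obtain ⟨r, hr⟩ := (Metric.isBounded_iff_subset_closedBall 0).1 hb
  obtain ⟨z, hz, hzr⟩ := h r
  have := hr hz
  simp only [Metric.mem_closedBall, Complex.dist_eq, sub_zero] at this
  linarith

lemma sphereCompl_eq (V : Set ℂ) :
    sphereCompl V = OnePoint.some '' Vᶜ ∪ {∞} := OnePoint.compl_image_coe V

lemma infty_mem_closure {S : Set ℂ} (h : ¬ IsBounded S) :
    (∞ : OnePoint ℂ) ∈ closure (OnePoint.some '' S) := by
  rw [mem_closure_iff_nhds]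
  intro t ht
  obtain ⟨s, ⟨_, hsc⟩, hsub⟩ := OnePoint.hasBasis_nhds_infty.mem_iff.1 ht
  obtain ⟨r, hr⟩ := (Metric.isBounded_iff_subset_closedBall 0).1 hsc.isBounded
  have hz : ∃ z ∈ S, r < ‖z‖ := by
    by_contra hc
    push_neg at hc
    refine h ((Metric.isBounded_iff_subset_closedBall 0).2 ⟨r, fun z hz => ?_⟩)
    simp only [Metric.mem_closedBall, Complex.dist_eq, sub_zero]
    exact hc z hz
  obtain ⟨z, hzS, hzr⟩ := hz
  refine ⟨OnePoint.some z, hsub (Or.inl ⟨z, fun hzs => ?_, rfl⟩), ⟨z, hzS, rfl⟩⟩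
  have := hr hzs
  simp only [Metric.mem_closedBall, Complex.dist_eq, sub_zero] at this
  linarith

/-- `S ∪ {∞}` is connected if `S ⊆ ℂ` is connected and unbounded. -/
lemma isConnected_union_infty {S : Set ℂ} (hS : IsPreconnected S)
    (hb : ¬ IsBounded S) : IsConnected (OnePoint.some '' S ∪ {∞}) := by
  have himg : IsPreconnected (OnePoint.some '' S) :=
    hS.image _ OnePoint.continuous_coe.continuousOn
  refine ⟨⟨∞, Or.inr rfl⟩, himg.subset_closure subset_union_left ?_⟩
  rintro x (hx | rfl)
  · exact subset_closure hx
  · exact infty_mem_closure hb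

lemma isConnected_union_infty₂ {S T : Set ℂ}
    (hS : IsPreconnected S) (hbS : ¬ IsBounded S)
    (hT : IsPreconnected T) (hbT : ¬ IsBounded T) :
    IsConnected (OnePoint.some '' (S ∪ T) ∪ {∞}) := by
  have : OnePoint.some '' (S ∪ T) ∪ {∞} =
      (OnePoint.some '' S ∪ {∞}) ∪ (OnePoint.some '' T ∪ {∞}) := by
    rw [image_union]
    ext x
    simp only [mem_union, mem_singleton_iff]
    tauto
  rw [this]
  exact (isConnected_union_infty hS hbS).union
    ⟨∞, Or.inr rfl, Or.inr rfl⟩ (isConnected_union_infty hT hbT)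

lemma convex_reProdIm {s t : Set ℝ} (hs : Convex ℝ s) (ht : Convex ℝ t) :
    Convex ℝ (s ×ℂ t) := fun x hx y hy a b ha hb hab =>
  ⟨by simpa [Complex.add_re, Complex.smul_re, smul_eq_mul] using
      hs hx.1 hy.1 ha hb hab,
   by simpa [Complex.add_im, Complex.smul_im, smul_eq_mul] using
      ht hx.2 hy.2 ha hb hab⟩

lemma preconn_reProdIm {s t : Set ℝ} (hs : Convex ℝ s) (ht : Convex ℝ t) :
    IsPreconnected (s ×ℂ t) := (convex_reProdIm hs ht).isPreconnected

end Ara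

namespace Ara

/-- left leg abscissa -/
def aa (k : ℕ) : ℝ := 2 - 3 * (2⁻¹:ℝ) ^ k
/-- right leg abscissa -/
def bb (k : ℕ) : ℝ := 2 - 2 * (2⁻¹:ℝ) ^ k

lemma sN_eq (n : ℕ) : sN n = 2 - 2 * (2⁻¹:ℝ) ^ n := by
  induction n with
  | zero => simp [sN]
  | succ n ih =>
    rw [sN, Finset.sum_range_succ, ← sN, ih]
    ring

lemma FF_succ (n : ℕ) : FF (n+1) =
    {z : ℂ | (z.re = aa (n+1) ∨ z.re = bb (n+1)) ∧ z.im ∈ Set.Icc (0:ℝ) ((n:ℝ)+1)} ∪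
    {z : ℂ | z.re ∈ Set.Icc (aa (n+1)) (bb (n+1)) ∧ z.im = (n:ℝ)+1} := by
  have h1 : sN (n+1) - (2:ℝ)⁻¹ ^ (n+1) = aa (n+1) := by rw [sN_eq]; unfold aa; ring
  have h2 : sN (n+1) = bb (n+1) := by rw [sN_eq]; rfl
  show ({z : ℂ | (z.re = sN (n+1) - (2:ℝ)⁻¹ ^ (n+1) ∨ z.re = sN (n+1)) ∧
        z.im ∈ Set.Icc (0:ℝ) ((n:ℝ)+1)} ∪
      {z : ℂ | z.re ∈ Set.Icc (sN (n+1) - (2:ℝ)⁻¹ ^ (n+1)) (sN (n+1)) ∧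
        z.im = (n:ℝ)+1}) = _
  rw [h1, h2]

lemma pow_pos' (k : ℕ) : (0:ℝ) < (2⁻¹:ℝ) ^ k := by positivity

lemma aa_lt_bb (k : ℕ) : aa k < bb k := by
  have := pow_pos' k; unfold aa bb; linarith

lemma bb_lt_two (k : ℕ) : bb k < 2 := by
  have := pow_pos' k; unfold bb; linarith

lemma aa_one : aa 1 = 1/2 := by norm_num [aa]

lemma aa_pos (k : ℕ) (hk : 1 ≤ k) : 0 < aa k := by
  have h : (2⁻¹:ℝ) ^ k ≤ (2⁻¹:ℝ) ^ 1 := pow_le_pow_of_le_one (by norm_num) (by norm_num) hk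
  rw [pow_one] at h
  unfold aa; nlinarith

lemma bb_lt_aa_succ (k : ℕ) : bb k < aa (k+1) := by
  have := pow_pos' k
  unfold aa bb
  rw [pow_succ]
  nlinarith

lemma aa_mono : StrictMono aa := by
  intro m n h
  unfold aa
  have : (2⁻¹:ℝ) ^ n < (2⁻¹:ℝ) ^ m := pow_lt_pow_right_of_lt_one₀ (by norm_num) (by norm_num) h
  linarith

lemma bb_lt_aa {m n : ℕ} (h : m < n) : bb m < aa n := by
  rcases Nat.exists_eq_add_of_lt h with ⟨k, rfl⟩
  calc bb m < aa (m+1) := bb_lt_aa_succ m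
    _ ≤ aa (m + k + 1) := by
        rcases Nat.eq_or_lt_of_le (Nat.le_add_right (m+1) k) with h' | h'
        · rw [show m + k + 1 = m + 1 + k from by ring, ← h']
        · exact le_of_lt (aa_mono (by omega))

/-- membership bounds for the shapes -/
lemma mem_FF_succ {n : ℕ} {z : ℂ} (h : z ∈ FF (n+1)) :
    aa (n+1) ≤ z.re ∧ z.re ≤ bb (n+1) ∧ 0 ≤ z.im ∧ z.im ≤ (n:ℝ)+1 := by
  rw [FF_succ] at h
  have hab := le_of_lt (aa_lt_bb (n+1))
  rcases h with ⟨hre, him⟩ | ⟨hre, him⟩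
  · rcases hre with h | h <;> rw [h] <;>
      exact ⟨by linarith, by linarith, him.1, him.2⟩
  · exact ⟨hre.1, hre.2, by rw [him]; positivity, by rw [him]⟩

lemma mem_FF_zero {z : ℂ} (h : z ∈ FF 0) : z.re = 2 := h

lemma FF_re_lt_two {n : ℕ} {z : ℂ} (h : z ∈ FF (n+1)) : z.re < 2 :=
  lt_of_le_of_lt (mem_FF_succ h).2.1 (bb_lt_two _)

lemma FF_disj_aux {m n : ℕ} (h : m < n) : Disjoint (FF m) (FF n) := by
  rw [Set.disjoint_left]
  intro z hzm hzn
  rcases n with _ | n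
  · omega
  rcases m with _ | m
  · exact absurd (mem_FF_zero hzm) (ne_of_lt (FF_re_lt_two hzn))
  · have h1 := (mem_FF_succ hzm).2.1
    have h2 := (mem_FF_succ hzn).1
    have := bb_lt_aa (show m+1 < n+1 from h)
    linarith

lemma FF_pairwise : Pairwise (fun m n => Disjoint (FF m) (FF n)) := by
  intro m n hmn
  rcases lt_or_gt_of_ne hmn with h | h
  · exact FF_disj_aux h
  · exact (FF_disj_aux h).symm

lemma isClosed_FF (n : ℕ) : IsClosed (FF n) := by
  rcases n with _ | n
  · exact isClosed_eq Complex.continuous_re continuous_const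
  · rw [FF_succ]
    apply IsClosed.union
    · have heq : {z : ℂ | (z.re = aa (n+1) ∨ z.re = bb (n+1)) ∧ z.im ∈ Set.Icc (0:ℝ) ((n:ℝ)+1)} =
          (Complex.re ⁻¹' {x | x = aa (n+1) ∨ x = bb (n+1)}) ∩
            (Complex.im ⁻¹' Set.Icc 0 ((n:ℝ)+1)) := rfl
      have h2 : {x : ℝ | x = aa (n+1) ∨ x = bb (n+1)} = {aa (n+1)} ∪ {bb (n+1)} := by
        ext x; simp [Set.mem_union]; tauto
      rw [heq, h2]
      exact (((isClosed_singleton).union isClosed_singleton).preimage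
        Complex.continuous_re).inter (isClosed_Icc.preimage Complex.continuous_im)
    · have heq : {z : ℂ | z.re ∈ Set.Icc (aa (n+1)) (bb (n+1)) ∧ z.im = (n:ℝ)+1} =
          (Complex.re ⁻¹' Set.Icc (aa (n+1)) (bb (n+1))) ∩
            (Complex.im ⁻¹' {x | x = (n:ℝ)+1}) := rfl
      have h2 : {x : ℝ | x = (n:ℝ)+1} = {(n:ℝ)+1} := rfl
      rw [heq, h2]
      exact (isClosed_Icc.preimage Complex.continuous_re).inter
        (isClosed_singleton.preimage Complex.continuous_im)

end Ara

namespace Ara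

open Bornology

local notation "∞" => OnePoint.infty

lemma dist_re_le {w z : ℂ} : |w.re - z.re| ≤ dist w z := by
  rw [Complex.dist_eq, ← Complex.sub_re]
  exact Complex.abs_re_le_norm _

lemma dist_im_le {w z : ℂ} : |w.im - z.im| ≤ dist w z := by
  rw [Complex.dist_eq, ← Complex.sub_im]
  exact Complex.abs_im_le_norm _

lemma isClosed_iUnion_FF : IsClosed (⋃ n, FF n) := by
  rw [← isOpen_compl_iff, Metric.isOpen_iff]
  intro z hz
  simp only [mem_compl_iff, mem_iUnion, not_exists] at hz
  have hz0 : z.re ≠ 2 := hz 0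
  rcases lt_or_gt_of_ne hz0 with hlt | hgt
  · set ε₁ : ℝ := (2 - z.re)/2 with hε₁
    have hε₁pos : 0 < ε₁ := by simp [hε₁]; linarith
    obtain ⟨N, hN⟩ := exists_pow_lt_of_lt_one (show (0:ℝ) < ε₁/3 by linarith)
      (show (2⁻¹:ℝ) < 1 by norm_num)
    set C : Set ℂ := ⋃ n ∈ Finset.range (N+1), FF n with hC
    have hCclosed : IsClosed C := isClosed_biUnion_finset (fun n _ => isClosed_FF n)
    have hzC : z ∈ Cᶜ := by
      simp only [hC, mem_compl_iff, mem_iUnion, not_exists]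
      exact fun n _ => hz n
    obtain ⟨ε₂, hε₂pos, hball₂⟩ := Metric.isOpen_iff.1 hCclosed.isOpen_compl z hzC
    refine ⟨min ε₁ ε₂, lt_min hε₁pos hε₂pos, fun w hw => ?_⟩
    simp only [Metric.mem_ball] at hw
    simp only [mem_compl_iff, mem_iUnion, not_exists]
    intro n hwn
    rcases lt_or_ge n (N+1) with hn | hn
    · refine hball₂ (Metric.mem_ball.2 (lt_of_lt_of_le hw (min_le_right _ _))) ?_
      simp only [hC, mem_iUnion]
      exact ⟨n, Finset.mem_range.2 hn, hwn⟩
    · rcases n with _ | k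
      · omega
      · have h1 : aa (k+1) ≤ w.re := (mem_FF_succ hwn).1
        have h2 : |w.re - z.re| ≤ dist w z := dist_re_le
        have h3 : dist w z < ε₁ := lt_of_lt_of_le hw (min_le_left _ _)
        have h4 : (2⁻¹:ℝ)^(k+1) ≤ (2⁻¹:ℝ)^N :=
          pow_le_pow_of_le_one (by norm_num) (by norm_num) (by omega)
        have h5 : aa (k+1) = 2 - 3*(2⁻¹:ℝ)^(k+1) := rfl
        have habs := abs_lt.1 (lt_of_le_of_lt h2 h3)
        have : w.re < z.re + ε₁ := by linarith [habs.2]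
        nlinarith
  · refine ⟨z.re - 2, by linarith, fun w hw => ?_⟩
    simp only [Metric.mem_ball] at hw
    have h2 : |w.re - z.re| ≤ dist w z := dist_re_le
    have habs := abs_lt.1 (lt_of_le_of_lt h2 hw)
    have hw2 : 2 < w.re := by linarith [habs.1]
    simp only [mem_compl_iff, mem_iUnion, not_exists]
    intro n hwn
    rcases n with _ | k
    · exact absurd (mem_FF_zero hwn) (by linarith)
    · exact absurd (FF_re_lt_two hwn) (by linarith)

def squareCompl (R : ℝ) : Set ℂ := {z | R < |z.re| ∨ R < |z.im|}

lemma mem_squareCompl {R : ℝ} {z : ℂ} : z ∈ squareCompl R ↔ R < |z.re| ∨ R < |z.im| :=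
  Iff.rfl

lemma squareCompl_eq (R : ℝ) (hR : 0 ≤ R) :
    squareCompl R = (((Ioi R ×ℂ univ) ∪ (univ ×ℂ Ioi R)) ∪ (Iio (-R) ×ℂ univ)) ∪
      (univ ×ℂ Iio (-R)) := by
  ext z
  simp only [mem_squareCompl, mem_union, Complex.mem_reProdIm, mem_Ioi, mem_Iio,
    mem_univ, and_true, true_and]
  rw [lt_abs, lt_abs]
  constructor
  · rintro ((h | h) | (h | h))
    · exact Or.inl (Or.inl (Or.inl h))
    · exact Or.inl (Or.inr (by linarith))
    · exact Or.inl (Or.inl (Or.inr h))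
    · exact Or.inr (by linarith)
  · rintro (((h | h) | h) | h)
    · exact Or.inl (Or.inl h)
    · exact Or.inr (Or.inl h)
    · exact Or.inl (Or.inr (by linarith))
    · exact Or.inr (Or.inr (by linarith))

lemma isConnected_reProdIm {s t : Set ℝ} (hs : Convex ℝ s) (ht : Convex ℝ t)
    {x y : ℝ} (hx : x ∈ s) (hy : y ∈ t) : IsConnected (s ×ℂ t) :=
  ⟨⟨⟨x, y⟩, Complex.mem_reProdIm.2 ⟨hx, hy⟩⟩, preconn_reProdIm hs ht⟩

lemma isConnected_squareCompl (R : ℝ) (hR : 0 ≤ R) : IsConnected (squareCompl R) := by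
  rw [squareCompl_eq R hR]
  have hP2 : IsConnected (Ioi R ×ℂ (univ : Set ℝ)) :=
    isConnected_reProdIm (convex_Ioi R) convex_univ (show R < R+1 by linarith) (mem_univ 0)
  have hP3 : IsConnected ((univ : Set ℝ) ×ℂ Ioi R) :=
    isConnected_reProdIm convex_univ (convex_Ioi R) (mem_univ 0) (show R < R+1 by linarith)
  have hP1 : IsConnected (Iio (-R) ×ℂ (univ : Set ℝ)) :=
    isConnected_reProdIm (convex_Iio _) convex_univ (show -R-1 < -R by linarith) (mem_univ 0)
  have hP4 : IsConnected ((univ : Set ℝ) ×ℂ Iio (-R)) :=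
    isConnected_reProdIm convex_univ (convex_Iio _) (mem_univ 0) (show -R-1 < -R by linarith)
  have c23 : IsConnected ((Ioi R ×ℂ univ) ∪ ((univ : Set ℝ) ×ℂ Ioi R)) :=
    IsConnected.union ⟨⟨R+1, R+1⟩,
      Complex.mem_reProdIm.2 ⟨show R < R+1 by linarith, mem_univ _⟩,
      Complex.mem_reProdIm.2 ⟨mem_univ _, show R < R+1 by linarith⟩⟩ hP2 hP3
  have c231 : IsConnected (((Ioi R ×ℂ univ) ∪ ((univ : Set ℝ) ×ℂ Ioi R)) ∪
      (Iio (-R) ×ℂ (univ : Set ℝ))) :=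
    IsConnected.union ⟨⟨-R-1, R+1⟩,
      Or.inr (Complex.mem_reProdIm.2 ⟨mem_univ _, show R < R+1 by linarith⟩),
      Complex.mem_reProdIm.2 ⟨show -R-1 < -R by linarith, mem_univ _⟩⟩ c23 hP1
  exact IsConnected.union ⟨⟨R+1, -R-1⟩,
      Or.inl (Or.inl (Complex.mem_reProdIm.2 ⟨show R < R+1 by linarith, mem_univ _⟩)),
      Complex.mem_reProdIm.2 ⟨mem_univ _, show -R-1 < -R by linarith⟩⟩ c231 hP4

lemma not_isBounded_squareCompl (R : ℝ) (hR : 0 ≤ R) : ¬ IsBounded (squareCompl R) := by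
  apply not_isBounded
  intro R'
  refine ⟨⟨0, |R'| + R + 1⟩, Or.inr ?_, ?_⟩
  · show R < |((⟨0, |R'| + R + 1⟩ : ℂ)).im|
    rw [show ((⟨0, |R'| + R + 1⟩ : ℂ)).im = |R'| + R + 1 from rfl,
      abs_of_nonneg (by positivity)]
    linarith [abs_nonneg R']
  · refine lt_of_lt_of_le ?_ (Complex.abs_im_le_norm _)
    rw [show ((⟨0, |R'| + R + 1⟩ : ℂ)).im = |R'| + R + 1 from rfl,
      abs_of_nonneg (by positivity)]
    linarith [le_abs_self R']

lemma compl_squareCompl (R : ℝ) :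
    (squareCompl R)ᶜ = {z : ℂ | |z.re| ≤ R} ∩ {z : ℂ | |z.im| ≤ R} := by
  ext z
  simp [mem_squareCompl, not_or, not_lt, mem_inter_iff]

lemma isClosed_compl_squareCompl (R : ℝ) : IsClosed (squareCompl R)ᶜ := by
  rw [compl_squareCompl]
  exact (isClosed_le (continuous_abs.comp Complex.continuous_re) continuous_const).inter
    (isClosed_le (continuous_abs.comp Complex.continuous_im) continuous_const)

lemma isCompact_compl_squareCompl (R : ℝ) : IsCompact (squareCompl R)ᶜ := by
  rw [Metric.isCompact_iff_isClosed_bounded]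
  refine ⟨isClosed_compl_squareCompl R, ?_⟩
  rw [Metric.isBounded_iff_subset_closedBall 0]
  refine ⟨2*R, fun z hz => ?_⟩
  rw [compl_squareCompl] at hz
  simp only [mem_inter_iff, mem_setOf_eq] at hz
  simp only [Metric.mem_closedBall, Complex.dist_eq, sub_zero]
  calc ‖z‖ ≤ |z.re| + |z.im| := Complex.norm_le_abs_re_add_abs_im z
    _ ≤ 2*R := by linarith [hz.1, hz.2]

lemma isOpen_squareCompl (R : ℝ) : IsOpen (squareCompl R) := by
  have := (isClosed_compl_squareCompl R).isOpen_compl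
  rwa [compl_compl] at this

/-- The key criterion for local connectedness at `∞` of a sphere complement. -/
lemma locConnAt_infty_of {F : Set ℂ}
    (h : ∀ R₀ : ℝ, ∃ R, R₀ ≤ R ∧ 0 ≤ R ∧
      IsConnected (OnePoint.some '' (squareCompl R ∩ Fᶜ) ∪ {∞})) :
    ∀ U ∈ 𝓝 (∞ : OnePoint ℂ), ∃ W ∈ 𝓝 (∞ : OnePoint ℂ), W ⊆ U ∧
      IsConnected (W ∩ sphereCompl F) := by
  intro U hU
  obtain ⟨s, ⟨hscl, hsc⟩, hsub⟩ := OnePoint.hasBasis_nhds_infty.mem_iff.1 hU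
  obtain ⟨r, hr⟩ := (Metric.isBounded_iff_subset_closedBall 0).1 hsc.isBounded
  obtain ⟨R, hRr, hR0, hconn⟩ := h (max r 0)
  have hsq_sub : squareCompl R ⊆ sᶜ := by
    intro z hz hzs
    have h1 : ‖z‖ ≤ r := by
      have := hr hzs
      simpa only [Metric.mem_closedBall, Complex.dist_eq, sub_zero] using this
    have h2 : r ≤ R := le_trans (le_max_left r 0) hRr
    rcases hz with hz | hz
    · exact absurd (le_trans (Complex.abs_re_le_norm z) h1) (by linarith)
    · exact absurd (le_trans (Complex.abs_im_le_norm z) h1) (by linarith)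
  refine ⟨OnePoint.some '' squareCompl R ∪ {∞}, ?_, ?_, ?_⟩
  · have : OnePoint.some '' ((squareCompl R)ᶜ)ᶜ ∪ {∞} ∈ 𝓝 (∞ : OnePoint ℂ) :=
      OnePoint.hasBasis_nhds_infty.mem_of_mem
        ⟨isClosed_compl_squareCompl R, isCompact_compl_squareCompl R⟩
    rwa [compl_compl] at this
  · refine union_subset (fun x hx => ?_) (fun x hx => ?_)
    · obtain ⟨z, hz, rfl⟩ := hx
      exact hsub (Or.inl ⟨z, hsq_sub hz, rfl⟩)
    · exact hsub (Or.inr hx)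
  · have heq : (OnePoint.some '' squareCompl R ∪ {∞}) ∩ sphereCompl F =
        OnePoint.some '' (squareCompl R ∩ Fᶜ) ∪ {∞} := by
      rw [sphereCompl_eq]
      ext x
      simp only [mem_inter_iff, mem_union, mem_image, mem_singleton_iff, mem_compl_iff]
      constructor
      · rintro ⟨(⟨z, hz, rfl⟩ | rfl), (⟨w, hw, hwx⟩ | hx)⟩
        · have : w = z := OnePoint.coe_injective hwx
          exact Or.inl ⟨z, ⟨hz, this ▸ hw⟩, rfl⟩
        · exact absurd hx (OnePoint.coe_ne_infty z)
        · exact Or.inr rfl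
        · exact Or.inr rfl
      · rintro (⟨z, ⟨hz1, hz2⟩, rfl⟩ | rfl)
        · exact ⟨Or.inl ⟨z, hz1, rfl⟩, Or.inl ⟨z, hz2, rfl⟩⟩
        · exact ⟨Or.inr rfl, Or.inr rfl⟩
    rw [heq]
    exact hconn

end Ara

namespace Ara

open Bornology

local notation "∞" => OnePoint.infty

lemma not_isBounded_mono {S T : Set ℂ} (h : S ⊆ T) (hS : ¬ IsBounded S) :
    ¬ IsBounded T := fun hT => hS (hT.subset h)

lemma unb_re_lt {S : Set ℂ} {c y : ℝ} (h : ∀ x, x < c → (⟨x, y⟩:ℂ) ∈ S) :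
    ¬ IsBounded S := by
  apply not_isBounded
  intro R
  set x : ℝ := min (c-1) (-(|R|+1)) with hx
  refine ⟨⟨x, y⟩, h x (lt_of_le_of_lt (min_le_left _ _) (by linarith)), ?_⟩
  have h1 : x ≤ -(|R|+1) := min_le_right _ _
  have h2 : -x ≤ |x| := neg_le_abs x
  have h3 : |x| ≤ ‖(⟨x, y⟩ : ℂ)‖ := by simpa using Complex.abs_re_le_norm (⟨x, y⟩ : ℂ)
  have h4 : R ≤ |R| := le_abs_self R
  linarith

lemma unb_re_gt {S : Set ℂ} {c y : ℝ} (h : ∀ x, c < x → (⟨x, y⟩:ℂ) ∈ S) :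
    ¬ IsBounded S := by
  apply not_isBounded
  intro R
  set x : ℝ := max (c+1) (|R|+1) with hx
  refine ⟨⟨x, y⟩, h x (lt_of_lt_of_le (by linarith) (le_max_left _ _)), ?_⟩
  have h1 : |R|+1 ≤ x := le_max_right _ _
  have h2 : x ≤ |x| := le_abs_self x
  have h3 : |x| ≤ ‖(⟨x, y⟩ : ℂ)‖ := by simpa using Complex.abs_re_le_norm (⟨x, y⟩ : ℂ)
  have h4 : R ≤ |R| := le_abs_self R
  linarith

lemma unb_im_lt {S : Set ℂ} {c x : ℝ} (h : ∀ y, y < c → (⟨x, y⟩:ℂ) ∈ S) :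
    ¬ IsBounded S := by
  apply not_isBounded
  intro R
  set y : ℝ := min (c-1) (-(|R|+1)) with hy
  refine ⟨⟨x, y⟩, h y (lt_of_le_of_lt (min_le_left _ _) (by linarith)), ?_⟩
  have h1 : y ≤ -(|R|+1) := min_le_right _ _
  have h2 : -y ≤ |y| := neg_le_abs y
  have h3 : |y| ≤ ‖(⟨x, y⟩ : ℂ)‖ := by simpa using Complex.abs_im_le_norm (⟨x, y⟩ : ℂ)
  have h4 : R ≤ |R| := le_abs_self R
  linarith

lemma compl_FF_zero : (FF 0)ᶜ = (Iio (2:ℝ) ×ℂ univ) ∪ (Ioi (2:ℝ) ×ℂ univ) := by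
  ext z
  simp only [mem_compl_iff, mem_union, Complex.mem_reProdIm, mem_Iio, mem_Ioi,
    mem_univ, and_true]
  show ¬(z.re = 2) ↔ _
  exact ne_iff_lt_or_gt

lemma sphere_conn_FF_zero : IsConnected (sphereCompl (FF 0)) := by
  rw [sphereCompl_eq, compl_FF_zero]
  exact isConnected_union_infty₂
    (preconn_reProdIm (convex_Iio _) convex_univ)
    (unb_re_lt (c := 2) (y := 0) (fun x hx => Complex.mem_reProdIm.2 ⟨hx, mem_univ _⟩))
    (preconn_reProdIm (convex_Ioi _) convex_univ)
    (unb_re_gt (c := 2) (y := 0) (fun x hx => Complex.mem_reProdIm.2 ⟨hx, mem_univ _⟩))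

lemma locconn_FF_zero : ∀ U ∈ 𝓝 (∞ : OnePoint ℂ), ∃ W ∈ 𝓝 (∞ : OnePoint ℂ), W ⊆ U ∧
    IsConnected (W ∩ sphereCompl (FF 0)) := by
  apply locConnAt_infty_of
  intro R₀
  set R : ℝ := max R₀ 3 with hRdef
  have hR3 : (3:ℝ) ≤ R := le_max_right _ _
  refine ⟨R, le_max_left _ _, by linarith, ?_⟩
  have heq : squareCompl R ∩ (FF 0)ᶜ =
      (((Iio (-R) ×ℂ univ) ∪ (Iio (2:ℝ) ×ℂ Ioi R)) ∪ (Iio (2:ℝ) ×ℂ Iio (-R))) ∪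
      (((Ioi R ×ℂ univ) ∪ (Ioi (2:ℝ) ×ℂ Ioi R)) ∪ (Ioi (2:ℝ) ×ℂ Iio (-R))) := by
    rw [compl_FF_zero]
    ext z
    simp only [mem_inter_iff, mem_union, Complex.mem_reProdIm, mem_Iio, mem_Ioi,
      mem_univ, and_true, mem_squareCompl, lt_abs]
    constructor
    · rintro ⟨(h | h) | (h | h), h2⟩
      · exact Or.inr (Or.inl (Or.inl h))
      · exact Or.inl (Or.inl (Or.inl (by linarith)))
      · rcases h2 with h2 | h2
        · exact Or.inl (Or.inl (Or.inr ⟨h2, h⟩))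
        · exact Or.inr (Or.inl (Or.inr ⟨h2, h⟩))
      · rcases h2 with h2 | h2
        · exact Or.inl (Or.inr ⟨h2, by linarith⟩)
        · exact Or.inr (Or.inr ⟨h2, by linarith⟩)
    · rintro (((h | ⟨h1, h2⟩) | ⟨h1, h2⟩) | ((h | ⟨h1, h2⟩) | ⟨h1, h2⟩))
      · exact ⟨Or.inl (Or.inr (by linarith)), Or.inl (by linarith)⟩
      · exact ⟨Or.inr (Or.inl h2), Or.inl h1⟩
      · exact ⟨Or.inr (Or.inr (by linarith)), Or.inl h1⟩
      · exact ⟨Or.inl (Or.inl h), Or.inr (by linarith)⟩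
      · exact ⟨Or.inr (Or.inl h2), Or.inr h1⟩
      · exact ⟨Or.inr (Or.inr (by linarith)), Or.inr h1⟩
  rw [heq]
  have hLc : IsConnected (((Iio (-R) ×ℂ univ) ∪ (Iio (2:ℝ) ×ℂ Ioi R)) ∪
      (Iio (2:ℝ) ×ℂ Iio (-R))) := by
    refine IsConnected.union ⟨⟨-R-1, -R-1⟩, Or.inl
        (Complex.mem_reProdIm.2 ⟨show -R-1 < -R by linarith, mem_univ _⟩),
        Complex.mem_reProdIm.2 ⟨show -R-1 < 2 by linarith, show -R-1 < -R by linarith⟩⟩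
      (IsConnected.union ⟨⟨-R-1, R+1⟩,
        Complex.mem_reProdIm.2 ⟨show -R-1 < -R by linarith, mem_univ _⟩,
        Complex.mem_reProdIm.2 ⟨show -R-1 < 2 by linarith, show R < R+1 by linarith⟩⟩
        (isConnected_reProdIm (convex_Iio _) convex_univ
          (show -R-1 < -R by linarith) (mem_univ (0:ℝ)))
        (isConnected_reProdIm (convex_Iio _) (convex_Ioi _)
          (show -R-1 < 2 by linarith) (show R < R+1 by linarith)))
      (isConnected_reProdIm (convex_Iio _) (convex_Iio _)
        (show -R-1 < 2 by linarith) (show -R-1 < -R by linarith))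
  have hRc : IsConnected (((Ioi R ×ℂ univ) ∪ (Ioi (2:ℝ) ×ℂ Ioi R)) ∪
      (Ioi (2:ℝ) ×ℂ Iio (-R))) := by
    refine IsConnected.union ⟨⟨R+1, -R-1⟩, Or.inl
        (Complex.mem_reProdIm.2 ⟨show R < R+1 by linarith, mem_univ _⟩),
        Complex.mem_reProdIm.2 ⟨show 2 < R+1 by linarith, show -R-1 < -R by linarith⟩⟩
      (IsConnected.union ⟨⟨R+1, R+1⟩,
        Complex.mem_reProdIm.2 ⟨show R < R+1 by linarith, mem_univ _⟩,
        Complex.mem_reProdIm.2 ⟨show 2 < R+1 by linarith, show R < R+1 by linarith⟩⟩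
        (isConnected_reProdIm (convex_Ioi _) convex_univ
          (show R < R+1 by linarith) (mem_univ (0:ℝ)))
        (isConnected_reProdIm (convex_Ioi _) (convex_Ioi _)
          (show 2 < R+1 by linarith) (show R < R+1 by linarith)))
      (isConnected_reProdIm (convex_Ioi _) (convex_Iio _)
        (show 2 < R+1 by linarith) (show -R-1 < -R by linarith))
  exact isConnected_union_infty₂ hLc.isPreconnected
    (not_isBounded_mono (subset_union_left.trans subset_union_left)
      (unb_re_lt (c := -R) (y := 0)
        (fun x hx => Complex.mem_reProdIm.2 ⟨hx, mem_univ _⟩)))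
    hRc.isPreconnected
    (not_isBounded_mono (subset_union_left.trans subset_union_left)
      (unb_re_gt (c := R) (y := 0)
        (fun x hx => Complex.mem_reProdIm.2 ⟨hx, mem_univ _⟩)))

end Ara

namespace Ara

open Bornology

local notation "∞" => OnePoint.infty

lemma compl_FF_succ (n : ℕ) : (FF (n+1))ᶜ =
    ((((univ ×ℂ Iio (0:ℝ)) ∪ (Iio (aa (n+1)) ×ℂ univ)) ∪ (Ioi (bb (n+1)) ×ℂ univ)) ∪
      (Ioo (aa (n+1)) (bb (n+1)) ×ℂ Iio ((n:ℝ)+1))) ∪ (univ ×ℂ Ioi ((n:ℝ)+1)) := by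
  have hab := aa_lt_bb (n+1)
  have hh0 : (0:ℝ) < (n:ℝ)+1 := by positivity
  ext z
  rw [mem_compl_iff, FF_succ]
  simp only [mem_union, mem_setOf_eq, mem_Icc, Complex.mem_reProdIm, mem_Iio, mem_Ioi,
    mem_Ioo, mem_univ, true_and, and_true]
  constructor
  · intro hz
    rcases lt_trichotomy z.re (aa (n+1)) with hra | hra | hra
    · exact Or.inl (Or.inl (Or.inl (Or.inr hra)))
    · rcases lt_or_ge z.im 0 with him | him
      · exact Or.inl (Or.inl (Or.inl (Or.inl him)))
      · rcases le_or_gt z.im ((n:ℝ)+1) with him2 | him2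
        · exact absurd (Or.inl ⟨Or.inl hra, him, him2⟩) hz
        · exact Or.inr him2
    · rcases lt_trichotomy z.re (bb (n+1)) with hrb | hrb | hrb
      · rcases lt_trichotomy z.im ((n:ℝ)+1) with him | him | him
        · exact Or.inl (Or.inr ⟨⟨hra, hrb⟩, him⟩)
        · exact absurd (Or.inr ⟨⟨le_of_lt hra, le_of_lt hrb⟩, him⟩) hz
        · exact Or.inr him
      · rcases lt_or_ge z.im 0 with him | him
        · exact Or.inl (Or.inl (Or.inl (Or.inl him)))
        · rcases le_or_gt z.im ((n:ℝ)+1) with him2 | him2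
          · exact absurd (Or.inl ⟨Or.inr hrb, him, him2⟩) hz
          · exact Or.inr him2
      · exact Or.inl (Or.inl (Or.inr hrb))
  · rintro ((((him | hra) | hrb) | ⟨⟨h1, h2⟩, h3⟩) | him)
    · rintro (⟨hre, h1, h2⟩ | ⟨hre, h2⟩)
      · linarith
      · linarith
    · rintro (⟨hre, h1, h2⟩ | ⟨⟨h1, h2⟩, h3⟩)
      · rcases hre with h | h <;> linarith
      · linarith
    · rintro (⟨hre, h1, h2⟩ | ⟨⟨h1, h2⟩, h3⟩)
      · rcases hre with h | h <;> linarith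
      · linarith
    · rintro (⟨hre, h4, h5⟩ | ⟨⟨h4, h5⟩, h6⟩)
      · rcases hre with h | h <;> linarith
      · linarith
    · rintro (⟨hre, h1, h2⟩ | ⟨⟨h1, h2⟩, h3⟩)
      · linarith
      · linarith

lemma conn_compl_FF_succ (n : ℕ) : IsConnected ((FF (n+1))ᶜ) := by
  have hab := aa_lt_bb (n+1)
  have hh0 : (0:ℝ) < (n:ℝ)+1 := by positivity
  rw [compl_FF_succ]
  have hD : IsConnected ((univ : Set ℝ) ×ℂ Iio (0:ℝ)) :=
    isConnected_reProdIm convex_univ (convex_Iio _) (mem_univ (0:ℝ))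
      (show (-1:ℝ) < 0 by norm_num)
  have c1 : IsConnected ((univ ×ℂ Iio (0:ℝ)) ∪ (Iio (aa (n+1)) ×ℂ (univ : Set ℝ))) :=
    IsConnected.union ⟨⟨aa (n+1) - 1, -1⟩,
      Complex.mem_reProdIm.2 ⟨mem_univ _, show (-1:ℝ) < 0 by norm_num⟩,
      Complex.mem_reProdIm.2 ⟨show aa (n+1) - 1 < aa (n+1) by linarith, mem_univ _⟩⟩
      hD (isConnected_reProdIm (convex_Iio _) convex_univ
        (show aa (n+1) - 1 < aa (n+1) by linarith) (mem_univ (0:ℝ)))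
  have c2 : IsConnected (((univ ×ℂ Iio (0:ℝ)) ∪ (Iio (aa (n+1)) ×ℂ univ)) ∪
      (Ioi (bb (n+1)) ×ℂ (univ : Set ℝ))) :=
    IsConnected.union ⟨⟨bb (n+1) + 1, -1⟩,
      Or.inl (Complex.mem_reProdIm.2 ⟨mem_univ _, show (-1:ℝ) < 0 by norm_num⟩),
      Complex.mem_reProdIm.2 ⟨show bb (n+1) < bb (n+1) + 1 by linarith, mem_univ _⟩⟩
      c1 (isConnected_reProdIm (convex_Ioi _) convex_univ
        (show bb (n+1) < bb (n+1) + 1 by linarith) (mem_univ (0:ℝ)))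
  have c3 : IsConnected ((((univ ×ℂ Iio (0:ℝ)) ∪ (Iio (aa (n+1)) ×ℂ univ)) ∪
      (Ioi (bb (n+1)) ×ℂ univ)) ∪ (Ioo (aa (n+1)) (bb (n+1)) ×ℂ Iio ((n:ℝ)+1))) :=
    IsConnected.union ⟨⟨(aa (n+1) + bb (n+1))/2, -1⟩,
      Or.inl (Or.inl (Complex.mem_reProdIm.2 ⟨mem_univ _, show (-1:ℝ) < 0 by norm_num⟩)),
      Complex.mem_reProdIm.2 ⟨⟨by linarith, by linarith⟩, show (-1:ℝ) < (n:ℝ)+1 by linarith⟩⟩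
      c2 (isConnected_reProdIm (convex_Ioo _ _) (convex_Iio _)
        (⟨by linarith, by linarith⟩ : (aa (n+1) + bb (n+1))/2 ∈ Ioo (aa (n+1)) (bb (n+1)))
        (show (-1:ℝ) < (n:ℝ)+1 by linarith))
  have hmemA : (⟨aa (n+1) - 1, (n:ℝ)+2⟩ : ℂ) ∈ Iio (aa (n+1)) ×ℂ (univ : Set ℝ) :=
    Complex.mem_reProdIm.2 ⟨show aa (n+1) - 1 < aa (n+1) by linarith, mem_univ _⟩
  have hmemE : (⟨aa (n+1) - 1, (n:ℝ)+2⟩ : ℂ) ∈ (univ : Set ℝ) ×ℂ Ioi ((n:ℝ)+1) :=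
    Complex.mem_reProdIm.2 ⟨mem_univ _, show (n:ℝ)+1 < (n:ℝ)+2 by linarith⟩
  exact IsConnected.union ⟨⟨aa (n+1) - 1, (n:ℝ)+2⟩,
      Or.inl (Or.inl (Or.inr hmemA)), hmemE⟩
    c3 (isConnected_reProdIm convex_univ (convex_Ioi _) (mem_univ (0:ℝ))
      (show (n:ℝ)+1 < (n:ℝ)+2 by linarith))

lemma unb_compl_FF_succ (n : ℕ) : ¬ IsBounded ((FF (n+1))ᶜ) := by
  have hunb : ¬ IsBounded ((univ : Set ℝ) ×ℂ Iio (0:ℝ)) :=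
    unb_im_lt (c := 0) (x := 0) (fun y hy => Complex.mem_reProdIm.2 ⟨mem_univ _, hy⟩)
  refine not_isBounded_mono ?_ hunb
  rw [compl_FF_succ]
  exact (subset_union_left.trans subset_union_left).trans
    (subset_union_left.trans subset_union_left)

lemma sphere_conn_FF_succ (n : ℕ) : IsConnected (sphereCompl (FF (n+1))) := by
  rw [sphereCompl_eq]
  exact isConnected_union_infty (conn_compl_FF_succ n).isPreconnected (unb_compl_FF_succ n)

lemma FF_succ_subset_compl_squareCompl {n : ℕ} {R : ℝ} (hR : (n:ℝ)+2 ≤ R) :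
    FF (n+1) ⊆ (squareCompl R)ᶜ := by
  intro z hz
  obtain ⟨h1, h2, h3, h4⟩ := mem_FF_succ hz
  have ha := aa_pos (n+1) (by omega)
  have hb := bb_lt_two (n+1)
  rw [compl_squareCompl]
  constructor
  · show |z.re| ≤ R
    rw [abs_of_nonneg (by linarith)]
    linarith [Nat.cast_nonneg (α := ℝ) n]
  · show |z.im| ≤ R
    rw [abs_of_nonneg h3]
    linarith

lemma locconn_FF_succ (n : ℕ) :
    ∀ U ∈ 𝓝 (∞ : OnePoint ℂ), ∃ W ∈ 𝓝 (∞ : OnePoint ℂ), W ⊆ U ∧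
      IsConnected (W ∩ sphereCompl (FF (n+1))) := by
  apply locConnAt_infty_of
  intro R₀
  set R : ℝ := max R₀ ((n:ℝ)+2) with hRdef
  have hRn : (n:ℝ)+2 ≤ R := le_max_right _ _
  have hR0 : (0:ℝ) ≤ R := by positivity
  refine ⟨R, le_max_left _ _, hR0, ?_⟩
  have heq : squareCompl R ∩ (FF (n+1))ᶜ = squareCompl R := by
    apply inter_eq_self_of_subset_left
    intro z hz
    intro hzF
    exact absurd hz (by simpa using FF_succ_subset_compl_squareCompl hRn hzF)
  rw [heq]
  exact isConnected_union_infty (isConnected_squareCompl R hR0).isPreconnected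
    (not_isBounded_squareCompl R hR0)

end Ara

namespace Ara

open Bornology

local notation "∞" => OnePoint.infty

lemma bb_mono : StrictMono bb := by
  intro m n h
  unfold bb
  have : (2⁻¹:ℝ) ^ n < (2⁻¹:ℝ) ^ m := pow_lt_pow_right_of_lt_one₀ (by norm_num) (by norm_num) h
  linarith

lemma aa_lt_two (k : ℕ) : aa k < 2 := lt_trans (aa_lt_bb k) (bb_lt_two k)

lemma notin_FF_succ {z : ℂ} {m : ℕ}
    (h : z.re < aa (m+1) ∨ bb (m+1) < z.re ∨ z.im < 0 ∨ (m:ℝ)+1 < z.im ∨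
      (aa (m+1) < z.re ∧ z.re < bb (m+1) ∧ z.im < (m:ℝ)+1)) : z ∉ FF (m+1) := by
  intro hz
  obtain ⟨hb1, hb2, hb3, hb4⟩ := mem_FF_succ hz
  rw [FF_succ] at hz
  rcases h with h|h|h|h|⟨h1,h2,h3⟩
  · linarith
  · linarith
  · linarith
  · linarith
  · rcases hz with ⟨hre, him⟩ | ⟨hre, him⟩
    · rcases hre with h|h <;> linarith
    · linarith

def Dset : Set ℂ := Iio (2:ℝ) ×ℂ Iio (0:ℝ)
def H0set : Set ℂ := Iio (aa 1) ×ℂ (univ : Set ℝ)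
def Hs (k : ℕ) : Set ℂ := Ioo (bb k) (aa (k+1)) ×ℂ (univ : Set ℝ)
def Gs (k : ℕ) : Set ℂ := Ioo (aa k) (bb k) ×ℂ Iio (k:ℝ)
def Ts (k : ℕ) : Set ℂ := Ico (aa k) (aa (k+1)) ×ℂ Ioi (k:ℝ)

def Q : ℕ → Set ℂ
  | 0 => Dset ∪ H0set
  | (k+1) => ((Dset ∪ Gs (k+1)) ∪ Hs (k+1)) ∪ Ts (k+1)

lemma Dset_subset : Dset ⊆ (⋃ n, FF n)ᶜ := by
  rintro z ⟨h1, h2⟩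
  simp only [mem_compl_iff, mem_iUnion, not_exists]
  intro n
  rcases n with _ | m
  · exact fun hz => absurd (mem_FF_zero hz)
      (by have h1' : z.re < 2 := h1; linarith)
  · exact notin_FF_succ (Or.inr (Or.inr (Or.inl h2)))

lemma H0set_subset : H0set ⊆ (⋃ n, FF n)ᶜ := by
  rintro z ⟨h1', -⟩
  have h1 : z.re < aa 1 := h1'
  simp only [mem_compl_iff, mem_iUnion, not_exists]
  have h2 : z.re < 2 := lt_trans h1 (aa_lt_two 1)
  intro n
  rcases n with _ | m
  · exact fun hz => absurd (mem_FF_zero hz) (by linarith)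
  · exact notin_FF_succ (Or.inl (lt_of_lt_of_le h1 (aa_mono.monotone (by omega))))

lemma Hs_subset (k : ℕ) : Hs (k+1) ⊆ (⋃ n, FF n)ᶜ := by
  rintro z ⟨⟨h1, h2⟩, -⟩
  simp only [mem_compl_iff, mem_iUnion, not_exists]
  have hre2 : z.re < 2 := lt_trans h2 (aa_lt_two _)
  intro n
  rcases n with _ | m
  · exact fun hz => absurd (mem_FF_zero hz) (by linarith)
  · rcases le_or_gt (m+1) (k+1) with hm | hm
    · exact notin_FF_succ (Or.inr (Or.inl
        (lt_of_le_of_lt (bb_mono.monotone hm) h1)))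
    · exact notin_FF_succ (Or.inl (lt_of_lt_of_le h2 (aa_mono.monotone hm)))

lemma Gs_subset (k : ℕ) : Gs (k+1) ⊆ (⋃ n, FF n)ᶜ := by
  rintro z ⟨⟨h1, h2⟩, h3'⟩
  have hcast : (((k+1 : ℕ)) : ℝ) = (k:ℝ)+1 := by push_cast; ring
  have h3 : z.im < (k:ℝ)+1 := by rw [← hcast]; exact h3'
  simp only [mem_compl_iff, mem_iUnion, not_exists]
  have hre2 : z.re < 2 := lt_trans h2 (bb_lt_two _)
  intro n
  rcases n with _ | m
  · exact fun hz => absurd (mem_FF_zero hz) (by linarith)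
  · rcases lt_trichotomy m k with hm | rfl | hm
    · exact notin_FF_succ (Or.inr (Or.inl (lt_trans (bb_lt_aa (by omega)) h1)))
    · exact notin_FF_succ (Or.inr (Or.inr (Or.inr (Or.inr ⟨h1, h2, h3⟩))))
    · exact notin_FF_succ (Or.inl (lt_trans h2 (bb_lt_aa (by omega))))

lemma Ts_subset (k : ℕ) : Ts (k+1) ⊆ (⋃ n, FF n)ᶜ := by
  rintro z ⟨⟨h1, h2⟩, h3'⟩
  have hcast : (((k+1 : ℕ)) : ℝ) = (k:ℝ)+1 := by push_cast; ring
  have h3 : (k:ℝ)+1 < z.im := by rw [← hcast]; exact h3'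
  simp only [mem_compl_iff, mem_iUnion, not_exists]
  have hre2 : z.re < 2 := lt_trans h2 (aa_lt_two _)
  intro n
  rcases n with _ | m
  · exact fun hz => absurd (mem_FF_zero hz) (by linarith)
  · rcases le_or_gt (m+1) (k+1) with hm | hm
    · refine notin_FF_succ (Or.inr (Or.inr (Or.inr (Or.inl ?_))))
      have : ((m:ℝ))+1 ≤ (k:ℝ)+1 := by
        have : ((m+1 : ℕ) : ℝ) ≤ ((k+1 : ℕ) : ℝ) := Nat.cast_le.2 hm
        push_cast at this; linarith
      linarith
    · exact notin_FF_succ (Or.inl (lt_of_lt_of_le h2 (aa_mono.monotone hm)))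

lemma Q_subset (k : ℕ) : Q k ⊆ (⋃ n, FF n)ᶜ := by
  rcases k with _ | k
  · exact union_subset Dset_subset H0set_subset
  · exact union_subset (union_subset (union_subset Dset_subset (Gs_subset k))
      (Hs_subset k)) (Ts_subset k)

lemma p0_mem_Q (k : ℕ) : (⟨0, -1⟩ : ℂ) ∈ Q k := by
  have hd : (⟨0, -1⟩ : ℂ) ∈ Dset :=
    Complex.mem_reProdIm.2 ⟨show (0:ℝ) < 2 by norm_num, show (-1:ℝ) < 0 by norm_num⟩
  rcases k with _ | k
  · exact Or.inl hd
  · exact Or.inl (Or.inl (Or.inl hd))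

lemma Q_conn (k : ℕ) : IsConnected (Q k) := by
  have hDconn : IsConnected Dset :=
    isConnected_reProdIm (convex_Iio _) (convex_Iio _)
      (show (0:ℝ) < 2 by norm_num) (show (-1:ℝ) < 0 by norm_num)
  rcases k with _ | k
  · show IsConnected (Dset ∪ H0set)
    refine IsConnected.union ⟨⟨aa 1 - 1, -1⟩, ?_, ?_⟩ hDconn
      (isConnected_reProdIm (convex_Iio _) convex_univ
        (show aa 1 - 1 < aa 1 by linarith) (mem_univ (0:ℝ)))
    · exact Complex.mem_reProdIm.2 ⟨show aa 1 - 1 < 2 by linarith [aa_lt_two 1],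
        show (-1:ℝ) < 0 by norm_num⟩
    · exact Complex.mem_reProdIm.2 ⟨show aa 1 - 1 < aa 1 by linarith, mem_univ _⟩
  · show IsConnected (((Dset ∪ Gs (k+1)) ∪ Hs (k+1)) ∪ Ts (k+1))
    have hab := aa_lt_bb (k+1)
    have hba := bb_lt_aa_succ (k+1)
    have hb2 := bb_lt_two (k+1)
    have ha2 := aa_lt_two (k+2)
    have hcast : (((k+1 : ℕ)) : ℝ) = (k:ℝ)+1 := by push_cast; ring
    have hk0 : (0:ℝ) ≤ (k:ℝ) := Nat.cast_nonneg k
    set m1 : ℝ := (aa (k+1) + bb (k+1))/2 with hm1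
    set m2 : ℝ := (bb (k+1) + aa (k+2))/2 with hm2
    have hGconn : IsConnected (Gs (k+1)) := by
      refine isConnected_reProdIm (convex_Ioo _ _) (convex_Iio _) (y := -1)
        (⟨by linarith, by linarith⟩ : m1 ∈ Ioo (aa (k+1)) (bb (k+1))) ?_
      show (-1:ℝ) < ((k+1 : ℕ) : ℝ)
      rw [hcast]; linarith
    have hHconn : IsConnected (Hs (k+1)) :=
      isConnected_reProdIm (convex_Ioo _ _) convex_univ
        (⟨by linarith, by linarith⟩ : m2 ∈ Ioo (bb (k+1)) (aa (k+2))) (mem_univ (0:ℝ))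
    have hTconn : IsConnected (Ts (k+1)) := by
      refine isConnected_reProdIm (convex_Ico _ _) (convex_Ioi _) (y := (k:ℝ)+2)
        (⟨by linarith, by linarith⟩ : m2 ∈ Ico (aa (k+1)) (aa (k+2))) ?_
      show ((k+1 : ℕ) : ℝ) < (k:ℝ)+2
      rw [hcast]; linarith
    have c1 : IsConnected (Dset ∪ Gs (k+1)) := by
      refine IsConnected.union ⟨⟨m1, -1⟩, ?_, ?_⟩ hDconn hGconn
      · exact Complex.mem_reProdIm.2 ⟨show m1 < 2 by linarith, show (-1:ℝ) < 0 by norm_num⟩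
      · refine Complex.mem_reProdIm.2 ⟨⟨by linarith, by linarith⟩, ?_⟩
        show (-1:ℝ) < ((k+1 : ℕ) : ℝ)
        rw [hcast]; linarith
    have c2 : IsConnected ((Dset ∪ Gs (k+1)) ∪ Hs (k+1)) := by
      refine IsConnected.union ⟨⟨m2, -1⟩, Or.inl ?_, ?_⟩ c1 hHconn
      · exact Complex.mem_reProdIm.2 ⟨show m2 < 2 by linarith, show (-1:ℝ) < 0 by norm_num⟩
      · exact Complex.mem_reProdIm.2 ⟨⟨by linarith, by linarith⟩, mem_univ _⟩
    refine IsConnected.union ⟨⟨m2, (k:ℝ)+2⟩, Or.inr ?_, ?_⟩ c2 hTconn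
    · exact Complex.mem_reProdIm.2 ⟨⟨by linarith, by linarith⟩, mem_univ _⟩
    · refine Complex.mem_reProdIm.2 ⟨⟨by linarith, by linarith⟩, ?_⟩
      show ((k+1 : ℕ) : ℝ) < (k:ℝ)+2
      rw [hcast]; linarith

lemma coverage {z : ℂ} (h2 : z.re < 2) (hz : z ∈ (⋃ n, FF n)ᶜ) : z ∈ ⋃ k, Q k := by
  simp only [mem_compl_iff, mem_iUnion, not_exists] at hz
  rw [mem_iUnion]
  rcases lt_or_ge z.im 0 with him | him
  · exact ⟨0, Or.inl (Complex.mem_reProdIm.2 ⟨h2, him⟩)⟩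
  rcases lt_or_ge z.re (aa 1) with hre | hre
  · exact ⟨0, Or.inr (Complex.mem_reProdIm.2 ⟨hre, mem_univ _⟩)⟩
  have hex : ∃ m : ℕ, z.re < aa m := by
    obtain ⟨N, hN⟩ := exists_pow_lt_of_lt_one (show (0:ℝ) < (2 - z.re)/3 by linarith)
      (show (2⁻¹:ℝ) < 1 by norm_num)
    exact ⟨N, by unfold aa; linarith⟩
  have hk0 : z.re < aa (Nat.find hex) := Nat.find_spec hex
  have haa1 : aa 1 = 1/2 := aa_one
  have hk0ge : 2 ≤ Nat.find hex := by
    rw [Nat.le_find_iff]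
    intro m hm
    interval_cases m
    · rw [show aa 0 = -1 by unfold aa; norm_num]
      push_neg
      linarith
    · push_neg
      exact hre
  obtain ⟨j, hj⟩ : ∃ j, Nat.find hex = j + 2 := ⟨Nat.find hex - 2, by omega⟩
  have hkle : aa (j+1) ≤ z.re := not_lt.1 (Nat.find_min hex (by omega))
  have hklt : z.re < aa (j+2) := by rw [← hj]; exact hk0
  have hcast : (((j+1 : ℕ)) : ℝ) = (j:ℝ)+1 := by push_cast; ring
  rcases le_or_gt z.re (bb (j+1)) with hbb | hbb
  · rcases lt_trichotomy z.im ((j:ℝ)+1) with him1 | him1 | him1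
    · have hne1 : z.re ≠ aa (j+1) := fun he => hz (j+1)
        (by rw [FF_succ]; exact Or.inl ⟨Or.inl he, him, by linarith⟩)
      have hne2 : z.re ≠ bb (j+1) := fun he => hz (j+1)
        (by rw [FF_succ]; exact Or.inl ⟨Or.inr he, him, by linarith⟩)
      refine ⟨j+1, Or.inl (Or.inl (Or.inr (Complex.mem_reProdIm.2
        ⟨⟨lt_of_le_of_ne hkle (Ne.symm hne1), lt_of_le_of_ne hbb hne2⟩, ?_⟩)))⟩
      show z.im < ((j+1 : ℕ) : ℝ)
      rw [hcast]; linarith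
    · exact absurd (by rw [FF_succ]; exact Or.inr ⟨⟨hkle, hbb⟩, him1⟩) (hz (j+1))
    · refine ⟨j+1, Or.inr (Complex.mem_reProdIm.2 ⟨⟨hkle, hklt⟩, ?_⟩)⟩
      show ((j+1 : ℕ) : ℝ) < z.im
      rw [hcast]; linarith
  · exact ⟨j+1, Or.inl (Or.inr (Complex.mem_reProdIm.2 ⟨⟨hbb, hklt⟩, mem_univ _⟩))⟩

lemma compl_iUnion_FF : (⋃ n, FF n)ᶜ = (⋃ k, Q k) ∪ (Ioi (2:ℝ) ×ℂ univ) := by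
  apply Subset.antisymm
  · intro z hz
    rcases lt_trichotomy z.re 2 with h | h | h
    · exact Or.inl (coverage h hz)
    · exact absurd (mem_iUnion.2 ⟨0, h⟩) hz
    · exact Or.inr (Complex.mem_reProdIm.2 ⟨h, mem_univ _⟩)
  · refine union_subset (iUnion_subset Q_subset) ?_
    rintro z ⟨h1', -⟩
    have h1 : (2:ℝ) < z.re := h1'
    simp only [mem_compl_iff, mem_iUnion, not_exists]
    intro n
    rcases n with _ | m
    · exact fun hzf => absurd (mem_FF_zero hzf) (by linarith)
    · exact notin_FF_succ (Or.inr (Or.inl (by linarith [bb_lt_two (m+1)])))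

lemma sphere_conn_iUnion : IsConnected (sphereCompl (⋃ n, FF n)) := by
  rw [sphereCompl_eq, compl_iUnion_FF]
  have hLpre : IsPreconnected (⋃ k, Q k) :=
    isPreconnected_iUnion ⟨(⟨0, -1⟩ : ℂ), mem_iInter.2 p0_mem_Q⟩
      (fun k => (Q_conn k).isPreconnected)
  have hDunb : ¬ IsBounded Dset :=
    unb_im_lt (c := 0) (x := 0) (fun y hy =>
      Complex.mem_reProdIm.2 ⟨show (0:ℝ) < 2 by norm_num, hy⟩)
  have hLunb : ¬ IsBounded (⋃ k, Q k) :=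
    not_isBounded_mono (fun z hz => mem_iUnion.2 ⟨0, Or.inl hz⟩) hDunb
  have hRunb : ¬ IsBounded (Ioi (2:ℝ) ×ℂ (univ : Set ℝ)) :=
    unb_re_gt (c := 2) (y := 0) (fun x hx => Complex.mem_reProdIm.2 ⟨hx, mem_univ _⟩)
  exact isConnected_union_infty₂ hLpre hLunb
    (preconn_reProdIm (convex_Ioi _) convex_univ) hRunb

end Ara

namespace Ara

open Bornology

local notation "∞" => OnePoint.infty

def Us (r : ℝ) (k : ℕ) : Set ℂ :=
  {z | aa (k+1) < z.re} ∩ ({z | z.re < bb (k+1)} ∩ ({z | 0 < z.im} ∩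
    ({z | z.im < (k:ℝ)+1} ∩ {z | r < ‖z‖})))

lemma mem_Us {r : ℝ} {k : ℕ} {z : ℂ} : z ∈ Us r k ↔
    aa (k+1) < z.re ∧ z.re < bb (k+1) ∧ 0 < z.im ∧ z.im < (k:ℝ)+1 ∧
      r < ‖z‖ := by
  simp [Us, mem_inter_iff, mem_setOf_eq, and_assoc]

lemma isOpen_Us (r : ℝ) (k : ℕ) : IsOpen (Us r k) :=
  (isOpen_lt continuous_const Complex.continuous_re).inter
    ((isOpen_lt Complex.continuous_re continuous_const).inter
      ((isOpen_lt continuous_const Complex.continuous_im).inter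
        ((isOpen_lt Complex.continuous_im continuous_const).inter
          (isOpen_lt continuous_const continuous_norm))))

def Ks (r : ℝ) (k : ℕ) : Set ℂ :=
  {z | aa (k+1) ≤ z.re} ∩ ({z | z.re ≤ bb (k+1)} ∩ ({z | 0 ≤ z.im} ∩
    ({z | z.im ≤ (k:ℝ)+1} ∩ {z | r ≤ ‖z‖})))

lemma isClosed_Ks (r : ℝ) (k : ℕ) : IsClosed (Ks r k) :=
  (isClosed_le continuous_const Complex.continuous_re).inter
    ((isClosed_le Complex.continuous_re continuous_const).inter
      ((isClosed_le continuous_const Complex.continuous_im).inter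
        ((isClosed_le Complex.continuous_im continuous_const).inter
          (isClosed_le continuous_const continuous_norm))))

lemma closure_Us_subset (r : ℝ) (k : ℕ) : closure (Us r k) ⊆ Ks r k := by
  apply closure_minimal _ (isClosed_Ks r k)
  rintro z hz
  rw [mem_Us] at hz
  obtain ⟨h1, h2, h3, h4, h5⟩ := hz
  exact ⟨le_of_lt h1, le_of_lt h2, le_of_lt h3, le_of_lt h4, le_of_lt h5⟩

lemma Us_subset_compl {r : ℝ} (hr : 2 ≤ r) (k : ℕ) :
    Us r k ⊆ (Metric.closedBall (0:ℂ) r ∪ ⋃ n, FF n)ᶜ := by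
  intro z hz
  rw [mem_Us] at hz
  obtain ⟨h1, h2, h3, h4, h5⟩ := hz
  simp only [mem_compl_iff, mem_union, not_or]
  constructor
  · simp only [Metric.mem_closedBall, Complex.dist_eq, sub_zero]
    linarith
  · simp only [mem_iUnion, not_exists]
    intro n
    rcases n with _ | m
    · exact fun hzf => absurd (mem_FF_zero hzf)
        (by have := bb_lt_two (k+1); linarith)
    · rcases lt_trichotomy m k with hm | rfl | hm
      · exact notin_FF_succ (Or.inr (Or.inl (lt_trans (bb_lt_aa (by omega)) h1)))
      · exact notin_FF_succ (Or.inr (Or.inr (Or.inr (Or.inr ⟨h1, h2, h4⟩))))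
      · exact notin_FF_succ (Or.inl (lt_trans h2 (bb_lt_aa (by omega))))

lemma closure_Us_inter {r : ℝ} (hr : 2 ≤ r) (k : ℕ) :
    closure (Us r k) ∩ (Metric.closedBall (0:ℂ) r ∪ ⋃ n, FF n)ᶜ ⊆ Us r k := by
  rintro z ⟨hcl, hE⟩
  obtain ⟨h1', h2', h3', h4', h5'⟩ := closure_Us_subset r k hcl
  have h1 : aa (k+1) ≤ z.re := h1'
  have h2 : z.re ≤ bb (k+1) := h2'
  have h3 : (0:ℝ) ≤ z.im := h3'
  have h4 : z.im ≤ (k:ℝ)+1 := h4'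
  have h5 : r ≤ ‖z‖ := h5'
  simp only [mem_compl_iff, mem_union, not_or, mem_iUnion, not_exists] at hE
  obtain ⟨hball, hFF⟩ := hE
  have hb5 : r < ‖z‖ := by
    rcases lt_or_eq_of_le h5 with h | h
    · exact h
    · exact absurd (by simp only [Metric.mem_closedBall, Complex.dist_eq, sub_zero]; linarith)
        hball
  have hFFk := hFF (k+1)
  rw [FF_succ] at hFFk
  have hne1 : z.re ≠ aa (k+1) := by
    intro he
    exact hFFk (Or.inl ⟨Or.inl he, h3, h4⟩)
  have hne2 : z.re ≠ bb (k+1) := by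
    intro he
    exact hFFk (Or.inl ⟨Or.inr he, h3, h4⟩)
  have hneim : z.im ≠ (k:ℝ)+1 := by
    intro he
    exact hFFk (Or.inr ⟨⟨h1, h2⟩, he⟩)
  have him0 : 0 < z.im := by
    rcases lt_or_eq_of_le h3 with h | h
    · exact h
    · exfalso
      have ha := aa_pos (k+1) (by omega)
      have hb := bb_lt_two (k+1)
      have : ‖z‖ ≤ |z.re| + |z.im| := Complex.norm_le_abs_re_add_abs_im z
      rw [← h] at this
      simp only [abs_zero, add_zero] at this
      rw [abs_of_nonneg (by linarith)] at this
      linarith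
  rw [mem_Us]
  exact ⟨lt_of_le_of_ne h1 (Ne.symm hne1), lt_of_le_of_ne h2 hne2, him0,
    lt_of_le_of_ne h4 hneim, hb5⟩

lemma comp_subset {E U : Set ℂ} (hUo : IsOpen U) (hcl : closure U ∩ E ⊆ U)
    {x : ℂ} (hxU : x ∈ U) (hxE : x ∈ E) : connectedComponentIn E x ⊆ U := by
  have hpre : IsPreconnected (connectedComponentIn E x) := isPreconnected_connectedComponentIn
  have hCE : connectedComponentIn E x ⊆ E := connectedComponentIn_subset E x
  by_contra hns
  obtain ⟨y, hyC, hyv⟩ := not_subset.1 hns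
  have hyv' : y ∈ (closure U)ᶜ := fun hyc => hyv (hcl ⟨hyc, hCE hyC⟩)
  obtain ⟨w, hwC, hwU, hwV⟩ := hpre U (closure U)ᶜ hUo isClosed_closure.isOpen_compl
    (fun t htC => by
      by_cases h : t ∈ closure U
      · exact Or.inl (hcl ⟨h, hCE htC⟩)
      · exact Or.inr h)
    ⟨x, mem_connectedComponentIn hxE, hxU⟩ ⟨y, hyC, hyv'⟩
  exact hwV (subset_closure hwU)

lemma Us_bounded (r : ℝ) (k : ℕ) : IsBounded (Us r k) := by
  rw [Metric.isBounded_iff_subset_closedBall 0]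
  refine ⟨(k:ℝ)+3, fun z hz => ?_⟩
  rw [mem_Us] at hz
  obtain ⟨h1, h2, h3, h4, -⟩ := hz
  have ha := aa_pos (k+1) (by omega)
  have hb := bb_lt_two (k+1)
  simp only [Metric.mem_closedBall, Complex.dist_eq, sub_zero]
  calc ‖z‖ ≤ |z.re| + |z.im| := Complex.norm_le_abs_re_add_abs_im z
    _ ≤ (k:ℝ)+3 := by
        rw [abs_of_nonneg (by linarith), abs_of_nonneg (by linarith)]
        linarith

def zzpt (k : ℕ) : ℂ := ⟨(aa (k+1) + bb (k+1))/2, (k:ℝ) + 1/2⟩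

lemma zzpt_mem {r : ℝ} {k : ℕ} (hk : r < (k:ℝ)) : zzpt k ∈ Us r k := by
  rw [mem_Us]
  have hab := aa_lt_bb (k+1)
  have hk0 : (0:ℝ) ≤ (k:ℝ) := Nat.cast_nonneg k
  have him : (zzpt k).im = (k:ℝ) + 1/2 := rfl
  have hre : (zzpt k).re = (aa (k+1) + bb (k+1))/2 := rfl
  refine ⟨by rw [hre]; linarith, by rw [hre]; linarith, by rw [him]; linarith,
    by rw [him]; linarith, ?_⟩
  have h1 : |(zzpt k).im| ≤ ‖zzpt k‖ := Complex.abs_im_le_norm _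
  rw [him, abs_of_nonneg (by linarith)] at h1
  linarith

lemma zzpt_mem_bcu {r : ℝ} (hr : 2 ≤ r) {k : ℕ} (hk : r < (k:ℝ)) :
    zzpt k ∈ boundedCompUnion (Metric.closedBall (0:ℂ) r ∪ ⋃ n, FF n) := by
  set E : Set ℂ := Metric.closedBall (0:ℂ) r ∪ ⋃ n, FF n with hE
  have hzU : zzpt k ∈ Us r k := zzpt_mem hk
  have hzE : zzpt k ∈ Eᶜ := Us_subset_compl hr k hzU
  refine ⟨connectedComponentIn Eᶜ (zzpt k), ⟨⟨zzpt k, hzE, rfl⟩, ?_⟩,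
    mem_connectedComponentIn hzE⟩
  exact (Us_bounded r k).subset
    (comp_subset (isOpen_Us r k) (closure_Us_inter hr k) hzU hzE)

lemma not_bounded_bcu (r : ℝ) (hr : 2 ≤ r) :
    ¬ IsBounded (boundedCompUnion (Metric.closedBall (0:ℂ) r ∪ ⋃ n, FF n)) := by
  apply not_isBounded
  intro R
  obtain ⟨k, hk⟩ := exists_nat_gt (max r R)
  have hkr : r < (k:ℝ) := lt_of_le_of_lt (le_max_left _ _) hk
  have hkR : R < (k:ℝ) := lt_of_le_of_lt (le_max_right _ _) hk
  refine ⟨zzpt k, zzpt_mem_bcu hr hkr, ?_⟩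
  have h1 : |(zzpt k).im| ≤ ‖zzpt k‖ := Complex.abs_im_le_norm _
  have him : (zzpt k).im = (k:ℝ) + 1/2 := rfl
  have hk0 : (0:ℝ) ≤ (k:ℝ) := Nat.cast_nonneg k
  rw [him, abs_of_nonneg (by linarith)] at h1
  linarith

end Ara

namespace Ara

open Bornology

local notation "∞" => OnePoint.infty

lemma infty_mem_sphereCompl (F : Set ℂ) : (∞ : OnePoint ℂ) ∈ sphereCompl F := by
  rw [sphereCompl_eq]
  exact Or.inr rfl

lemma not_arakelianC : ¬ ArakelianC (⋃ n, FF n) := by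
  rintro ⟨-, -, hloc⟩
  set F : Set ℂ := ⋃ n, FF n with hF
  -- the neighborhood U₀ of ∞ avoiding the closed ball of radius 2
  have hU₀ : OnePoint.some '' (Metric.closedBall (0:ℂ) 2)ᶜ ∪ {∞} ∈ 𝓝 (∞ : OnePoint ℂ) :=
    OnePoint.hasBasis_nhds_infty.mem_of_mem
      ⟨Metric.isClosed_closedBall, isCompact_closedBall 0 2⟩
  obtain ⟨W, hW, hWU, hWconn⟩ := hloc _ hU₀
  obtain ⟨s, ⟨hscl, hsc⟩, hsub⟩ := OnePoint.hasBasis_nhds_infty.mem_iff.1 hW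
  obtain ⟨r₀, hr₀⟩ := (Metric.isBounded_iff_subset_closedBall 0).1 hsc.isBounded
  obtain ⟨k, hk⟩ := exists_nat_gt (max r₀ 2)
  have hk2 : (2:ℝ) < (k:ℝ) := lt_of_le_of_lt (le_max_right _ _) hk
  have hkr₀ : r₀ < (k:ℝ) := lt_of_le_of_lt (le_max_left _ _) hk
  have hk0 : (0:ℝ) ≤ (k:ℝ) := Nat.cast_nonneg k
  set E : Set ℂ := Metric.closedBall (0:ℂ) 2 ∪ F with hE
  have hzU : zzpt k ∈ Us 2 k := zzpt_mem hk2
  have hzE : zzpt k ∈ Eᶜ := Us_subset_compl le_rfl k hzU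
  have habs : (k:ℝ) + 1/2 ≤ ‖zzpt k‖ := by
    have h1 : |(zzpt k).im| ≤ ‖zzpt k‖ := Complex.abs_im_le_norm _
    have him : (zzpt k).im = (k:ℝ) + 1/2 := rfl
    rwa [him, abs_of_nonneg (by linarith)] at h1
  have hzs : zzpt k ∉ s := by
    intro hzs
    have := hr₀ hzs
    simp only [Metric.mem_closedBall, Complex.dist_eq, sub_zero] at this
    linarith
  have hzW : OnePoint.some (zzpt k) ∈ W := hsub (Or.inl ⟨zzpt k, hzs, rfl⟩)
  have hzF : zzpt k ∉ F := by
    intro h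
    exact hzE (Or.inr h)
  have hzS : OnePoint.some (zzpt k) ∈ sphereCompl F := by
    rw [sphereCompl_eq]
    exact Or.inl ⟨zzpt k, hzF, rfl⟩
  set u : Set (OnePoint ℂ) := OnePoint.some '' Us 2 k with hu
  have hu_open : IsOpen u :=
    OnePoint.isOpenEmbedding_coe.isOpenMap _ (isOpen_Us 2 k)
  -- ∞ is not in the closure of u
  have hinf_not : (∞ : OnePoint ℂ) ∉ closure u := by
    rw [mem_closure_iff_nhds]
    push_neg
    refine ⟨OnePoint.some '' (Metric.closedBall (0:ℂ) ((k:ℝ)+3))ᶜ ∪ {∞},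
      OnePoint.hasBasis_nhds_infty.mem_of_mem
        ⟨Metric.isClosed_closedBall, isCompact_closedBall 0 ((k:ℝ)+3)⟩, ?_⟩
    rw [eq_empty_iff_forall_notMem]
    rintro x ⟨(⟨w, hw, rfl⟩ | hx), ⟨z, hz, hzx⟩⟩
    · have hwz : z = w := OnePoint.coe_injective hzx
      subst hwz
      have hzball : z ∈ Metric.closedBall (0:ℂ) ((k:ℝ)+3) := by
        rw [mem_Us] at hz
        obtain ⟨h1, h2', h3, h4, -⟩ := hz
        have ha := aa_pos (k+1) (by omega)
        have hb := bb_lt_two (k+1)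
        simp only [Metric.mem_closedBall, Complex.dist_eq, sub_zero]
        calc ‖z‖ ≤ |z.re| + |z.im| := Complex.norm_le_abs_re_add_abs_im z
          _ ≤ (k:ℝ)+3 := by
              rw [abs_of_nonneg (by linarith), abs_of_nonneg (by linarith)]
              linarith
      exact hw hzball
    · simp only [mem_singleton_iff] at hx
      subst hx
      exact OnePoint.infty_ne_coe z hzx.symm
  have hclu : closure u ⊆ OnePoint.some '' closure (Us 2 k) ∪ {∞} := by
    apply closure_minimal
    · exact fun x hx => Or.inl (image_mono subset_closure hx)
    · have hcompl : (OnePoint.some '' closure (Us 2 k) ∪ {∞})ᶜ =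
          OnePoint.some '' (closure (Us 2 k))ᶜ := by
        have h1 : (OnePoint.some '' (closure (Us 2 k))ᶜ)ᶜ =
            OnePoint.some '' closure (Us 2 k) ∪ {∞} := by
          rw [OnePoint.compl_image_coe, compl_compl]
        rw [← h1, compl_compl]
      rw [← isOpen_compl_iff, hcompl]
      exact OnePoint.isOpenEmbedding_coe.isOpenMap _ isClosed_closure.isOpen_compl
  have hkey : (W ∩ sphereCompl F) ∩ closure u ⊆ u := by
    rintro x ⟨⟨hxW, hxS⟩, hxcl⟩
    rcases hclu hxcl with ⟨w, hwcl, rfl⟩ | hxinf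
    · have hwF : w ∉ F := by
        rw [sphereCompl_eq] at hxS
        rcases hxS with ⟨v, hv, hvx⟩ | hxinf2
        · have hvw : v = w := OnePoint.coe_injective hvx
          exact hvw ▸ hv
        · exact absurd hxinf2 (OnePoint.coe_ne_infty w)
      have hwball : w ∉ Metric.closedBall (0:ℂ) 2 := by
        rcases hWU hxW with ⟨v, hv, hvx⟩ | hxinf2
        · have hvw : v = w := OnePoint.coe_injective hvx
          exact hvw ▸ hv
        · exact absurd hxinf2 (OnePoint.coe_ne_infty w)
      have hwE : w ∈ Eᶜ := by
        rintro (h | h)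
        exacts [hwball h, hwF h]
      exact ⟨w, closure_Us_inter le_rfl k ⟨hwcl, hwE⟩, rfl⟩
    · rw [mem_singleton_iff] at hxinf
      rw [hxinf] at hxcl
      exact absurd hxcl hinf_not
  have hpre := hWconn.isPreconnected
  obtain ⟨x, hxs, hxu, hxv⟩ := hpre u (closure u)ᶜ hu_open
    isClosed_closure.isOpen_compl
    (fun t ht => by
      by_cases h : t ∈ closure u
      · exact Or.inl (hkey ⟨ht, h⟩)
      · exact Or.inr h)
    ⟨OnePoint.some (zzpt k), ⟨hzW, hzS⟩, ⟨zzpt k, hzU, rfl⟩⟩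
    ⟨∞, ⟨mem_of_mem_nhds hW, infty_mem_sphereCompl F⟩, hinf_not⟩
  exact hxv (subset_closure hxu)

end Ara


theorem stmt15 :
    Pairwise (fun m n => Disjoint (FF m) (FF n)) ∧
    (∀ n : ℕ, ArakelianC (FF n)) ∧
    IsClosed (⋃ n, FF n) ∧
    IsConnected (sphereCompl (⋃ n, FF n)) ∧
    (∀ r : ℝ, 2 ≤ r →
      ¬ Bornology.IsBounded
        (boundedCompUnion (Metric.closedBall (0:ℂ) r ∪ ⋃ n, FF n))) ∧
    ¬ ArakelianC (⋃ n, FF n) := by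
  refine ⟨Ara.FF_pairwise, ?_, Ara.isClosed_iUnion_FF, Ara.sphere_conn_iUnion,
    fun r hr => Ara.not_bounded_bcu r hr, Ara.not_arakelianC⟩
  intro n
  rcases n with _ | m
  · exact ⟨Ara.isClosed_FF 0, Ara.sphere_conn_FF_zero, Ara.locconn_FF_zero⟩
  · exact ⟨Ara.isClosed_FF (m+1), Ara.sphere_conn_FF_succ m, Ara.locconn_FF_succ m⟩
end
end

section
/- Let Ω ⊆ ℂ be open and F ⊆ Ω relatively closed with no holes in Ω. Suppose there exists a compact set K ⊆ Ω such that the union of all holes of F ∪ K in Ω is not contained in any compact subset of Ω. Then there exists a sequence of holes B₁, B₂, … of F ∪ K in Ω and points xₙ ∈ Bₙ with xₙ → α in Ω ∪ {α}. -/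
open Topology Filter Set

noncomputable section

theorem stmt18 (Ω F K : Set ℂ) (hΩ : IsOpen Ω) (hF : RelClosed Ω F)
    (hnoholes : ∀ B : Set ℂ, ¬ IsHole Ω F B)
    (hK : IsCompact K) (hKΩ : K ⊆ Ω)
    (hbig : ¬ ∃ L : Set ℂ, IsCompact L ∧ L ⊆ Ω ∧ holesUnion Ω (F ∪ K) ⊆ L) :
    ∃ B : ℕ → Set ℂ, ∃ x : ℕ → ℂ,
      (∀ n, IsHole Ω (F ∪ K) (B n)) ∧ (∀ n, x n ∈ B n) ∧
      ∀ L : Set ℂ, IsCompact L → L ⊆ Ω → ∀ᶠ n in atTop, x n ∉ L := by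
  haveI : LocallyCompactSpace Ω := hΩ.locallyCompactSpace
  haveI : SigmaCompactSpace Ω := sigmaCompactSpace_of_locallyCompact_secondCountable
  let e := CompactExhaustion.choice Ω
  have hC : ∀ n : ℕ, IsCompact ((fun x : Ω => (x : ℂ)) '' e n) := fun n =>
    (e.isCompact n).image continuous_subtype_val
  have hsub : ∀ n : ℕ, (fun x : Ω => (x : ℂ)) '' e n ⊆ Ω := fun n =>
    image_subset_iff.2 fun x _ => x.2
  have key : ∀ n : ℕ, ∃ x : ℂ, x ∈ holesUnion Ω (F ∪ K) ∧ x ∉ (fun x : Ω => (x : ℂ)) '' e n := by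
    intro n
    by_contra h
    push_neg at h
    exact hbig ⟨_, hC n, hsub n, fun x hx => h x hx⟩
  choose x hx hx' using key
  have hB : ∀ n : ℕ, ∃ B, IsHole Ω (F ∪ K) B ∧ x n ∈ B := fun n => by
    obtain ⟨B, hB, hxB⟩ := hx n; exact ⟨B, hB, hxB⟩
  choose B hB1 hB2 using hB
  refine ⟨B, x, hB1, hB2, fun L hL hLΩ => ?_⟩
  have hLc : IsCompact ((fun x : Ω => (x : ℂ)) ⁻¹' L) := by
    rw [Subtype.isCompact_iff, Subtype.image_preimage_coe, inter_eq_right.2 hLΩ]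
    exact hL
  obtain ⟨N, hN⟩ := e.exists_superset_of_isCompact hLc
  filter_upwards [eventually_ge_atTop N] with n hn hxL
  exact hx' n ⟨⟨x n, hLΩ hxL⟩, e.subset hn (hN hxL), rfl⟩
end
end

section
/- Let Ω ⊆ ℂ be open, and let (Kₙ) be an exhaustion of Ω by compact sets with Kₙ ⊆ interior(Kₙ₊₁) and each Kₙ without holes in Ω. Let F ⊆ Ω be relatively closed without holes in Ω. If for every n the union of all holes of F ∪ Kₙ in Ω is contained in a compact subset of Ω, then for every compact K ⊆ Ω the union of all holes of F ∪ K in Ω is contained in a compact subset of Ω. -/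
open Topology Filter Set

noncomputable section

theorem stmt19 (Ω F : Set ℂ) (hΩ : IsOpen Ω) (hF : RelClosed Ω F)
    (hFnoholes : ∀ B : Set ℂ, ¬ IsHole Ω F B)
    (K : ℕ → Set ℂ) (hKc : ∀ n, IsCompact (K n)) (hKΩ : ∀ n, K n ⊆ Ω)
    (hKmono : ∀ n, K n ⊆ interior (K (n+1)))
    (hKexh : ⋃ n, interior (K n) = Ω)
    (hKnoholes : ∀ n, ∀ B : Set ℂ, ¬ IsHole Ω (K n) B)
    (h : ∀ n, ∃ L : Set ℂ, IsCompact L ∧ L ⊆ Ω ∧ holesUnion Ω (F ∪ K n) ⊆ L) :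
    ∀ C : Set ℂ, IsCompact C → C ⊆ Ω →
      ∃ L : Set ℂ, IsCompact L ∧ L ⊆ Ω ∧ holesUnion Ω (F ∪ C) ⊆ L := by
  intro C hC hCΩ
  -- find n with C ⊆ K n
  have hmonoK : Monotone K := by
    refine monotone_nat_of_le_succ fun n => (hKmono n).trans interior_subset
  obtain ⟨t, ht⟩ := hC.elim_finite_subcover (fun n => interior (K n))
    (fun n => isOpen_interior) (by rw [← hKexh] at hCΩ; exact hCΩ)
  obtain ⟨n, hn⟩ : ∃ n, C ⊆ K n := by
    rcases t.eq_empty_or_nonempty with rfl | hne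
    · simp only [Finset.notMem_empty, iUnion_of_empty, iUnion_empty] at ht
      exact ⟨0, ht.trans (empty_subset _)⟩
    · obtain ⟨m, hm, hmax⟩ := t.exists_max_image id hne
      refine ⟨m, fun x hx => ?_⟩
      obtain ⟨i, hi, hxi⟩ := by simpa using ht hx
      exact hmonoK (hmax i hi) (interior_subset hxi)
  obtain ⟨L, hLc, hLΩ, hL⟩ := h n
  refine ⟨K n ∪ L, (hKc n).union hLc, union_subset (hKΩ n) hLΩ, ?_⟩
  rintro y ⟨B, hB, hyB⟩
  obtain ⟨⟨x, hx, rfl⟩, K', hK'c, hK'Ω, hBK'⟩ := hB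
  by_cases hyK : y ∈ K n
  · exact Or.inl hyK
  · right
    have hyS : y ∈ Ω \ (F ∪ C) := connectedComponentIn_subset _ _ hyB
    have hyS' : y ∈ Ω \ (F ∪ K n) := ⟨hyS.1, fun hmem => by
      rcases hmem with h1 | h2
      exacts [hyS.2 (Or.inl h1), hyK h2]⟩
    refine hL ⟨connectedComponentIn (Ω \ (F ∪ K n)) y, ?_,
      mem_connectedComponentIn hyS'⟩
    have hsub : Ω \ (F ∪ K n) ⊆ Ω \ (F ∪ C) :=
      fun z hz => ⟨hz.1, fun hmem => hz.2 (hmem.imp id fun hc => hn hc)⟩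
    have hBeq : connectedComponentIn (Ω \ (F ∪ C)) y
        = connectedComponentIn (Ω \ (F ∪ C)) x := (connectedComponentIn_eq hyB).symm
    refine ⟨⟨y, hyS', rfl⟩, K', hK'c, hK'Ω, ?_⟩
    calc connectedComponentIn (Ω \ (F ∪ K n)) y
        ⊆ connectedComponentIn (Ω \ (F ∪ C)) y := connectedComponentIn_mono y hsub
      _ ⊆ K' := hBeq ▸ hBK'
end
end
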